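/- arXiv:alg-geom/9611006 — 2 statements merged into one kernel-verified Lean document; each statement's English description precedes it below -/
import Mathlib

section
/- Every homogeneous polynomial $h$ in the ideal $I_n = \langle e_1,\ldots,e_n\rangle \subset \mathbb{Z}[X_1,\ldots,X_n]$ admits a decomposition $h = \sum_{w \in S_n} \langle h, \mathfrak{S}^w\rangle\, \mathfrak{S}_w$, where each coefficient $\langle h, \mathfrak{S}^w\rangle = \partial_{w_0}(h \cdot \mathfrak{S}^w)$ is a symmetric polynomial lying in $\Lambda_n \cap I_n$. -/
open MvPolynomial Finset

noncomputable section

/-- The length (number of inversions) of a permutation of `ℕ`. -/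
def permLength (w : Equiv.Perm ℕ) : ℕ :=
  Nat.card {p : ℕ × ℕ // p.1 < p.2 ∧ w p.2 < w p.1}

/-- `w` belongs to `S_n` (0-indexed): it fixes every `i ≥ n`. -/
def memSn (n : ℕ) (w : Equiv.Perm ℕ) : Prop :=
  ∀ i, n ≤ i → w i = i

/-- `w` belongs to `S_∞`: it fixes all but finitely many points. -/
def finSupp (w : Equiv.Perm ℕ) : Prop :=
  ∃ n, memSn n w

/-- The longest element of `S_n`: `i ↦ n - 1 - i` on `{0, …, n-1}`, identity elsewhere. -/
def w0 (n : ℕ) : Equiv.Perm ℕ :=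
  Function.Involutive.toPerm (fun i => if i < n then n - 1 - i else i)
    (by intro i; dsimp only; split_ifs <;> omega)

/-- The staircase monomial `X_0^{n-1} X_1^{n-2} ⋯ X_{n-2}`. -/
def staircase (n : ℕ) : MvPolynomial ℕ ℤ :=
  ∏ i ∈ Finset.range n, X i ^ (n - 1 - i)

/-- Divided difference operators and Schubert polynomials, packaged with their defining
properties: `D i` is the divided difference `∂_i f = (f - s_i f)/(X_i - X_{i+1})`,
`Dw` is `∂_w` (defined through reduced words), and the Schubert polynomial is
`𝔖_w = ∂_{w⁻¹ w₀} (X_0^{n-1} X_1^{n-2} ⋯)` for `w ∈ S_n` (compatibly with the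
inclusions `S_n ⊆ S_{n+1}`). -/
structure SchubertData where
  D : ℕ → MvPolynomial ℕ ℤ → MvPolynomial ℕ ℤ
  hD : ∀ i f, (X i - X (i + 1)) * D i f = f - rename (⇑(Equiv.swap i (i + 1))) f
  Dw : Equiv.Perm ℕ → MvPolynomial ℕ ℤ → MvPolynomial ℕ ℤ
  Dw_one : Dw 1 = id
  Dw_step : ∀ w i, permLength (w * Equiv.swap i (i + 1)) = permLength w + 1 →
    Dw (w * Equiv.swap i (i + 1)) = Dw w ∘ D i
  S : Equiv.Perm ℕ → MvPolynomial ℕ ℤ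
  hS : ∀ n w, memSn n w → S w = Dw (w⁻¹ * w0 n) (staircase n)

/-- The `k`-th elementary symmetric polynomial in the variables `X_0, …, X_{n-1}`. -/
def esymmN (n k : ℕ) : MvPolynomial ℕ ℤ :=
  ∑ s ∈ Finset.powersetCard k (Finset.range n), ∏ i ∈ s, X i

/-- The ideal `I_n = ⟨e_1, …, e_n⟩` of `ℤ[X_0, X_1, …]`. -/
def In (n : ℕ) : Ideal (MvPolynomial ℕ ℤ) :=
  Ideal.span {p | ∃ k, 1 ≤ k ∧ k ≤ n ∧ p = esymmN n k}

/-- The embedding of `S_n = Perm (Fin n)` into `Perm ℕ`. -/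
def embedPerm (n : ℕ) (u : Equiv.Perm (Fin n)) : Equiv.Perm ℕ :=
  u.extendDomain Fin.equivSubtype


-- ===================== Section A : inversions and length =====================
namespace SchubertAux

open Equiv

def InvSet (w : Perm ℕ) : Set (ℕ × ℕ) := {p | p.1 < p.2 ∧ w p.2 < w p.1}

lemma permLength_def (w : Perm ℕ) : permLength w = (InvSet w).ncard := rfl

lemma memSn_mono {n m : ℕ} (h : n ≤ m) {w : Perm ℕ} (hw : memSn n w) : memSn m w :=
  fun i hi => hw i (le_trans h hi)

lemma memSn_finSupp {n : ℕ} {w : Perm ℕ} (hw : memSn n w) : finSupp w := ⟨n, hw⟩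

lemma memSn_one (n : ℕ) : memSn n 1 := fun _ _ => rfl

lemma memSn_mul {n : ℕ} {w v : Perm ℕ} (hw : memSn n w) (hv : memSn n v) :
    memSn n (w * v) := by
  intro i hi
  simp only [Perm.mul_apply, hv i hi, hw i hi]

lemma memSn_inv {n : ℕ} {w : Perm ℕ} (hw : memSn n w) : memSn n w⁻¹ := by
  intro i hi
  conv_lhs => rw [← hw i hi]
  simp

lemma memSn_swap {n i : ℕ} (h : i + 1 < n) : memSn n (Equiv.swap i (i + 1)) := by
  intro j hj
  apply Equiv.swap_apply_of_ne_of_ne <;> omega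

lemma memSn_apply_lt {n : ℕ} {w : Perm ℕ} (hw : memSn n w) {a : ℕ} (ha : a < n) :
    w a < n := by
  by_contra hc
  push_neg at hc
  have h1 : w (w a) = w a := hw _ hc
  have h2 := w.injective h1
  omega

lemma finSupp_one : finSupp (1 : Perm ℕ) := ⟨0, memSn_one 0⟩

lemma finSupp_mul {w v : Perm ℕ} (hw : finSupp w) (hv : finSupp v) : finSupp (w * v) := by
  obtain ⟨n, hn⟩ := hw; obtain ⟨m, hm⟩ := hv
  exact ⟨max n m, memSn_mul (memSn_mono (le_max_left _ _) hn) (memSn_mono (le_max_right _ _) hm)⟩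

lemma finSupp_swap (i : ℕ) : finSupp (Equiv.swap i (i + 1)) :=
  ⟨i + 2, memSn_swap (by omega)⟩

lemma invSet_subset {n : ℕ} {w : Perm ℕ} (hw : memSn n w) :
    InvSet w ⊆ ↑(Finset.range n ×ˢ Finset.range n) := by
  rintro ⟨a, b⟩ ⟨hab, hinv⟩
  simp only [Finset.coe_product, Set.mem_prod, Finset.mem_coe, Finset.mem_range]
  have hb : b < n := by
    by_contra hb
    push_neg at hb
    have hwb : w b = b := hw b hb
    rcases Nat.lt_or_ge a n with ha | ha
    · have := memSn_apply_lt hw ha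
      simp only at hinv
      omega
    · have hwa : w a = a := hw a ha
      simp only at hinv
      omega
  exact ⟨lt_trans hab hb, hb⟩

lemma finite_invSet {w : Perm ℕ} (hw : finSupp w) : (InvSet w).Finite := by
  obtain ⟨n, hn⟩ := hw
  exact Set.Finite.subset (Finset.range n ×ˢ Finset.range n).finite_toSet (invSet_subset hn)

lemma swap_lt_swap {i a b : ℕ} (hab : a < b) (hne : ¬(a = i ∧ b = i + 1)) :
    Equiv.swap i (i + 1) a < Equiv.swap i (i + 1) b := by
  rw [Equiv.swap_apply_def, Equiv.swap_apply_def]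
  split_ifs <;> omega

lemma length_mul_swap_lt {w : Perm ℕ} (hw : finSupp w) (i : ℕ) (h : w i < w (i + 1)) :
    permLength (w * Equiv.swap i (i + 1)) = permLength w + 1 := by
  classical
  set s := Equiv.swap i (i + 1) with hs
  have hws : finSupp (w * s) := finSupp_mul hw (finSupp_swap i)
  have hfinA : (InvSet (w * s)).Finite := finite_invSet hws
  have hfinB : (InvSet w).Finite := finite_invSet hw
  set pt : ℕ × ℕ := (i, i + 1) with hpt
  have hptA : pt ∈ InvSet (w * s) := by
    refine ⟨by simp [hpt], ?_⟩
    show (w * s) (i + 1) < (w * s) i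
    simp only [Perm.mul_apply, hs, Equiv.swap_apply_left, Equiv.swap_apply_right]
    exact h
  have hptB : pt ∉ InvSet w := by
    rintro ⟨-, h2⟩
    simp only [hpt] at h2
    omega
  set φ : ℕ × ℕ → ℕ × ℕ := fun p => (s p.1, s p.2) with hφ
  have hφinv : Function.Involutive φ := by
    intro p
    simp [hφ, hs, Equiv.swap_apply_self]
  have hfwd : ∀ p ∈ InvSet (w * s) \ {pt}, φ p ∈ InvSet w \ {pt} := by
    rintro ⟨a, b⟩ ⟨⟨hab, hinv⟩, hne⟩
    have hne' : ¬(a = i ∧ b = i + 1) := by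
      intro ⟨h1, h2⟩; exact hne (by simp [hpt, h1, h2])
    refine ⟨⟨swap_lt_swap hab hne', ?_⟩, ?_⟩
    · exact hinv
    · intro hc
      simp only [Set.mem_singleton_iff, hpt, Prod.ext_iff, hφ] at hc
      have h1 : a = s i := by rw [← hc.1]; simp [hs, Equiv.swap_apply_self]
      have h2 : b = s (i + 1) := by rw [← hc.2]; simp [hs, Equiv.swap_apply_self]
      rw [hs, Equiv.swap_apply_left] at h1
      rw [hs, Equiv.swap_apply_right] at h2
      omega
  have hbwd : ∀ p ∈ InvSet w \ {pt}, φ p ∈ InvSet (w * s) \ {pt} := by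
    rintro ⟨a, b⟩ ⟨⟨hab, hinv⟩, hne⟩
    have hne' : ¬(a = i ∧ b = i + 1) := by
      intro ⟨h1, h2⟩; exact hne (by simp [hpt, h1, h2])
    refine ⟨⟨swap_lt_swap hab hne', ?_⟩, ?_⟩
    · show (w * s) (s b) < (w * s) (s a)
      simp only [Perm.mul_apply, hs, Equiv.swap_apply_self]
      exact hinv
    · intro hc
      simp only [Set.mem_singleton_iff, hpt, Prod.ext_iff, hφ] at hc
      have h1 : a = s i := by rw [← hc.1]; simp [hs, Equiv.swap_apply_self]
      have h2 : b = s (i + 1) := by rw [← hc.2]; simp [hs, Equiv.swap_apply_self]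
      rw [hs, Equiv.swap_apply_left] at h1
      rw [hs, Equiv.swap_apply_right] at h2
      omega
  have himg : φ '' (InvSet (w * s) \ {pt}) = InvSet w \ {pt} := by
    apply Set.Subset.antisymm
    · rintro q ⟨p, hp, rfl⟩
      exact hfwd p hp
    · intro q hq
      exact ⟨φ q, hbwd q hq, hφinv q⟩
  have hcard1 : (InvSet (w * s) \ {pt}).ncard + 1 = (InvSet (w * s)).ncard :=
    Set.ncard_diff_singleton_add_one hptA hfinA
  have hcard2 : (InvSet (w * s) \ {pt}).ncard = (InvSet w \ {pt}).ncard := by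
    rw [← himg, Set.ncard_image_of_injective _ hφinv.injective]
  have hcard3 : InvSet w \ {pt} = InvSet w := Set.diff_singleton_eq_self hptB
  rw [permLength_def, permLength_def, ← hcard1, hcard2, hcard3]

lemma length_mul_swap_gt {w : Perm ℕ} (hw : finSupp w) (i : ℕ) (h : w (i + 1) < w i) :
    permLength w = permLength (w * Equiv.swap i (i + 1)) + 1 := by
  set w' := w * Equiv.swap i (i + 1) with hw'
  have hw's : finSupp w' := finSupp_mul hw (finSupp_swap i)
  have h1 : w' i = w (i + 1) := by simp [hw', Perm.mul_apply]
  have h2 : w' (i + 1) = w i := by simp [hw', Perm.mul_apply]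
  have := length_mul_swap_lt hw's i (by omega)
  have hww : w' * Equiv.swap i (i + 1) = w := by
    rw [hw', mul_assoc, Equiv.swap_mul_self, mul_one]
  rw [hww] at this
  exact this

end SchubertAux

namespace SchubertAux
open Equiv

lemma length_mul_le (u v : Perm ℕ) (hu : finSupp u) (hv : finSupp v) :
    permLength (u * v) ≤ permLength u + permLength v := by
  classical
  have hfu : (InvSet u).Finite := finite_invSet hu
  have hfv : (InvSet v).Finite := finite_invSet hv
  haveI := hfu.to_subtype
  haveI := hfv.to_subtype
  have key : permLength (u * v) ≤ Nat.card (↥(InvSet u) ⊕ ↥(InvSet v)) := by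
    apply Nat.card_le_card_of_injective
      (f := fun p : {p : ℕ × ℕ // p.1 < p.2 ∧ (u * v) p.2 < (u * v) p.1} =>
        if h : v p.1.1 < v p.1.2 then
          Sum.inl ⟨(v p.1.1, v p.1.2), h, by
            have := p.2.2
            simpa [Perm.mul_apply] using this⟩
        else
          Sum.inr ⟨p.1, p.2.1, by
            have h1 : v p.1.1 ≠ v p.1.2 := fun hh => (p.2.1.ne (v.injective hh))
            omega⟩)
    intro p q hpq
    by_cases hp : v p.1.1 < v p.1.2 <;> by_cases hq : v q.1.1 < v q.1.2 <;>
      simp only [hp, hq, dif_pos, dif_neg, not_false_iff] at hpq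
    · apply Subtype.ext
      have h1 := congrArg Subtype.val (Sum.inl.inj hpq)
      have h2 : v p.1.1 = v q.1.1 := congrArg Prod.fst h1
      have h3 : v p.1.2 = v q.1.2 := congrArg Prod.snd h1
      exact Prod.ext (v.injective h2) (v.injective h3)
    · exact absurd hpq (by simp)
    · exact absurd hpq (by simp)
    · simp only [Sum.inr.injEq, Subtype.mk.injEq] at hpq
      exact Subtype.ext (Subtype.mk.inj hpq)
  calc permLength (u * v) ≤ Nat.card (↥(InvSet u) ⊕ ↥(InvSet v)) := key
    _ = permLength u + permLength v := by
        rw [Nat.card_sum]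
        rfl

lemma length_inv (w : Perm ℕ) : permLength w⁻¹ = permLength w := by
  apply Nat.card_congr
  exact {
    toFun := fun p => ⟨(w⁻¹ p.1.2, w⁻¹ p.1.1), p.2.2, by simp [p.2.1]⟩
    invFun := fun p => ⟨(w p.1.2, w p.1.1), p.2.2, by simp [p.2.1]⟩
    left_inv := fun p => by
      apply Subtype.ext
      simp
    right_inv := fun p => by
      apply Subtype.ext
      simp }

lemma length_one : permLength (1 : Perm ℕ) = 0 := by
  have : IsEmpty {p : ℕ × ℕ // p.1 < p.2 ∧ (1 : Perm ℕ) p.2 < (1 : Perm ℕ) p.1} := by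
    constructor
    rintro ⟨⟨a, b⟩, h1, h2⟩
    simp only [Perm.one_apply] at h2
    omega
  exact Nat.card_of_isEmpty

lemma eq_one_of_no_inv {n : ℕ} {w : Perm ℕ} (hw : memSn n w)
    (h : ∀ a b : ℕ, a < b → ¬ w b < w a) : w = 1 := by
  have key : ∀ x, w x = x := by
    intro x
    induction x using Nat.strong_induction_on with
    | _ x IH =>
      have h1 : x ≤ w x := by
        by_contra hc
        push_neg at hc
        have h2 := IH (w x) hc
        have h3 := w.injective h2
        omega
      set m := w⁻¹ x with hm
      have hwm : w m = x := by simp [hm]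
      have h2 : x ≤ m := by
        by_contra hc
        push_neg at hc
        have := IH m hc
        omega
      rcases Nat.eq_or_lt_of_le h2 with he | hlt
      · rw [he, hwm]
        exact he
      · rcases Nat.eq_or_lt_of_le h1 with he2 | hlt2
        · omega
        · exact absurd hlt2 (by have := h x m hlt; omega)
  apply Equiv.ext
  intro x
  simp [key x]

lemma exists_descent {n : ℕ} {w : Perm ℕ} (hw : memSn n w) (hne : w ≠ 1) :
    ∃ i, w (i + 1) < w i := by
  by_contra hc
  push_neg at hc
  apply hne
  apply eq_one_of_no_inv hw
  intro a b hab hinv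
  have mono : ∀ k, w a ≤ w (a + k) := by
    intro k
    induction k with
    | zero => simp
    | succ k IH =>
      have h1 := hc (a + k)
      calc w a ≤ w (a + k) := IH
        _ ≤ w (a + k + 1) := h1
  have hb : a + (b - a) = b := by omega
  have := mono (b - a)
  rw [hb] at this
  omega

lemma exists_descent_lt {n : ℕ} {w : Perm ℕ} (hw : memSn n w) (hne : w ≠ 1) :
    ∃ i, i + 1 < n ∧ w (i + 1) < w i := by
  obtain ⟨i, hi⟩ := exists_descent hw hne
  refine ⟨i, ?_, hi⟩
  by_contra hc
  push_neg at hc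
  rcases Nat.lt_or_ge i n with h1 | h1
  · have h2 : i + 1 = n ∨ i + 1 > n := by omega
    have h3 : n ≤ i + 1 := by omega
    have h4 : w (i + 1) = i + 1 := hw _ h3
    have h5 : w i < n := memSn_apply_lt hw h1
    omega
  · have h4 : w (i + 1) = i + 1 := hw _ (by omega)
    have h5 : w i = i := hw _ h1
    omega

lemma descent_induction {n : ℕ} {P : Perm ℕ → Prop} (h1 : P 1)
    (hstep : ∀ w i, memSn n w → i + 1 < n → w i < w (i + 1) → P w →
      P (w * Equiv.swap i (i + 1))) :
    ∀ w, memSn n w → P w := by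
  intro w hw
  generalize hk : permLength w = k
  induction k using Nat.strong_induction_on generalizing w with
  | _ k IH =>
    by_cases hone : w = 1
    · rwa [hone]
    obtain ⟨i, hin, hdes⟩ := exists_descent_lt hw hone
    set w' := w * Equiv.swap i (i + 1) with hw'
    have hw'mem : memSn n w' := memSn_mul hw (memSn_swap hin)
    have hc1 : w' i = w (i + 1) := by simp [hw', Perm.mul_apply]
    have hc2 : w' (i + 1) = w i := by simp [hw', Perm.mul_apply]
    have hlen : permLength (w' * Equiv.swap i (i + 1)) = permLength w' + 1 := by
      apply length_mul_swap_lt (memSn_finSupp hw'mem)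
      omega
    have hww : w' * Equiv.swap i (i + 1) = w := by
      rw [hw', mul_assoc, Equiv.swap_mul_self, mul_one]
    rw [hww] at hlen
    have hP' : P w' := IH (permLength w') (by omega) w' hw'mem rfl
    have := hstep w' i hw'mem hin (by omega) hP'
    rwa [hww] at this

lemma w0_apply (n x : ℕ) : w0 n x = if x < n then n - 1 - x else x := rfl

lemma w0_apply_lt {n x : ℕ} (h : x < n) : w0 n x = n - 1 - x := by
  rw [w0_apply, if_pos h]

lemma w0_apply_ge {n x : ℕ} (h : n ≤ x) : w0 n x = x := by
  rw [w0_apply, if_neg (by omega)]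

lemma memSn_w0 (n : ℕ) : memSn n (w0 n) := fun i hi => w0_apply_ge hi

lemma w0_mul_w0 (n : ℕ) : w0 n * w0 n = 1 := by
  apply Equiv.ext
  intro x
  simp only [Perm.mul_apply, Perm.one_apply, w0_apply]
  split_ifs <;> omega

lemma w0_inv (n : ℕ) : (w0 n)⁻¹ = w0 n :=
  inv_eq_of_mul_eq_one_right (w0_mul_w0 n)

def Tset (n : ℕ) : Set (ℕ × ℕ) := {p | p.1 < p.2 ∧ p.2 < n}

lemma finite_Tset (n : ℕ) : (Tset n).Finite := by
  apply Set.Finite.subset (Finset.range n ×ˢ Finset.range n).finite_toSet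
  rintro ⟨a, b⟩ ⟨h1, h2⟩
  simp only [Finset.coe_product, Set.mem_prod, Finset.mem_coe, Finset.mem_range]
  exact ⟨by omega, h2⟩

lemma invSet_w0 (n : ℕ) : InvSet (w0 n) = Tset n := by
  ext ⟨a, b⟩
  simp only [InvSet, Tset, Set.mem_setOf_eq, w0_apply]
  constructor
  · rintro ⟨hab, hinv⟩
    refine ⟨hab, ?_⟩
    by_contra hbn
    split_ifs at hinv <;> omega
  · rintro ⟨hab, hbn⟩
    refine ⟨hab, ?_⟩
    split_ifs <;> omega

lemma length_w0_mul {n : ℕ} {w : Perm ℕ} (hw : memSn n w) :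
    permLength (w0 n * w) + permLength w = permLength (w0 n) := by
  have hsub : InvSet w ⊆ Tset n := by
    rintro ⟨a, b⟩ hp
    have := invSet_subset hw hp
    simp only [Finset.coe_product, Set.mem_prod, Finset.mem_coe, Finset.mem_range] at this
    exact ⟨hp.1, this.2⟩
  have hx : ∀ a b : ℕ, a < b → ((w0 n) (w b) < (w0 n) (w a) ↔ (b < n ∧ ¬ w b < w a)) := by
    intro a b hab
    have hne : w a ≠ w b := fun hh => hab.ne (w.injective hh)
    rcases Nat.lt_or_ge b n with hb | hb
    · have ha : a < n := by omega
      have hwa : w a < n := memSn_apply_lt hw ha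
      have hwb : w b < n := memSn_apply_lt hw hb
      rw [w0_apply_lt hwa, w0_apply_lt hwb]
      omega
    · have hwb : w b = b := hw b hb
      rcases Nat.lt_or_ge a n with ha | ha
      · have hwa : w a < n := memSn_apply_lt hw ha
        rw [hwb, w0_apply_ge hb, w0_apply_lt hwa]
        omega
      · have hwa : w a = a := hw a ha
        rw [hwb, hwa, w0_apply_ge hb, w0_apply_ge ha]
        omega
  have hkey : InvSet (w0 n * w) = Tset n \ InvSet w := by
    ext ⟨a, b⟩
    simp only [InvSet, Tset, Set.mem_setOf_eq, Set.mem_diff, Perm.mul_apply]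
    constructor
    · rintro ⟨hab, h2⟩
      have h3 := (hx a b hab).1 h2
      exact ⟨⟨hab, h3.1⟩, fun hin => h3.2 hin.2⟩
    · rintro ⟨⟨hab, hbn⟩, hnin⟩
      exact ⟨hab, (hx a b hab).2 ⟨hbn, fun hlt => hnin ⟨hab, hlt⟩⟩⟩
  have hle : (InvSet w).ncard ≤ (Tset n).ncard :=
    Set.ncard_le_ncard hsub (finite_Tset n)
  rw [permLength_def, permLength_def, permLength_def, invSet_w0, hkey,
    Set.ncard_diff hsub (finite_invSet (memSn_finSupp hw))]
  omega

lemma length_le_w0 {n : ℕ} {w : Perm ℕ} (hw : memSn n w) :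
    permLength w ≤ permLength (w0 n) := by
  have := length_w0_mul hw
  omega

lemma length_mul_w0 {n : ℕ} {w : Perm ℕ} (hw : memSn n w) :
    permLength (w * w0 n) + permLength w = permLength (w0 n) := by
  have h1 : permLength (w * w0 n) = permLength (w0 n * w⁻¹) := by
    calc permLength (w * w0 n) = permLength ((w * w0 n)⁻¹) := (length_inv _).symm
      _ = permLength (w0 n * w⁻¹) := by rw [mul_inv_rev, w0_inv]
  rw [h1, ← length_inv w]
  exact length_w0_mul (memSn_inv hw)

lemma length_conj_w0 {n : ℕ} {w : Perm ℕ} (hw : memSn n w) :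
    permLength (w0 n * (w * w0 n)) = permLength w := by
  have h1 := length_w0_mul (memSn_mul hw (memSn_w0 n))
  have h2 := length_mul_w0 hw
  omega

lemma w0_swap {n i : ℕ} (h : i + 1 < n) :
    w0 n * Equiv.swap i (i + 1) * w0 n = Equiv.swap (n - 2 - i) (n - 2 - i + 1) := by
  apply Equiv.ext
  intro x
  simp only [Perm.mul_apply, Equiv.swap_apply_def, w0_apply]
  split_ifs <;> omega

end SchubertAux

-- ===================== Section C : divided differences =====================
namespace SchubertAux
open Equiv

lemma X_sub_ne_zero (i : ℕ) : (X i - X (i + 1) : MvPolynomial ℕ ℤ) ≠ 0 := by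
  intro h
  have h2 := congrArg (coeff (Finsupp.single i 1)) h
  simp only [coeff_sub, coeff_zero] at h2
  rw [MvPolynomial.coeff_X', MvPolynomial.coeff_X'] at h2
  rw [if_pos rfl, if_neg (by
    intro hc
    have := congrArg (fun g => g i) hc
    simp [Finsupp.single_apply] at this)] at h2
  omega

lemma rename_perm_mul (σ τ : Perm ℕ) (f : MvPolynomial ℕ ℤ) :
    rename ⇑(σ * τ) f = rename ⇑σ (rename ⇑τ f) := by
  rw [rename_rename]
  rfl

lemma rename_invol {σ : Perm ℕ} (hσ : σ * σ = 1) (f : MvPolynomial ℕ ℤ) :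
    rename ⇑σ (rename ⇑σ f) = f := by
  rw [← rename_perm_mul, hσ]
  show rename ⇑(Equiv.refl ℕ) f = f
  rw [Equiv.coe_refl, rename_id, AlgHom.id_apply]

lemma swap_mul_self' (i : ℕ) : Equiv.swap i (i + 1) * Equiv.swap i (i + 1) = 1 :=
  Equiv.swap_mul_self i (i + 1)

variable (SD : SchubertData)

lemma D_eq {i : ℕ} {f g : MvPolynomial ℕ ℤ}
    (hg : (X i - X (i + 1)) * g = f - rename (⇑(Equiv.swap i (i + 1))) f) :
    SD.D i f = g :=
  mul_left_cancel₀ (X_sub_ne_zero i) ((SD.hD i f).trans hg.symm)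

lemma D_add (i : ℕ) (f g : MvPolynomial ℕ ℤ) :
    SD.D i (f + g) = SD.D i f + SD.D i g := by
  apply D_eq
  rw [map_add]
  linear_combination SD.hD i f + SD.hD i g

lemma D_zero (i : ℕ) : SD.D i 0 = 0 := by
  apply D_eq
  simp

lemma D_neg (i : ℕ) (f : MvPolynomial ℕ ℤ) : SD.D i (-f) = -SD.D i f := by
  apply D_eq
  rw [map_neg]
  linear_combination -SD.hD i f

lemma D_sub (i : ℕ) (f g : MvPolynomial ℕ ℤ) :
    SD.D i (f - g) = SD.D i f - SD.D i g := by
  apply D_eq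
  rw [map_sub]
  linear_combination SD.hD i f - SD.hD i g

lemma D_sum {α : Type*} (i : ℕ) (s : Finset α) (F : α → MvPolynomial ℕ ℤ) :
    SD.D i (∑ x ∈ s, F x) = ∑ x ∈ s, SD.D i (F x) := by
  classical
  induction s using Finset.induction with
  | empty => simp [D_zero]
  | insert _ _ hx IH =>
    rw [Finset.sum_insert hx, Finset.sum_insert hx, D_add, IH]

lemma D_invariant_mul {i : ℕ} {c : MvPolynomial ℕ ℤ}
    (hc : rename (⇑(Equiv.swap i (i + 1))) c = c) (f : MvPolynomial ℕ ℤ) :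
    SD.D i (c * f) = c * SD.D i f := by
  apply D_eq
  rw [map_mul, hc]
  linear_combination c * SD.hD i f

lemma D_of_invariant {i : ℕ} {f : MvPolynomial ℕ ℤ}
    (hf : rename (⇑(Equiv.swap i (i + 1))) f = f) : SD.D i f = 0 := by
  apply D_eq
  rw [hf]
  ring

lemma invariant_of_D_eq_zero {i : ℕ} {f : MvPolynomial ℕ ℤ}
    (hf : SD.D i f = 0) : rename (⇑(Equiv.swap i (i + 1))) f = f := by
  have := SD.hD i f
  rw [hf, mul_zero] at this
  have h2 : f - rename (⇑(Equiv.swap i (i + 1))) f = 0 := this.symm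
  linear_combination -h2

lemma rename_D (i : ℕ) (f : MvPolynomial ℕ ℤ) :
    rename (⇑(Equiv.swap i (i + 1))) (SD.D i f) = SD.D i f := by
  have h1 := congrArg (rename ⇑(Equiv.swap i (i + 1))) (SD.hD i f)
  simp only [map_mul, map_sub, rename_X] at h1
  rw [rename_invol (swap_mul_self' i), Equiv.swap_apply_left, Equiv.swap_apply_right] at h1
  apply mul_left_cancel₀ (X_sub_ne_zero i)
  rw [SD.hD i f]
  linear_combination -h1

lemma D_D (i : ℕ) (f : MvPolynomial ℕ ℤ) : SD.D i (SD.D i f) = 0 :=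
  D_of_invariant SD (rename_D SD i f)

lemma D_rename_swap (i : ℕ) (f : MvPolynomial ℕ ℤ) :
    SD.D i (rename (⇑(Equiv.swap i (i + 1))) f) = -SD.D i f := by
  apply D_eq
  rw [rename_invol (swap_mul_self' i)]
  linear_combination -SD.hD i f

lemma D_mul (i : ℕ) (f g : MvPolynomial ℕ ℤ) :
    SD.D i (f * g) = SD.D i f * g + rename (⇑(Equiv.swap i (i + 1))) f * SD.D i g := by
  apply D_eq
  rw [map_mul]
  linear_combination g * SD.hD i f + rename (⇑(Equiv.swap i (i + 1))) f * SD.hD i g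

lemma D_smul (i : ℕ) (z : ℤ) (f : MvPolynomial ℕ ℤ) :
    SD.D i (z • f) = z • SD.D i f := by
  rw [smul_eq_C_mul, smul_eq_C_mul]
  exact D_invariant_mul SD (rename_C _ _) f

end SchubertAux

-- ===================== Section D : monomial formula =====================
namespace SchubertAux
open Equiv

lemma fdeg_add (a b : ℕ →₀ ℕ) : (a + b).degree = a.degree + b.degree := by
  simp only [Finsupp.degree_eq_weight_one, map_add]

lemma fdeg_single (a k : ℕ) : (Finsupp.single a k).degree = k := by
  rcases Nat.eq_zero_or_pos k with h | h
  · subst h; simp [Finsupp.degree]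
  · rw [Finsupp.degree_single]

lemma homog_support_degree {f : MvPolynomial ℕ ℤ} {d : ℕ} (hf : f.IsHomogeneous d)
    {α : ℕ →₀ ℕ} (hα : α ∈ f.support) : α.degree = d := by
  rw [Finsupp.degree_eq_weight_one]
  exact hf (MvPolynomial.mem_support_iff.1 hα)

def eraseII (i : ℕ) (α : ℕ →₀ ℕ) : ℕ →₀ ℕ := (α.erase i).erase (i + 1)

lemma eraseII_apply_i (i : ℕ) (α : ℕ →₀ ℕ) : eraseII i α i = 0 := by
  rw [eraseII, Finsupp.erase_ne (by omega : i ≠ i + 1), Finsupp.erase_same]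

lemma eraseII_apply_i1 (i : ℕ) (α : ℕ →₀ ℕ) : eraseII i α (i + 1) = 0 := by
  rw [eraseII, Finsupp.erase_same]

lemma eraseII_apply_ne {i j : ℕ} (α : ℕ →₀ ℕ) (h1 : j ≠ i) (h2 : j ≠ i + 1) :
    eraseII i α j = α j := by
  rw [eraseII, Finsupp.erase_ne h2, Finsupp.erase_ne h1]

lemma comb_apply_i (i r s : ℕ) (β : ℕ →₀ ℕ) (hβ : β i = 0) :
    (β + Finsupp.single i r + Finsupp.single (i + 1) s) i = r := by
  simp [Finsupp.add_apply, Finsupp.single_apply, hβ]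

lemma comb_apply_i1 (i r s : ℕ) (β : ℕ →₀ ℕ) (hβ : β (i + 1) = 0) :
    (β + Finsupp.single i r + Finsupp.single (i + 1) s) (i + 1) = s := by
  simp [Finsupp.add_apply, Finsupp.single_apply, Finsupp.single_eq_of_ne (by omega : i ≠ i + 1), hβ]

lemma comb_apply_ne {i j : ℕ} (r s : ℕ) (β : ℕ →₀ ℕ) (h1 : j ≠ i) (h2 : j ≠ i + 1) :
    (β + Finsupp.single i r + Finsupp.single (i + 1) s) j = β j := by
  simp [Finsupp.add_apply, Finsupp.single_apply, Ne.symm h1, Ne.symm h2]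

lemma alpha_decomp (i : ℕ) (α : ℕ →₀ ℕ) :
    α = eraseII i α + Finsupp.single i (α i) + Finsupp.single (i + 1) (α (i + 1)) := by
  ext j
  by_cases h1 : j = i
  · rw [h1]; rw [comb_apply_i _ _ _ _ (eraseII_apply_i i α)]
  · by_cases h2 : j = i + 1
    · rw [h2]; rw [comb_apply_i1 _ _ _ _ (eraseII_apply_i1 i α)]
    · rw [comb_apply_ne _ _ _ h1 h2, eraseII_apply_ne α h1 h2]

lemma mapDomain_swap (i : ℕ) (α : ℕ →₀ ℕ) :
    Finsupp.mapDomain (⇑(Equiv.swap i (i + 1))) α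
      = eraseII i α + Finsupp.single i (α (i + 1)) + Finsupp.single (i + 1) (α i) := by
  ext j
  rw [Finsupp.mapDomain_equiv_apply, Equiv.symm_swap]
  by_cases h1 : j = i
  · rw [h1]
    rw [Equiv.swap_apply_left, comb_apply_i _ _ _ _ (eraseII_apply_i i α)]
  · by_cases h2 : j = i + 1
    · rw [h2]
      rw [Equiv.swap_apply_right, comb_apply_i1 _ _ _ _ (eraseII_apply_i1 i α)]
    · rw [Equiv.swap_apply_of_ne_of_ne h1 h2, comb_apply_ne _ _ _ h1 h2,
        eraseII_apply_ne α h1 h2]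

lemma eraseII_mapDomain_swap (i : ℕ) (α : ℕ →₀ ℕ) :
    eraseII i (Finsupp.mapDomain (⇑(Equiv.swap i (i + 1))) α) = eraseII i α := by
  ext j
  by_cases h1 : j = i
  · rw [h1]; rw [eraseII_apply_i, eraseII_apply_i]
  · by_cases h2 : j = i + 1
    · rw [h2]; rw [eraseII_apply_i1, eraseII_apply_i1]
    · rw [eraseII_apply_ne _ h1 h2, eraseII_apply_ne _ h1 h2, mapDomain_swap,
        comb_apply_ne _ _ _ h1 h2, eraseII_apply_ne _ h1 h2]

lemma mapDomain_swap_apply_i (i : ℕ) (α : ℕ →₀ ℕ) :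
    Finsupp.mapDomain (⇑(Equiv.swap i (i + 1))) α i = α (i + 1) := by
  rw [mapDomain_swap, comb_apply_i _ _ _ _ (eraseII_apply_i i α)]

lemma mapDomain_swap_apply_i1 (i : ℕ) (α : ℕ →₀ ℕ) :
    Finsupp.mapDomain (⇑(Equiv.swap i (i + 1))) α (i + 1) = α i := by
  rw [mapDomain_swap, comb_apply_i1 _ _ _ _ (eraseII_apply_i1 i α)]

lemma mono_split (i r s : ℕ) (β : ℕ →₀ ℕ) (c : ℤ) :
    (monomial (β + Finsupp.single i r + Finsupp.single (i + 1) s) c : MvPolynomial ℕ ℤ)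
      = monomial β c * X i ^ r * X (i + 1) ^ s := by
  rw [X_pow_eq_monomial, X_pow_eq_monomial, monomial_mul, monomial_mul, mul_one, mul_one]

/-- The explicit value of `∂ᵢ` on the monomial `X^α`. -/
def Dmono (i : ℕ) (α : ℕ →₀ ℕ) (c : ℤ) : MvPolynomial ℕ ℤ :=
  (∑ j ∈ Finset.range (α i - α (i + 1)),
    monomial (eraseII i α + Finsupp.single i (α (i + 1) + j)
      + Finsupp.single (i + 1) (α i - 1 - j)) c)
  - ∑ j ∈ Finset.range (α (i + 1) - α i),
    monomial (eraseII i α + Finsupp.single i (α i + j)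
      + Finsupp.single (i + 1) (α (i + 1) - 1 - j)) c

lemma Dmono_mapDomain_swap (i : ℕ) (α : ℕ →₀ ℕ) (c : ℤ) :
    Dmono i (Finsupp.mapDomain (⇑(Equiv.swap i (i + 1))) α) c = - Dmono i α c := by
  rw [Dmono, Dmono, mapDomain_swap_apply_i, mapDomain_swap_apply_i1,
    eraseII_mapDomain_swap, neg_sub]

lemma rename_swap_monomial (i : ℕ) (α : ℕ →₀ ℕ) (c : ℤ) :
    rename (⇑(Equiv.swap i (i + 1))) (monomial α c : MvPolynomial ℕ ℤ)
      = monomial (Finsupp.mapDomain (⇑(Equiv.swap i (i + 1))) α) c := by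
  rw [rename_monomial]

variable (SD : SchubertData)

lemma D_monomial_aux (i : ℕ) (α : ℕ →₀ ℕ) (c : ℤ) (hqp : α (i + 1) ≤ α i) :
    SD.D i (monomial α c) = Dmono i α c := by
  set p := α i with hp
  set q := α (i + 1) with hq
  set β := eraseII i α with hβ
  apply D_eq
  have hzero : q - p = 0 := by omega
  have e2 : rename (⇑(Equiv.swap i (i + 1))) (monomial α c : MvPolynomial ℕ ℤ)
      = monomial β c * X i ^ q * X (i + 1) ^ p := by
    rw [rename_swap_monomial, mapDomain_swap, mono_split]
  have e1 : (monomial α c : MvPolynomial ℕ ℤ) = monomial β c * X i ^ p * X (i + 1) ^ q := by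
    conv_lhs => rw [alpha_decomp i α]
    rw [mono_split]
  have key : (∑ j ∈ Finset.range (p - q), (X i : MvPolynomial ℕ ℤ) ^ j
      * X (i + 1) ^ (p - q - 1 - j)) * (X i - X (i + 1))
      = X i ^ (p - q) - X (i + 1) ^ (p - q) := geom_sum₂_mul _ _ _
  have e3 : Dmono i α c = (monomial β c * X i ^ q * X (i + 1) ^ q)
      * ∑ j ∈ Finset.range (p - q), (X i : MvPolynomial ℕ ℤ) ^ j
        * X (i + 1) ^ (p - q - 1 - j) := by
    rw [Dmono, ← hp, ← hq, ← hβ, hzero, Finset.range_zero, Finset.sum_empty, sub_zero,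
      Finset.mul_sum]
    apply Finset.sum_congr rfl
    intro j hj
    have hj' : j < p - q := Finset.mem_range.1 hj
    rw [mono_split, show p - 1 - j = q + (p - q - 1 - j) by omega, pow_add, pow_add]
    ring
  have e5 : (X i : MvPolynomial ℕ ℤ) ^ q * X i ^ (p - q) = X i ^ p := by
    rw [← pow_add]; congr 1; omega
  have e6 : (X (i + 1) : MvPolynomial ℕ ℤ) ^ q * X (i + 1) ^ (p - q) = X (i + 1) ^ p := by
    rw [← pow_add]; congr 1; omega
  rw [e3, e2, e1]
  linear_combination (monomial β c * X i ^ q * X (i + 1) ^ q) * key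
    + (monomial β c * X (i + 1) ^ q) * e5 - (monomial β c * X i ^ q) * e6

lemma D_monomial (i : ℕ) (α : ℕ →₀ ℕ) (c : ℤ) :
    SD.D i (monomial α c) = Dmono i α c := by
  rcases le_or_gt (α (i + 1)) (α i) with hqp | hpq
  · exact D_monomial_aux SD i α c hqp
  · set α' := Finsupp.mapDomain (⇑(Equiv.swap i (i + 1))) α with hα'
    have h1 : α' (i + 1) ≤ α' i := by
      rw [hα', mapDomain_swap_apply_i, mapDomain_swap_apply_i1]; omega
    have h2 : rename (⇑(Equiv.swap i (i + 1))) (monomial α' c : MvPolynomial ℕ ℤ)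
        = monomial α c := by
      rw [rename_swap_monomial, hα', ← Finsupp.mapDomain_comp]
      rw [show (⇑(Equiv.swap i (i + 1)) ∘ ⇑(Equiv.swap i (i + 1))) = id from
        funext fun x => Equiv.swap_apply_self _ _ x, Finsupp.mapDomain_id]
    calc SD.D i (monomial α c)
        = SD.D i (rename (⇑(Equiv.swap i (i + 1))) (monomial α' c)) := by rw [h2]
      _ = - SD.D i (monomial α' c) := D_rename_swap SD i _
      _ = - Dmono i α' c := by rw [D_monomial_aux SD i α' c h1]
      _ = Dmono i α c := by
          rw [hα', Dmono_mapDomain_swap, neg_neg]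

lemma support_sum_subset {β : Type*} (s : Finset β) (F : β → MvPolynomial ℕ ℤ) :
    (∑ x ∈ s, F x).support ⊆ s.biUnion fun x => (F x).support := by
  classical
  induction s using Finset.induction with
  | empty => simp
  | insert _ _ hx IH =>
    rw [Finset.sum_insert hx]
    refine subset_trans (MvPolynomial.support_add) ?_
    rw [Finset.biUnion_insert]
    exact Finset.union_subset_union (Finset.Subset.refl _) IH

lemma Dmono_support (i : ℕ) (α : ℕ →₀ ℕ) (c : ℤ) {γ : ℕ →₀ ℕ}
    (hγ : γ ∈ (Dmono i α c).support) :
    ∃ r s : ℕ, γ = eraseII i α + Finsupp.single i r + Finsupp.single (i + 1) s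
      ∧ r + s + 1 = α i + α (i + 1)
      ∧ r + 1 ≤ max (α i) (α (i + 1)) ∧ s + 1 ≤ max (α i) (α (i + 1)) := by
  classical
  rw [Dmono, sub_eq_add_neg] at hγ
  have hγ2 := MvPolynomial.support_add hγ
  rw [Finset.mem_union, MvPolynomial.support_neg] at hγ2
  rcases hγ2 with hg | hg <;> [skip; skip] <;>
  · have hg2 := support_sum_subset _ _ hg
    rw [Finset.mem_biUnion] at hg2
    obtain ⟨j, hj, hjsup⟩ := hg2
    have hj' := Finset.mem_range.1 hj
    have := MvPolynomial.support_monomial_subset hjsup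
    rw [Finset.mem_singleton] at this
    subst this
    first
    | exact ⟨α (i + 1) + j, α i - 1 - j, rfl, by omega, by omega, by omega⟩
    | exact ⟨α i + j, α (i + 1) - 1 - j, rfl, by omega, by omega, by omega⟩

end SchubertAux

-- ===================== Section E : homogeneity / bounds / Dw =====================
namespace SchubertAux
open Equiv

def Bnd (n : ℕ) (f : MvPolynomial ℕ ℤ) : Prop :=
  ∀ γ ∈ f.support, ∀ j, γ j ≤ n - 1 - j

variable (SD : SchubertData)

lemma D_eq_sum_Dmono (i : ℕ) (f : MvPolynomial ℕ ℤ) :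
    SD.D i f = ∑ α ∈ f.support, Dmono i α (coeff α f) := by
  conv_lhs => rw [f.as_sum]
  rw [D_sum]
  exact Finset.sum_congr rfl fun α _ => D_monomial SD i α _

lemma D_isHomogeneous (i : ℕ) {f : MvPolynomial ℕ ℤ} {d : ℕ} (hf : f.IsHomogeneous d) :
    (SD.D i f).IsHomogeneous (d - 1) := by
  rw [D_eq_sum_Dmono]
  rw [← mem_homogeneousSubmodule]
  apply Submodule.sum_mem
  intro α hα
  have hdeg : α.degree = d := homog_support_degree hf hα
  have hdec := congrArg Finsupp.degree (alpha_decomp i α)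
  rw [fdeg_add, fdeg_add, fdeg_single, fdeg_single] at hdec
  rw [Dmono, sub_eq_add_neg]
  apply Submodule.add_mem
  · apply Submodule.sum_mem
    intro j hj
    have hj' := Finset.mem_range.1 hj
    rw [mem_homogeneousSubmodule]
    apply isHomogeneous_monomial
    rw [fdeg_add, fdeg_add, fdeg_single, fdeg_single]
    omega
  · apply Submodule.neg_mem
    apply Submodule.sum_mem
    intro j hj
    have hj' := Finset.mem_range.1 hj
    rw [mem_homogeneousSubmodule]
    apply isHomogeneous_monomial
    rw [fdeg_add, fdeg_add, fdeg_single, fdeg_single]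
    omega

lemma Bnd_D {n : ℕ} (i : ℕ) {f : MvPolynomial ℕ ℤ} (hf : Bnd n f) : Bnd n (SD.D i f) := by
  rw [D_eq_sum_Dmono]
  intro γ hγ j
  have h1 := support_sum_subset _ _ hγ
  rw [Finset.mem_biUnion] at h1
  obtain ⟨α, hαf, hγα⟩ := h1
  obtain ⟨r, s, rfl, hsum, hr, hs⟩ := Dmono_support i α _ hγα
  have hαb := hf α hαf
  by_cases h1 : j = i
  · rw [h1, comb_apply_i _ _ _ _ (eraseII_apply_i i α)]
    have h2 := hαb i
    have h3 := hαb (i + 1)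
    omega
  · by_cases h2 : j = i + 1
    · rw [h2, comb_apply_i1 _ _ _ _ (eraseII_apply_i1 i α)]
      have h3 := hαb i
      have h4 := hαb (i + 1)
      omega
    · rw [comb_apply_ne _ _ _ h1 h2, eraseII_apply_ne α h1 h2]
      exact hαb j

lemma eq_C_of_isHomogeneous_zero {f : MvPolynomial ℕ ℤ} (hf : f.IsHomogeneous 0) :
    f = C (coeff 0 f) := by
  have hsub : f.support ⊆ {0} := by
    intro α hα
    rw [Finset.mem_singleton]
    have := homog_support_degree hf hα
    rwa [Finsupp.degree_eq_zero_iff] at this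
  rcases Finset.subset_singleton_iff.mp hsub with h | h
  · have hf0 : f = 0 := MvPolynomial.support_eq_empty.mp h
    rw [hf0]; simp
  · conv_lhs => rw [f.as_sum, h]
    rw [Finset.sum_singleton, C_apply]

lemma rename_of_isHomogeneous_zero {f : MvPolynomial ℕ ℤ} (hf : f.IsHomogeneous 0)
    (σ : ℕ → ℕ) : rename σ f = f := by
  rw [eq_C_of_isHomogeneous_zero hf, rename_C]

lemma Dw_swap (i : ℕ) : SD.Dw (Equiv.swap i (i + 1)) = SD.D i := by
  have h1 : permLength ((1 : Perm ℕ) * Equiv.swap i (i + 1))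
      = permLength (1 : Perm ℕ) + 1 := by
    apply length_mul_swap_lt finSupp_one
    simp only [Perm.one_apply]
    omega
  have h2 := SD.Dw_step 1 i h1
  rw [one_mul] at h2
  rw [h2, SD.Dw_one]
  rfl

lemma Dw_mul_aux : ∀ k (u v : Perm ℕ), finSupp u → finSupp v → permLength v = k →
    permLength (u * v) = permLength u + permLength v →
    SD.Dw (u * v) = SD.Dw u ∘ SD.Dw v := by
  intro k
  induction k using Nat.strong_induction_on with
  | _ k IH =>
    intro u v hu hv hk hl
    by_cases h1 : v = 1
    · subst h1
      rw [mul_one, SD.Dw_one]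
      rfl
    obtain ⟨n0, hn0⟩ := hv
    obtain ⟨i, hdes⟩ := exists_descent hn0 h1
    set v' := v * Equiv.swap i (i + 1) with hv'
    have hv'f : finSupp v' := finSupp_mul ⟨n0, hn0⟩ (finSupp_swap i)
    have hlv : permLength v = permLength v' + 1 := length_mul_swap_gt ⟨n0, hn0⟩ i hdes
    have hvv : v' * Equiv.swap i (i + 1) = v := by
      rw [hv', mul_assoc, Equiv.swap_mul_self, mul_one]
    have hstepv : permLength (v' * Equiv.swap i (i + 1)) = permLength v' + 1 := by
      rw [hvv]; omega
    have huv'f : finSupp (u * v') := finSupp_mul hu hv'f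
    have hle : permLength (u * v') ≤ permLength u + permLength v' :=
      length_mul_le _ _ hu hv'f
    have huv : (u * v') * Equiv.swap i (i + 1) = u * v := by
      rw [hv', mul_assoc, mul_assoc, Equiv.swap_mul_self, mul_one]
    have htri : permLength (u * v) = permLength (u * v') + 1
        ∨ permLength (u * v') = permLength (u * v) + 1 := by
      rcases lt_or_ge ((u * v') i) ((u * v') (i + 1)) with hc | hc
      · left; rw [← huv]; exact length_mul_swap_lt huv'f i hc
      · right
        have hne : (u * v') i ≠ (u * v') (i + 1) := fun hh => by
          have := (u * v').injective hh; omega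
        have := length_mul_swap_gt huv'f i (by omega)
        rw [huv] at this
        exact this
    have heq : permLength (u * v') = permLength u + permLength v' := by omega
    have hstepuv : permLength ((u * v') * Equiv.swap i (i + 1))
        = permLength (u * v') + 1 := by rw [huv]; omega
    have hDuv : SD.Dw (u * v) = SD.Dw (u * v') ∘ SD.D i := by
      rw [← huv]; exact SD.Dw_step _ i hstepuv
    have hDv : SD.Dw v = SD.Dw v' ∘ SD.D i := by
      rw [← hvv]; exact SD.Dw_step _ i hstepv
    have hIH : SD.Dw (u * v') = SD.Dw u ∘ SD.Dw v' :=
      IH (permLength v') (by omega) u v' hu hv'f rfl heq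
    rw [hDuv, hIH, hDv]
    rfl

lemma Dw_mul {u v : Perm ℕ} (hu : finSupp u) (hv : finSupp v)
    (hl : permLength (u * v) = permLength u + permLength v) :
    SD.Dw (u * v) = SD.Dw u ∘ SD.Dw v :=
  Dw_mul_aux SD _ u v hu hv rfl hl

lemma Dw_add {n : ℕ} {w : Perm ℕ} (hw : memSn n w) (f g : MvPolynomial ℕ ℤ) :
    SD.Dw w (f + g) = SD.Dw w f + SD.Dw w g := by
  revert f g
  refine descent_induction (n := n)
    (P := fun w => ∀ f g, SD.Dw w (f + g) = SD.Dw w f + SD.Dw w g) ?_ ?_ w hw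
  · intro f g; rw [SD.Dw_one]; rfl
  · intro w i hwmem hin hlt IH f g
    rw [SD.Dw_step w i (length_mul_swap_lt (memSn_finSupp hwmem) i hlt)]
    show SD.Dw w (SD.D i (f + g)) = SD.Dw w (SD.D i f) + SD.Dw w (SD.D i g)
    rw [D_add, IH]

lemma Dw_zero {n : ℕ} {w : Perm ℕ} (hw : memSn n w) : SD.Dw w 0 = 0 := by
  have h := Dw_add SD hw 0 0
  rw [add_zero] at h
  have h2 : SD.Dw w 0 + 0 = SD.Dw w 0 + SD.Dw w 0 := by rw [add_zero]; exact h
  exact (add_left_cancel h2).symm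

lemma Dw_sub {n : ℕ} {w : Perm ℕ} (hw : memSn n w) (f g : MvPolynomial ℕ ℤ) :
    SD.Dw w (f - g) = SD.Dw w f - SD.Dw w g := by
  have h1 := Dw_add SD hw (f - g) g
  rw [sub_add_cancel] at h1
  rw [h1]
  ring

lemma Dw_sum {n : ℕ} {w : Perm ℕ} (hw : memSn n w) {β : Type*} (s : Finset β)
    (F : β → MvPolynomial ℕ ℤ) :
    SD.Dw w (∑ x ∈ s, F x) = ∑ x ∈ s, SD.Dw w (F x) := by
  classical
  induction s using Finset.induction with
  | empty => simpa using Dw_zero SD hw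
  | insert _ _ hx IH =>
    rw [Finset.sum_insert hx, Finset.sum_insert hx, Dw_add SD hw, IH]

lemma Dw_invariant_mul {n : ℕ} {w : Perm ℕ} (hw : memSn n w) {c : MvPolynomial ℕ ℤ}
    (hc : ∀ i, i + 1 < n → rename (⇑(Equiv.swap i (i + 1))) c = c) (f : MvPolynomial ℕ ℤ) :
    SD.Dw w (c * f) = c * SD.Dw w f := by
  revert f
  refine descent_induction (n := n)
    (P := fun w => ∀ f, SD.Dw w (c * f) = c * SD.Dw w f) ?_ ?_ w hw
  · intro f; rw [SD.Dw_one]; rfl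
  · intro w i hwmem hin hlt IH f
    rw [SD.Dw_step w i (length_mul_swap_lt (memSn_finSupp hwmem) i hlt)]
    show SD.Dw w (SD.D i (c * f)) = c * SD.Dw w (SD.D i f)
    rw [D_invariant_mul SD (hc i hin), IH]

lemma Dw_smul {n : ℕ} {w : Perm ℕ} (hw : memSn n w) (z : ℤ) (f : MvPolynomial ℕ ℤ) :
    SD.Dw w (z • f) = z • SD.Dw w f := by
  rw [smul_eq_C_mul, smul_eq_C_mul]
  exact Dw_invariant_mul SD hw (fun i _ => rename_C _ _) f

lemma Dw_Bnd {n : ℕ} {w : Perm ℕ} (hw : memSn n w) {f : MvPolynomial ℕ ℤ}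
    (hf : Bnd n f) : Bnd n (SD.Dw w f) := by
  have main : ∀ w, memSn n w → ∀ f, Bnd n f → Bnd n (SD.Dw w f) := by
    refine descent_induction (n := n) ?_ ?_
    · intro f hf; rwa [SD.Dw_one]
    · intro w i hwmem hin hlt IH f hf
      rw [SD.Dw_step w i (length_mul_swap_lt (memSn_finSupp hwmem) i hlt)]
      exact IH _ (Bnd_D SD i hf)
  exact main w hw f hf

lemma Dw_isHomogeneous {n : ℕ} {w : Perm ℕ} (hw : memSn n w) {f : MvPolynomial ℕ ℤ}
    {d : ℕ} (hf : f.IsHomogeneous d) (hld : permLength w ≤ d) :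
    (SD.Dw w f).IsHomogeneous (d - permLength w) := by
  have main : ∀ w, memSn n w → ∀ (f : MvPolynomial ℕ ℤ) (d : ℕ), f.IsHomogeneous d →
      permLength w ≤ d → (SD.Dw w f).IsHomogeneous (d - permLength w) := by
    refine descent_induction (n := n) ?_ ?_
    · intro f d hf _
      rw [SD.Dw_one, length_one, Nat.sub_zero]
      exact hf
    · intro w i hwmem hin hlt IH f d hf hld
      have hlen := length_mul_swap_lt (memSn_finSupp hwmem) i hlt
      rw [SD.Dw_step w i hlen]
      rw [hlen] at hld ⊢
      show (SD.Dw w (SD.D i f)).IsHomogeneous (d - (permLength w + 1))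
      have h1 : (SD.D i f).IsHomogeneous (d - 1) := D_isHomogeneous SD i hf
      have h2 := IH (SD.D i f) (d - 1) h1 (by omega)
      have h3 : d - 1 - permLength w = d - (permLength w + 1) := by omega
      rwa [h3] at h2
  exact main w hw f d hf hld

lemma Dw_zero_of_low_degree {n : ℕ} {w : Perm ℕ} (hw : memSn n w) {f : MvPolynomial ℕ ℤ}
    {d : ℕ} (hf : f.IsHomogeneous d) (hld : d < permLength w) : SD.Dw w f = 0 := by
  have main : ∀ w, memSn n w → ∀ (f : MvPolynomial ℕ ℤ) (d : ℕ), f.IsHomogeneous d →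
      d < permLength w → SD.Dw w f = 0 := by
    refine descent_induction (n := n) ?_ ?_
    · intro f d _ hd
      rw [length_one] at hd
      omega
    · intro w i hwmem hin hlt IH f d hf hld
      have hlen := length_mul_swap_lt (memSn_finSupp hwmem) i hlt
      rw [SD.Dw_step w i hlen]
      show SD.Dw w (SD.D i f) = 0
      rcases Nat.eq_zero_or_pos d with hd0 | hd0
      · subst hd0
        have : SD.D i f = 0 :=
          D_of_invariant SD (rename_of_isHomogeneous_zero hf _)
        rw [this]
        exact Dw_zero SD hwmem
      · rw [hlen] at hld
        exact IH (SD.D i f) (d - 1) (D_isHomogeneous SD i hf) (by omega)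
  exact main w hw f d hf hld

end SchubertAux

-- ===================== Section F : staircase and Schubert basics =====================
namespace SchubertAux
open Equiv

def deltaF (n : ℕ) : ℕ →₀ ℕ := ∑ i ∈ Finset.range n, Finsupp.single i (n - 1 - i)

lemma deltaF_apply_lt {n j : ℕ} (h : j < n) : deltaF n j = n - 1 - j := by
  rw [deltaF, Finset.sum_apply']
  rw [Finset.sum_eq_single_of_mem j (Finset.mem_range.2 h)]
  · rw [Finsupp.single_eq_same]
  · intro b _ hb
    exact Finsupp.single_eq_of_ne hb.symm

lemma deltaF_apply_ge {n j : ℕ} (h : n ≤ j) : deltaF n j = 0 := by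
  rw [deltaF, Finset.sum_apply']
  apply Finset.sum_eq_zero
  intro b hb
  exact Finsupp.single_eq_of_ne (by have := Finset.mem_range.1 hb; omega)

lemma prod_monomial_single {β : Type*} (s : Finset β) (g : β → ℕ →₀ ℕ) :
    (∏ i ∈ s, (monomial (g i) 1 : MvPolynomial ℕ ℤ)) = monomial (∑ i ∈ s, g i) 1 := by
  classical
  induction s using Finset.induction with
  | empty => simp [monomial_zero']
  | insert _ _ hx IH =>
    rw [Finset.prod_insert hx, Finset.sum_insert hx, IH, monomial_mul, one_mul]

lemma staircase_eq (n : ℕ) : staircase n = monomial (deltaF n) 1 := by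
  rw [staircase, deltaF, ← prod_monomial_single]
  apply Finset.prod_congr rfl
  intro i _
  rw [X_pow_eq_monomial]

def Ndelta (n : ℕ) : ℕ := ∑ i ∈ Finset.range n, (n - 1 - i)

lemma fdeg_deltaF (n : ℕ) : (deltaF n).degree = Ndelta n := by
  rw [deltaF, Ndelta]
  induction (Finset.range n) using Finset.induction with
  | empty => simp [Finsupp.degree]
  | insert _ _ hx IH =>
    rw [Finset.sum_insert hx, Finset.sum_insert hx, fdeg_add, fdeg_single, IH]

lemma staircase_isHomogeneous (n : ℕ) : (staircase n).IsHomogeneous (Ndelta n) := by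
  rw [staircase_eq]
  exact isHomogeneous_monomial _ (fdeg_deltaF n)

lemma staircase_Bnd (n : ℕ) : Bnd n (staircase n) := by
  rw [staircase_eq]
  intro γ hγ j
  have := MvPolynomial.support_monomial_subset hγ
  rw [Finset.mem_singleton] at this
  subst this
  rcases Nat.lt_or_ge j n with h | h
  · rw [deltaF_apply_lt h]
  · rw [deltaF_apply_ge h]
    omega

lemma length_swap (i : ℕ) : permLength (Equiv.swap i (i + 1)) = 1 := by
  have h := length_mul_swap_lt finSupp_one i (by simp [Perm.one_apply])
  rw [one_mul, length_one] at h
  exact h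

-- the cycle prefixes  s_0 s_1 ⋯ s_k
def pperm : ℕ → Perm ℕ
  | 0 => Equiv.swap 0 1
  | k + 1 => pperm k * Equiv.swap (k + 1) (k + 2)

lemma pperm_apply : ∀ k x, pperm k x = if x ≤ k then x + 1 else if x = k + 1 then 0 else x := by
  intro k
  induction k with
  | zero =>
    intro x
    rw [pperm, Equiv.swap_apply_def]
    split_ifs <;> omega
  | succ k IH =>
    intro x
    rw [pperm, Perm.mul_apply, Equiv.swap_apply_def]
    by_cases h1 : x = k + 1
    · rw [if_pos h1, IH]
      split_ifs <;> omega
    · by_cases h2 : x = k + 2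
      · rw [if_neg h1, if_pos h2, IH]
        split_ifs <;> omega
      · rw [if_neg h1, if_neg h2, IH]
        split_ifs <;> omega

lemma memSn_pperm {k n : ℕ} (h : k + 2 ≤ n) : memSn n (pperm k) := by
  intro x hx
  rw [pperm_apply]
  split_ifs <;> omega

variable (SD : SchubertData)

lemma Dw_neg {n : ℕ} {w : Perm ℕ} (hw : memSn n w) (f : MvPolynomial ℕ ℤ) :
    SD.Dw w (-f) = - SD.Dw w f := by
  have h := Dw_sub SD hw 0 f
  rw [zero_sub] at h
  rwa [Dw_zero SD hw, zero_sub] at h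

lemma Dw_pperm_prod (k : ℕ) :
    SD.Dw (pperm k) (∏ i ∈ Finset.range (k + 1), (X i : MvPolynomial ℕ ℤ)) = 1 := by
  induction k with
  | zero =>
    rw [pperm, Dw_swap]
    simp only [zero_add, Finset.range_one, Finset.prod_singleton]
    apply D_eq
    rw [rename_X, Equiv.swap_apply_left]
    ring
  | succ k IH =>
    have hlen : permLength (pperm k * Equiv.swap (k + 1) (k + 2))
        = permLength (pperm k) + 1 := by
      apply length_mul_swap_lt (memSn_finSupp (memSn_pperm (le_refl (k + 2))))
      rw [pperm_apply, pperm_apply]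
      split_ifs <;> omega
    rw [pperm, SD.Dw_step _ _ hlen]
    show SD.Dw (pperm k) (SD.D (k + 1) _) = 1
    have hsplit : (∏ i ∈ Finset.range (k + 2), (X i : MvPolynomial ℕ ℤ))
        = (∏ i ∈ Finset.range (k + 1), (X i : MvPolynomial ℕ ℤ)) * X (k + 1) := by
      rw [Finset.prod_range_succ]
    rw [hsplit]
    have hinv : rename (⇑(Equiv.swap (k + 1) (k + 2)))
        (∏ i ∈ Finset.range (k + 1), (X i : MvPolynomial ℕ ℤ))
        = ∏ i ∈ Finset.range (k + 1), (X i : MvPolynomial ℕ ℤ) := by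
      rw [map_prod]
      apply Finset.prod_congr rfl
      intro i hi
      have := Finset.mem_range.1 hi
      rw [rename_X, Equiv.swap_apply_of_ne_of_ne (by omega) (by omega)]
    rw [D_invariant_mul SD hinv]
    have hDX : SD.D (k + 1) (X (k + 1)) = 1 := by
      apply D_eq
      rw [rename_X, Equiv.swap_apply_left]
      ring
    rw [hDX, mul_one, IH]

lemma w0_zero : w0 0 = 1 := by
  apply Equiv.ext
  intro x
  rw [w0_apply]
  simp only [Perm.one_apply]
  split_ifs <;> omega

lemma w0_one_eq : w0 1 = 1 := by
  apply Equiv.ext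
  intro x
  rw [w0_apply]
  simp only [Perm.one_apply]
  split_ifs <;> omega

lemma w0_succ {n : ℕ} (h : 1 ≤ n) : w0 (n + 1) = pperm (n - 1) * w0 n := by
  apply Equiv.ext
  intro x
  rw [Perm.mul_apply, pperm_apply, w0_apply, w0_apply]
  split_ifs <;> omega

lemma Dw_w0_staircase : ∀ n, SD.Dw (w0 n) (staircase n) = 1 := by
  intro n
  induction n with
  | zero =>
    rw [w0_zero, SD.Dw_one]
    show staircase 0 = 1
    rw [staircase]
    simp
  | succ n IH =>
    rcases Nat.eq_zero_or_pos n with h0 | h1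
    · subst h0
      rw [w0_one_eq, SD.Dw_one]
      show staircase 1 = 1
      rw [staircase]
      simp
    · have hw0n : memSn (n + 1) (w0 n) := memSn_mono (by omega) (memSn_w0 n)
      have hpp : pperm (n - 1) = w0 (n + 1) * w0 n := by
        rw [w0_succ h1, mul_assoc, w0_mul_w0, mul_one]
      have hlen : permLength (pperm (n - 1) * w0 n)
          = permLength (pperm (n - 1)) + permLength (w0 n) := by
        have h2 := length_w0_mul (n := n + 1) hw0n
        rw [← hpp] at h2
        rw [← w0_succ h1] at *
        omega
      have hmul := Dw_mul SD (memSn_finSupp (memSn_pperm (by omega : (n-1) + 2 ≤ n + 1)))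
        (memSn_finSupp (memSn_w0 n)) (by rw [← w0_succ h1] at hlen ⊢; exact hlen)
      rw [w0_succ h1, hmul]
      show SD.Dw (pperm (n - 1)) (SD.Dw (w0 n) (staircase (n + 1))) = 1
      have hsplit : staircase (n + 1)
          = (∏ i ∈ Finset.range n, (X i : MvPolynomial ℕ ℤ)) * staircase n := by
        rw [staircase, staircase, Finset.prod_range_succ]
        rw [show n + 1 - 1 - n = 0 by omega, pow_zero, mul_one, ← Finset.prod_mul_distrib]
        apply Finset.prod_congr rfl
        intro i hi
        have := Finset.mem_range.1 hi
        rw [show n + 1 - 1 - i = (n - 1 - i) + 1 by omega, pow_succ]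
        ring
      rw [hsplit]
      have hprodinv : ∀ i, i + 1 < n → rename (⇑(Equiv.swap i (i + 1)))
          (∏ j ∈ Finset.range n, (X j : MvPolynomial ℕ ℤ))
          = ∏ j ∈ Finset.range n, (X j : MvPolynomial ℕ ℤ) := by
        intro i hin
        rw [map_prod]
        simp only [rename_X]
        have himg : (Finset.range n).image (⇑(Equiv.swap i (i + 1))) = Finset.range n := by
          ext b
          simp only [Finset.mem_image, Finset.mem_range]
          constructor
          · rintro ⟨a, ha, rfl⟩
            exact memSn_apply_lt (memSn_swap hin) ha
          · intro hb
            exact ⟨Equiv.swap i (i + 1) b, memSn_apply_lt (memSn_swap hin) hb,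
              Equiv.swap_apply_self _ _ _⟩
        calc ∏ j ∈ Finset.range n, (X (Equiv.swap i (i + 1) j) : MvPolynomial ℕ ℤ)
            = ∏ x ∈ (Finset.range n).image (⇑(Equiv.swap i (i + 1))), (X x : MvPolynomial ℕ ℤ) := by
              rw [Finset.prod_image]
              intro x _ y _ hxy
              exact (Equiv.swap i (i + 1)).injective hxy
          _ = ∏ j ∈ Finset.range n, (X j : MvPolynomial ℕ ℤ) := by rw [himg]
      rw [Dw_invariant_mul SD (memSn_w0 n) hprodinv, IH, mul_one]
      rcases Nat.eq_or_lt_of_le h1 with he | hlt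
      · rw [← he]
        show SD.Dw (pperm 0) (∏ i ∈ Finset.range 1, (X i : MvPolynomial ℕ ℤ)) = 1
        exact Dw_pperm_prod SD 0
      · have : n - 1 + 1 = n := by omega
        rw [← this]
        exact Dw_pperm_prod SD (n - 1)

include SD in
lemma Ndelta_eq_length (n : ℕ) : Ndelta n = permLength (w0 n) := by
  have hP6 := Dw_w0_staircase SD n
  rcases Nat.lt_or_ge (Ndelta n) (permLength (w0 n)) with h | h
  · exfalso
    have := Dw_zero_of_low_degree SD (memSn_w0 n) (staircase_isHomogeneous n) h
    rw [hP6] at this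
    exact one_ne_zero this
  · have h1 := Dw_isHomogeneous SD (memSn_w0 n) (staircase_isHomogeneous n) h
    rw [hP6] at h1
    have h2 := h1.inj_right (isHomogeneous_one ℕ ℤ) one_ne_zero
    omega

lemma length_inv_w0 {n : ℕ} {w : Perm ℕ} (hw : memSn n w) :
    permLength (w⁻¹ * w0 n) + permLength w = permLength (w0 n) := by
  have h := length_mul_w0 (memSn_inv hw)
  rw [length_inv] at h
  exact h

lemma S_eq {n : ℕ} {w : Perm ℕ} (hw : memSn n w) :
    SD.S w = SD.Dw (w⁻¹ * w0 n) (staircase n) := SD.hS n w hw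

lemma S_isHomogeneous {n : ℕ} {w : Perm ℕ} (hw : memSn n w) :
    (SD.S w).IsHomogeneous (permLength w) := by
  rw [S_eq SD hw]
  have hv : memSn n (w⁻¹ * w0 n) := memSn_mul (memSn_inv hw) (memSn_w0 n)
  have hl := length_inv_w0 hw
  have hle : permLength (w⁻¹ * w0 n) ≤ Ndelta n := by
    rw [Ndelta_eq_length SD n]; omega
  have h1 := Dw_isHomogeneous SD hv (staircase_isHomogeneous n) hle
  have h2 : Ndelta n - permLength (w⁻¹ * w0 n) = permLength w := by
    rw [Ndelta_eq_length SD n]; omega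
  rwa [h2] at h1

lemma S_Bnd {n : ℕ} {w : Perm ℕ} (hw : memSn n w) : Bnd n (SD.S w) := by
  rw [S_eq SD hw]
  exact Dw_Bnd SD (memSn_mul (memSn_inv hw) (memSn_w0 n)) (staircase_Bnd n)

lemma S_one (n : ℕ) : SD.S 1 = 1 := by
  rw [S_eq SD (memSn_one n), inv_one, one_mul]
  exact Dw_w0_staircase SD n

lemma S_w0 (n : ℕ) : SD.S (w0 n) = staircase n := by
  rw [S_eq SD (memSn_w0 n), w0_inv, w0_mul_w0, SD.Dw_one]
  rfl

lemma D_S {n : ℕ} {w : Perm ℕ} (hw : memSn n w) {i : ℕ} (hin : i + 1 < n) :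
    SD.D i (SD.S w)
      = if w (i + 1) < w i then SD.S (w * Equiv.swap i (i + 1)) else 0 := by
  have hsmem : memSn n (Equiv.swap i (i + 1)) := memSn_swap hin
  have hwsmem : memSn n (w * Equiv.swap i (i + 1)) := memSn_mul hw hsmem
  have hvmem : memSn n (w⁻¹ * w0 n) := memSn_mul (memSn_inv hw) (memSn_w0 n)
  have hlv := length_inv_w0 hw
  have hlvs := length_inv_w0 hwsmem
  have hsv : (w * Equiv.swap i (i + 1))⁻¹ * w0 n
      = Equiv.swap i (i + 1) * (w⁻¹ * w0 n) := by
    rw [mul_inv_rev, Equiv.swap_inv, mul_assoc]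
  by_cases hdes : w (i + 1) < w i
  · rw [if_pos hdes]
    have hlws : permLength w = permLength (w * Equiv.swap i (i + 1)) + 1 :=
      length_mul_swap_gt (memSn_finSupp hw) i hdes
    have hlmul : permLength (Equiv.swap i (i + 1) * (w⁻¹ * w0 n))
        = permLength (Equiv.swap i (i + 1)) + permLength (w⁻¹ * w0 n) := by
      rw [← hsv, length_swap]
      omega
    rw [S_eq SD hwsmem, hsv,
      Dw_mul SD (memSn_finSupp hsmem) (memSn_finSupp hvmem) hlmul, Dw_swap]
    show SD.D i (SD.S w) = SD.D i (SD.Dw (w⁻¹ * w0 n) (staircase n))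
    rw [S_eq SD hw]
  · rw [if_neg hdes]
    have hne : w i ≠ w (i + 1) := fun hh => by have := w.injective hh; omega
    have hlt : w i < w (i + 1) := by omega
    have hlws : permLength (w * Equiv.swap i (i + 1)) = permLength w + 1 :=
      length_mul_swap_lt (memSn_finSupp hw) i hlt
    have hv'mem : memSn n ((w * Equiv.swap i (i + 1))⁻¹ * w0 n) :=
      memSn_mul (memSn_inv hwsmem) (memSn_w0 n)
    have hvv' : w⁻¹ * w0 n
        = Equiv.swap i (i + 1) * ((w * Equiv.swap i (i + 1))⁻¹ * w0 n) := by
      rw [← mul_assoc, mul_inv_rev, Equiv.swap_inv, ← mul_assoc,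
        Equiv.swap_mul_self, one_mul]
    have hlmul : permLength (Equiv.swap i (i + 1)
          * ((w * Equiv.swap i (i + 1))⁻¹ * w0 n))
        = permLength (Equiv.swap i (i + 1))
          + permLength ((w * Equiv.swap i (i + 1))⁻¹ * w0 n) := by
      rw [← hvv', length_swap]
      omega
    rw [S_eq SD hw, hvv',
      Dw_mul SD (memSn_finSupp hsmem) (memSn_finSupp hv'mem) hlmul, Dw_swap]
    show SD.D i (SD.D i (SD.Dw ((w * Equiv.swap i (i + 1))⁻¹ * w0 n) (staircase n))) = 0
    exact D_D SD i _

lemma D_rename_w0 {n i : ℕ} (hin : i + 1 < n) (g : MvPolynomial ℕ ℤ) :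
    SD.D i (rename (⇑(w0 n)) g)
      = - rename (⇑(w0 n)) (SD.D (n - 2 - i) g) := by
  set j := n - 2 - i with hj
  have hperm : Equiv.swap i (i + 1) * w0 n = w0 n * Equiv.swap j (j + 1) := by
    rw [hj, ← w0_swap hin, ← mul_assoc, ← mul_assoc, w0_mul_w0, one_mul]
  have h1 : rename (⇑(Equiv.swap i (i + 1))) (rename (⇑(w0 n)) g)
      = rename (⇑(w0 n)) (rename (⇑(Equiv.swap j (j + 1))) g) := by
    rw [← rename_perm_mul, ← rename_perm_mul, hperm]
  apply D_eq
  have h2 := congrArg (rename (⇑(w0 n))) (SD.hD j g)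
  simp only [map_mul, map_sub, rename_X] at h2
  rw [w0_apply_lt (by omega), w0_apply_lt (by omega)] at h2
  rw [show n - 1 - j = i + 1 by omega, show n - 1 - (j + 1) = i by omega] at h2
  rw [h1]
  linear_combination h2

lemma Dw_w0_factor {n i : ℕ} (hin : i + 1 < n) :
    SD.Dw (w0 n) = SD.Dw (w0 n * Equiv.swap i (i + 1)) ∘ SD.D i := by
  have hdes : (w0 n) (i + 1) < (w0 n) i := by
    rw [w0_apply_lt (by omega), w0_apply_lt (by omega)]
    omega
  have hlen := length_mul_swap_gt (memSn_finSupp (memSn_w0 n)) i hdes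
  have h := SD.Dw_step (w0 n * Equiv.swap i (i + 1)) i (by
    rw [mul_assoc, Equiv.swap_mul_self, mul_one]
    exact hlen)
  rw [mul_assoc, Equiv.swap_mul_self, mul_one] at h
  exact h

lemma Dw_w0_rename_swap {n i : ℕ} (hin : i + 1 < n) (f : MvPolynomial ℕ ℤ) :
    SD.Dw (w0 n) (rename (⇑(Equiv.swap i (i + 1))) f) = - SD.Dw (w0 n) f := by
  have hmem : memSn n (w0 n * Equiv.swap i (i + 1)) :=
    memSn_mul (memSn_w0 n) (memSn_swap hin)
  rw [Dw_w0_factor SD hin]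
  show SD.Dw _ (SD.D i (rename (⇑(Equiv.swap i (i + 1))) f)) = - SD.Dw _ (SD.D i f)
  rw [D_rename_swap, Dw_neg SD hmem]

lemma Dw_w0_rename {n : ℕ} {w : Perm ℕ} (hw : memSn n w) (f : MvPolynomial ℕ ℤ) :
    SD.Dw (w0 n) (rename (⇑w) f) = ((-1 : ℤ) ^ permLength w) • SD.Dw (w0 n) f := by
  have main : ∀ w, memSn n w → ∀ f : MvPolynomial ℕ ℤ,
      SD.Dw (w0 n) (rename (⇑w) f) = ((-1 : ℤ) ^ permLength w) • SD.Dw (w0 n) f := by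
    refine descent_induction (n := n) ?_ ?_
    · intro f
      rw [length_one, pow_zero, one_smul, Perm.coe_one, rename_id, AlgHom.id_apply]
    · intro w i hwmem hin hlt IH f
      have hlen := length_mul_swap_lt (memSn_finSupp hwmem) i hlt
      rw [rename_perm_mul, IH, Dw_w0_rename_swap SD hin, hlen, pow_succ, smul_neg,
        mul_smul, neg_one_smul, smul_neg]
  exact main w hw f

end SchubertAux

-- ===================== Section G : ideal stability, signs, kernel =====================
namespace SchubertAux
open Equiv

lemma eq_one_of_length_zero {n : ℕ} {w : Perm ℕ} (hw : memSn n w)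
    (h : permLength w = 0) : w = 1 := by
  have hfin : (InvSet w).Finite := finite_invSet (memSn_finSupp hw)
  have hemp : InvSet w = ∅ := by
    rw [permLength_def] at h
    exact (Set.ncard_eq_zero hfin).mp h
  apply eq_one_of_no_inv hw
  intro a b hab hin
  have h2 : (a, b) ∈ InvSet w := ⟨hab, hin⟩
  rw [hemp] at h2
  exact h2

lemma rename_esymmN {n k : ℕ} {σ : Perm ℕ} (hσ : memSn n σ) :
    rename (⇑σ) (esymmN n k) = esymmN n k := by
  rw [esymmN, map_sum]
  have key : ∀ s ∈ Finset.powersetCard k (Finset.range n),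
      rename (⇑σ) (∏ i ∈ s, (X i : MvPolynomial ℕ ℤ)) = ∏ i ∈ s.image ⇑σ, X i := by
    intro s _
    rw [map_prod]
    simp only [rename_X]
    rw [Finset.prod_image (fun x _ y _ h => σ.injective h)]
  rw [Finset.sum_congr rfl key]
  apply Finset.sum_nbij' (i := fun s => s.image ⇑σ) (j := fun s => s.image ⇑σ⁻¹)
  · intro s hs
    rw [Finset.mem_powersetCard] at hs ⊢
    constructor
    · intro x hx
      rw [Finset.mem_image] at hx
      obtain ⟨y, hy, rfl⟩ := hx
      have h2 := hs.1 hy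
      rw [Finset.mem_range] at h2 ⊢
      exact memSn_apply_lt hσ h2
    · rw [Finset.card_image_of_injective _ σ.injective, hs.2]
  · intro s hs
    rw [Finset.mem_powersetCard] at hs ⊢
    constructor
    · intro x hx
      rw [Finset.mem_image] at hx
      obtain ⟨y, hy, rfl⟩ := hx
      have h2 := hs.1 hy
      rw [Finset.mem_range] at h2 ⊢
      exact memSn_apply_lt (memSn_inv hσ) h2
    · rw [Finset.card_image_of_injective _ σ⁻¹.injective, hs.2]
  · intro s _
    rw [Finset.image_image,
      show (⇑σ⁻¹ ∘ ⇑σ) = id from funext fun x => σ.symm_apply_apply x, Finset.image_id]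
  · intro s _
    rw [Finset.image_image,
      show (⇑σ ∘ ⇑σ⁻¹) = id from funext fun x => σ.apply_symm_apply x, Finset.image_id]
  · intro s _
    rfl

variable (SD : SchubertData)

lemma D_mem_In {n i : ℕ} (hin : i + 1 < n) {f : MvPolynomial ℕ ℤ} (hf : f ∈ In n) :
    SD.D i f ∈ In n := by
  rw [In] at hf
  obtain ⟨c, hsupp, rfl⟩ := Submodule.mem_span_set.mp hf
  rw [Finsupp.sum, D_sum]
  apply Ideal.sum_mem
  intro g hg
  have hgS := hsupp hg
  obtain ⟨k, hk1, hkn, rfl⟩ := hgS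
  rw [smul_eq_mul, D_mul,
    D_of_invariant SD (rename_esymmN (memSn_swap hin)), mul_zero, add_zero]
  exact Ideal.mul_mem_left _ _ (Ideal.subset_span ⟨k, hk1, hkn, rfl⟩)

lemma Dw_mem_In {n : ℕ} {w : Perm ℕ} (hw : memSn n w) {f : MvPolynomial ℕ ℤ}
    (hf : f ∈ In n) : SD.Dw w f ∈ In n := by
  have main : ∀ w, memSn n w → ∀ f : MvPolynomial ℕ ℤ, f ∈ In n → SD.Dw w f ∈ In n := by
    refine descent_induction (n := n) ?_ ?_
    · intro f hf
      rwa [SD.Dw_one]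
    · intro w i hwmem hin hlt IH f hf
      rw [SD.Dw_step w i (length_mul_swap_lt (memSn_finSupp hwmem) i hlt)]
      exact IH _ (D_mem_In SD hin hf)
  exact main w hw f hf

lemma aeval_negX_monomial (α : ℕ →₀ ℕ) (c : ℤ) :
    (aeval fun i : ℕ => -(X i : MvPolynomial ℕ ℤ)) (monomial α c)
      = ((-1 : ℤ) ^ α.degree) • (monomial α c : MvPolynomial ℕ ℤ) := by
  rw [aeval_monomial]
  have h1 : (α.prod fun (a : ℕ) (e : ℕ) => (-(X a : MvPolynomial ℕ ℤ)) ^ e)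
      = ((-1 : MvPolynomial ℕ ℤ) ^ α.degree)
        * α.prod fun (a : ℕ) (e : ℕ) => (X a : MvPolynomial ℕ ℤ) ^ e := by
    rw [Finsupp.prod, Finsupp.prod]
    calc (∏ a ∈ α.support, (-(X a : MvPolynomial ℕ ℤ)) ^ α a)
        = ∏ a ∈ α.support, ((-1 : MvPolynomial ℕ ℤ) ^ α a * (X a) ^ α a) := by
          apply Finset.prod_congr rfl
          intro a _
          rw [neg_pow]
      _ = (∏ a ∈ α.support, (-1 : MvPolynomial ℕ ℤ) ^ α a)
          * ∏ a ∈ α.support, (X a : MvPolynomial ℕ ℤ) ^ α a := by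
          rw [Finset.prod_mul_distrib]
      _ = ((-1 : MvPolynomial ℕ ℤ) ^ α.degree)
          * ∏ a ∈ α.support, (X a : MvPolynomial ℕ ℤ) ^ α a := by
          rw [Finset.prod_pow_eq_pow_sum]
          rfl
  rw [h1, smul_eq_C_mul, monomial_eq]
  have h2 : (C ((-1 : ℤ) ^ α.degree) : MvPolynomial ℕ ℤ)
      = (-1 : MvPolynomial ℕ ℤ) ^ α.degree := by
    rw [map_pow, map_neg, map_one]
  rw [h2, show (algebraMap ℤ (MvPolynomial ℕ ℤ)) c = C c from rfl]
  ring

lemma aeval_negX_homog {f : MvPolynomial ℕ ℤ} {d : ℕ} (hf : f.IsHomogeneous d) :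
    (aeval fun i : ℕ => -(X i : MvPolynomial ℕ ℤ)) f = ((-1 : ℤ) ^ d) • f := by
  conv_lhs => rw [f.as_sum]
  conv_rhs => rw [f.as_sum]
  rw [map_sum, Finset.smul_sum]
  apply Finset.sum_congr rfl
  intro α hα
  rw [aeval_negX_monomial, homog_support_degree hf hα]

lemma Dw_w0_monomial_adj {n a : ℕ} (ha : a + 1 < n) {γ : ℕ →₀ ℕ}
    (hγ : γ a = γ (a + 1)) (c : ℤ) : SD.Dw (w0 n) (monomial γ c) = 0 := by
  have hinv : rename (⇑(Equiv.swap a (a + 1))) (monomial γ c : MvPolynomial ℕ ℤ)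
      = monomial γ c := by
    rw [rename_swap_monomial]
    congr 1
    conv_lhs => rw [mapDomain_swap, hγ]
    conv_rhs => rw [alpha_decomp a γ, hγ]
  rw [Dw_w0_factor SD ha]
  show SD.Dw _ (SD.D a (monomial γ c)) = 0
  rw [D_of_invariant SD hinv]
  exact Dw_zero SD (memSn_mul (memSn_w0 n) (memSn_swap ha))

lemma Dw_w0_monomial_eq {n a b : ℕ} (hab : a < b) (hbn : b < n) {γ : ℕ →₀ ℕ}
    (hγ : γ a = γ b) (c : ℤ) : SD.Dw (w0 n) (monomial γ c) = 0 := by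
  by_cases hadj : b = a + 1
  · subst hadj
    exact Dw_w0_monomial_adj SD (by omega) hγ c
  · have han : a + 1 < n := by omega
    have hσmem : memSn n (Equiv.swap (a + 1) b) := by
      intro x hx
      apply Equiv.swap_apply_of_ne_of_ne <;> omega
    have hρa : Finsupp.mapDomain (⇑(Equiv.swap (a + 1) b)) γ a = γ a := by
      rw [Finsupp.mapDomain_equiv_apply, Equiv.symm_swap,
        Equiv.swap_apply_of_ne_of_ne (by omega) (by omega)]
    have hρa1 : Finsupp.mapDomain (⇑(Equiv.swap (a + 1) b)) γ (a + 1) = γ b := by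
      rw [Finsupp.mapDomain_equiv_apply, Equiv.symm_swap, Equiv.swap_apply_left]
    have hrew : rename (⇑(Equiv.swap (a + 1) b))
        (monomial (Finsupp.mapDomain (⇑(Equiv.swap (a + 1) b)) γ) c : MvPolynomial ℕ ℤ)
        = monomial γ c := by
      rw [rename_monomial, ← Finsupp.mapDomain_comp,
        show (⇑(Equiv.swap (a + 1) b) ∘ ⇑(Equiv.swap (a + 1) b)) = id from
          funext fun x => Equiv.swap_apply_self _ _ x, Finsupp.mapDomain_id]
    rw [← hrew, Dw_w0_rename SD hσmem,
      Dw_w0_monomial_adj SD han (by rw [hρa, hρa1, hγ]) c, smul_zero]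

lemma exists_eq_pair {n : ℕ} (α : ℕ →₀ ℕ) (hb : ∀ j, α j ≤ n - 1 - j) (hne : α ≠ 0) :
    ∃ a b, a < b ∧ b < n ∧ (deltaF n + Finsupp.mapDomain (⇑(w0 n)) α) a
      = (deltaF n + Finsupp.mapDomain (⇑(w0 n)) α) b := by
  have hsymm : (w0 n).symm = w0 n := by
    rw [← Equiv.Perm.inv_def, w0_inv]
  have hval : ∀ j, j < n → (deltaF n + Finsupp.mapDomain (⇑(w0 n)) α) j
      = (n - 1 - j) + α (n - 1 - j) := by
    intro j hj
    rw [Finsupp.add_apply, deltaF_apply_lt hj, Finsupp.mapDomain_equiv_apply, hsymm,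
      w0_apply_lt hj]
  by_contra hc
  push_neg at hc
  apply hne
  have hinj : ∀ k ∈ Finset.range n, ∀ k' ∈ Finset.range n,
      k + α k = k' + α k' → k = k' := by
    intro k hk k' hk' he
    rw [Finset.mem_range] at hk hk'
    by_contra hkk
    rcases Nat.lt_or_ge k k' with h | h
    · exact hc (n - 1 - k') (n - 1 - k) (by omega) (by omega) (by
        rw [hval _ (by omega), hval _ (by omega),
          show n - 1 - (n - 1 - k') = k' by omega, show n - 1 - (n - 1 - k) = k by omega, he])
    · have h' : k' < k := by omega
      exact hc (n - 1 - k) (n - 1 - k') (by omega) (by omega) (by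
        rw [hval _ (by omega), hval _ (by omega),
          show n - 1 - (n - 1 - k') = k' by omega, show n - 1 - (n - 1 - k) = k by omega, he])
  have hbound : ∀ k, k ∈ Finset.range n → k + α k < n := by
    intro k hk
    rw [Finset.mem_range] at hk
    have := hb k
    omega
  have himg : (Finset.range n).image (fun k => k + α k) = Finset.range n := by
    apply Finset.eq_of_subset_of_card_le
    · intro b hbm
      rw [Finset.mem_image] at hbm
      obtain ⟨k, hk, rfl⟩ := hbm
      exact Finset.mem_range.2 (hbound k hk)
    · rw [Finset.card_image_of_injOn (fun a ha b hb h => hinj a ha b hb h)]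
  have hsum : ∑ k ∈ Finset.range n, (k + α k) = ∑ k ∈ Finset.range n, k := by
    have h2 : ∑ b ∈ (Finset.range n).image (fun k => k + α k), b
        = ∑ k ∈ Finset.range n, (k + α k) := Finset.sum_image hinj
    rw [himg] at h2
    exact h2.symm
  have h3 : ∑ k ∈ Finset.range n, α k = 0 := by
    rw [Finset.sum_add_distrib] at hsum
    omega
  ext j
  show α j = 0
  rcases Nat.lt_or_ge j n with hj | hj
  · exact Finset.sum_eq_zero_iff.mp h3 j (Finset.mem_range.2 hj)
  · have := hb j
    omega

lemma kernel_one (n : ℕ) :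
    SD.Dw (w0 n) (staircase n * rename (⇑(w0 n)) (SD.S 1)) = 1 := by
  rw [S_one SD n, map_one, mul_one, Dw_w0_staircase SD n]

lemma kernel_ne {n : ℕ} {Wp : Perm ℕ} (hW : memSn n Wp) (h1 : Wp ≠ 1) :
    SD.Dw (w0 n) (staircase n * rename (⇑(w0 n)) (SD.S Wp)) = 0 := by
  · have hhom := S_isHomogeneous SD hW
    have hbnd := S_Bnd SD hW
    have hlpos : 0 < permLength Wp := by
      rcases Nat.eq_zero_or_pos (permLength Wp) with h | h
      · exact absurd (eq_one_of_length_zero hW h) h1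
      · exact h
    conv_lhs => rw [(SD.S Wp).as_sum]
    rw [map_sum, Finset.mul_sum, Dw_sum SD (memSn_w0 n)]
    apply Finset.sum_eq_zero
    intro α hα
    have hbj : ∀ j, α j ≤ n - 1 - j := fun j => by
      by_cases hjs : α j = 0
      · rw [hjs]; omega
      · exact hbnd α hα j
    have hne0 : α ≠ 0 := by
      intro h0
      have hdeg := homog_support_degree hhom hα
      rw [h0, map_zero] at hdeg
      omega
    obtain ⟨a, b, hab, hbn, heq⟩ := exists_eq_pair α hbj hne0
    rw [rename_monomial, staircase_eq, monomial_mul, one_mul]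
    exact Dw_w0_monomial_eq SD hab hbn heq _

end SchubertAux

-- ===================== Section H : dual Schuberts, embedding, adjointness =====================
namespace SchubertAux
open Equiv

variable (SD : SchubertData)

/-- The dual Schubert polynomial. -/
def SDdual (n : ℕ) (Wp : Perm ℕ) : MvPolynomial ℕ ℤ :=
  rename (⇑(w0 n)) ((aeval fun i : ℕ => -(X i : MvPolynomial ℕ ℤ)) (SD.S (Wp * w0 n)))

lemma SDdual_expand {n : ℕ} {Wp : Perm ℕ} (hW : memSn n Wp) :
    SDdual SD n Wp = ((-1 : ℤ) ^ permLength (Wp * w0 n))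
      • rename (⇑(w0 n)) (SD.S (Wp * w0 n)) := by
  rw [SDdual, aeval_negX_homog (S_isHomogeneous SD (memSn_mul hW (memSn_w0 n))), map_smul]

lemma Dw_w0_left_factor {n i : ℕ} (hin : i + 1 < n) :
    SD.Dw (w0 n) = SD.D i ∘ SD.Dw (Equiv.swap i (i + 1) * w0 n) := by
  have hj : Equiv.swap i (i + 1) * w0 n = w0 n * Equiv.swap (n - 2 - i) (n - 2 - i + 1) := by
    rw [← w0_swap hin, ← mul_assoc, ← mul_assoc, w0_mul_w0, one_mul]
  have hlsj : permLength (Equiv.swap i (i + 1) * w0 n) + 1 = permLength (w0 n) := by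
    have h1 := length_w0_mul (n := n) (memSn_swap (show (n - 2 - i) + 1 < n by omega))
    rw [← hj, length_swap] at h1
    exact h1
  have hmul := Dw_mul SD (finSupp_swap i)
    (finSupp_mul (finSupp_swap i) (memSn_finSupp (memSn_w0 n))) (by
      rw [← mul_assoc, Equiv.swap_mul_self, one_mul, length_swap]
      omega)
  rw [← mul_assoc, Equiv.swap_mul_self, one_mul] at hmul
  rw [hmul, Dw_swap]

lemma Dw_w0_invariant {n i : ℕ} (hin : i + 1 < n) (g : MvPolynomial ℕ ℤ) :
    rename (⇑(Equiv.swap i (i + 1))) (SD.Dw (w0 n) g) = SD.Dw (w0 n) g := by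
  rw [Dw_w0_left_factor SD hin]
  exact rename_D SD i _

lemma Dw_w0_rename_invariant {n : ℕ} {σ : Perm ℕ} (hσ : memSn n σ)
    (g : MvPolynomial ℕ ℤ) :
    rename (⇑σ) (SD.Dw (w0 n) g) = SD.Dw (w0 n) g := by
  have main : ∀ σ, memSn n σ →
      rename (⇑σ) (SD.Dw (w0 n) g) = SD.Dw (w0 n) g := by
    refine descent_induction (n := n) ?_ ?_
    · rw [Perm.coe_one, rename_id, AlgHom.id_apply]
    · intro w i hwmem hin hlt IH
      rw [rename_perm_mul, Dw_w0_invariant SD hin, IH]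
  exact main σ hσ

lemma adjoint {n i : ℕ} (hin : i + 1 < n) (f g : MvPolynomial ℕ ℤ) :
    SD.Dw (w0 n) (SD.D i f * g) = SD.Dw (w0 n) (f * SD.D i g) := by
  rw [Dw_w0_factor SD hin]
  show SD.Dw _ (SD.D i (SD.D i f * g)) = SD.Dw _ (SD.D i (f * SD.D i g))
  have e1 : SD.D i (SD.D i f * g) = SD.D i f * SD.D i g := by
    rw [D_mul, D_D, rename_D, zero_mul, zero_add]
  have e2 : SD.D i (f * SD.D i g) = SD.D i f * SD.D i g := by
    rw [D_mul, D_D, mul_zero, add_zero]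
  rw [e1, e2]

lemma D_SDdual {n : ℕ} {Wp : Perm ℕ} (hW : memSn n Wp) {i : ℕ} (hin : i + 1 < n) :
    SD.D i (SDdual SD n Wp)
      = if Wp i < Wp (i + 1) then SDdual SD n (Wp * Equiv.swap i (i + 1)) else 0 := by
  have hWw0 : memSn n (Wp * w0 n) := memSn_mul hW (memSn_w0 n)
  have hjn : (n - 2 - i) + 1 < n := by omega
  have hDrw := D_rename_w0 SD hin (SD.S (Wp * w0 n))
  have hDS := D_S SD hWw0 hjn
  have hcond : ((Wp * w0 n) ((n - 2 - i) + 1) < (Wp * w0 n) (n - 2 - i))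
      ↔ (Wp i < Wp (i + 1)) := by
    rw [Perm.mul_apply, Perm.mul_apply, w0_apply_lt (by omega), w0_apply_lt (by omega),
      show n - 1 - (n - 2 - i) = i + 1 by omega,
      show n - 1 - ((n - 2 - i) + 1) = i by omega]
  have hgrp : Wp * w0 n * Equiv.swap (n - 2 - i) ((n - 2 - i) + 1)
      = (Wp * Equiv.swap i (i + 1)) * w0 n := by
    have hperm : Equiv.swap i (i + 1) * w0 n
        = w0 n * Equiv.swap (n - 2 - i) ((n - 2 - i) + 1) := by
      rw [← w0_swap hin, ← mul_assoc, ← mul_assoc, w0_mul_w0, one_mul]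
    rw [mul_assoc, ← hperm, ← mul_assoc]
  by_cases hlt : Wp i < Wp (i + 1)
  · rw [if_pos hlt]
    have hcond' : (Wp * w0 n) ((n - 2 - i) + 1) < (Wp * w0 n) (n - 2 - i) :=
      hcond.mpr hlt
    rw [SDdual_expand SD hW, D_smul, hDrw, hDS, if_pos hcond', hgrp]
    have hWs : memSn n (Wp * Equiv.swap i (i + 1)) := memSn_mul hW (memSn_swap hin)
    rw [SDdual_expand SD hWs]
    have h1 := length_mul_w0 hW
    have h2 := length_mul_w0 hWs
    have h3 : permLength (Wp * Equiv.swap i (i + 1)) = permLength Wp + 1 :=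
      length_mul_swap_lt (memSn_finSupp hW) i hlt
    have h4 : permLength (Wp * Equiv.swap i (i + 1)) ≤ permLength (w0 n) :=
      length_le_w0 hWs
    have hm : permLength (Wp * w0 n)
        = permLength ((Wp * Equiv.swap i (i + 1)) * w0 n) + 1 := by omega
    rw [hm, pow_succ, mul_smul, smul_neg, neg_one_smul, neg_neg]
  · rw [if_neg hlt]
    have hcond' : ¬ ((Wp * w0 n) ((n - 2 - i) + 1) < (Wp * w0 n) (n - 2 - i)) :=
      fun hh => hlt (hcond.mp hh)
    rw [SDdual_expand SD hW, D_smul, hDrw, hDS, if_neg hcond', map_zero, neg_zero,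
      smul_zero]

lemma memSn_embed (n : ℕ) (u : Perm (Fin n)) : memSn n (embedPerm n u) := by
  intro i hi
  apply Equiv.Perm.extendDomain_apply_not_subtype
  omega

lemma embed_one (n : ℕ) : embedPerm n 1 = 1 :=
  Equiv.Perm.extendDomain_one _

lemma embed_mul (n : ℕ) (u v : Perm (Fin n)) :
    embedPerm n (u * v) = embedPerm n u * embedPerm n v :=
  (Equiv.Perm.extendDomain_mul _ u v).symm

lemma embed_eq_one {n : ℕ} {u : Perm (Fin n)} (h : embedPerm n u = 1) : u = 1 := by
  apply Equiv.ext
  intro x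
  have h2 := Equiv.Perm.extendDomain_apply_image u Fin.equivSubtype x
  rw [show u.extendDomain Fin.equivSubtype = embedPerm n u from rfl, h, Perm.one_apply] at h2
  have h4 : Fin.equivSubtype x = Fin.equivSubtype (u x) := Subtype.ext h2
  have h5 := Fin.equivSubtype.injective h4
  rw [Perm.one_apply, ← h5]

lemma embed_swap {n i : ℕ} (h : i + 1 < n) :
    embedPerm n (Equiv.swap (⟨i, by omega⟩ : Fin n) (⟨i + 1, h⟩ : Fin n))
      = Equiv.swap i (i + 1) := by
  apply Equiv.ext
  intro x
  by_cases hx : x < n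
  · unfold embedPerm
    rw [Equiv.Perm.extendDomain_apply_subtype _ Fin.equivSubtype hx]
    show ((Equiv.swap (⟨i, by omega⟩ : Fin n) (⟨i + 1, h⟩ : Fin n) (⟨x, hx⟩ : Fin n) : Fin n) : ℕ)
      = Equiv.swap i (i + 1) x
    by_cases h1 : x = i
    · have hA : (⟨x, hx⟩ : Fin n) = ⟨i, by omega⟩ := Fin.ext h1
      rw [hA, Equiv.swap_apply_left, h1, Equiv.swap_apply_left]
    · by_cases h2 : x = i + 1
      · have hB : (⟨x, hx⟩ : Fin n) = ⟨i + 1, h⟩ := Fin.ext h2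
        rw [hB, Equiv.swap_apply_right, h2, Equiv.swap_apply_right]
      · have hxA : (⟨x, hx⟩ : Fin n) ≠ ⟨i, by omega⟩ :=
          fun hh => h1 (congrArg Fin.val hh)
        have hxB : (⟨x, hx⟩ : Fin n) ≠ ⟨i + 1, h⟩ :=
          fun hh => h2 (congrArg Fin.val hh)
        rw [Equiv.swap_apply_of_ne_of_ne hxA hxB,
          Equiv.swap_apply_of_ne_of_ne h1 h2]
  · unfold embedPerm
    rw [Equiv.swap_apply_of_ne_of_ne (show x ≠ i by omega) (show x ≠ i + 1 by omega)]
    exact Equiv.Perm.extendDomain_apply_not_subtype _ Fin.equivSubtype hx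

end SchubertAux

-- ===================== Section I : main decomposition =====================
namespace SchubertAux
open Equiv

variable (SD : SchubertData)

lemma neg_one_pow_sq (N : ℕ) : ((-1 : ℤ) ^ N) * ((-1 : ℤ) ^ N) = 1 := by
  rw [← pow_add]
  exact Even.neg_one_pow ⟨N, rfl⟩

lemma decomposition (n : ℕ) : ∀ d (f : MvPolynomial ℕ ℤ), f.IsHomogeneous d →
    f = ∑ u : Perm (Fin n),
      SD.Dw (w0 n) (f * SDdual SD n (embedPerm n u)) * SD.S (embedPerm n u) := by
  intro d
  induction d using Nat.strong_induction_on with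
  | _ d IH =>
    intro f hf
    rw [← sub_eq_zero]
    set E := f - ∑ u : Perm (Fin n),
      SD.Dw (w0 n) (f * SDdual SD n (embedPerm n u)) * SD.S (embedPerm n u) with hE
    have hDE : ∀ i, i + 1 < n → SD.D i E = SD.D i f - ∑ u : Perm (Fin n),
        SD.Dw (w0 n) (SD.D i f * SDdual SD n (embedPerm n u)) * SD.S (embedPerm n u) := by
      intro i hin
      rw [hE, D_sub, D_sum]
      congr 1
      have hL : ∀ u : Perm (Fin n),
          SD.D i (SD.Dw (w0 n) (f * SDdual SD n (embedPerm n u)) * SD.S (embedPerm n u))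
          = SD.Dw (w0 n) (f * SDdual SD n (embedPerm n u)) *
            (if (embedPerm n u) (i + 1) < (embedPerm n u) i
              then SD.S (embedPerm n u * Equiv.swap i (i + 1)) else 0) := by
        intro u
        rw [D_invariant_mul SD (Dw_w0_invariant SD hin _), D_S SD (memSn_embed n u) hin]
      have hR : ∀ u : Perm (Fin n),
          SD.Dw (w0 n) (SD.D i f * SDdual SD n (embedPerm n u)) * SD.S (embedPerm n u)
          = (if (embedPerm n u) i < (embedPerm n u) (i + 1)
              then SD.Dw (w0 n) (f * SDdual SD n (embedPerm n u * Equiv.swap i (i + 1)))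
                * SD.S (embedPerm n u) else 0) := by
        intro u
        rw [adjoint SD hin, D_SDdual SD (memSn_embed n u) hin]
        by_cases hc : (embedPerm n u) i < (embedPerm n u) (i + 1)
        · rw [if_pos hc, if_pos hc]
        · rw [if_neg hc, if_neg hc, mul_zero, Dw_zero SD (memSn_w0 n), zero_mul]
      rw [Finset.sum_congr rfl (fun u _ => hL u),
        Finset.sum_congr rfl (fun u _ => hR u),
        ← Equiv.sum_comp
          (Equiv.mulRight (Equiv.swap (⟨i, by omega⟩ : Fin n) (⟨i + 1, hin⟩ : Fin n)))
          (fun u : Perm (Fin n) => if (embedPerm n u) i < (embedPerm n u) (i + 1)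
            then SD.Dw (w0 n) (f * SDdual SD n (embedPerm n u * Equiv.swap i (i + 1)))
              * SD.S (embedPerm n u) else 0)]
      apply Finset.sum_congr rfl
      intro u _
      have hembed : embedPerm n
          (u * Equiv.swap (⟨i, by omega⟩ : Fin n) (⟨i + 1, hin⟩ : Fin n))
          = embedPerm n u * Equiv.swap i (i + 1) := by
        rw [embed_mul, embed_swap hin]
      show SD.Dw (w0 n) (f * SDdual SD n (embedPerm n u)) *
          (if (embedPerm n u) (i + 1) < (embedPerm n u) i
            then SD.S (embedPerm n u * Equiv.swap i (i + 1)) else 0)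
        = (if (embedPerm n (u * Equiv.swap (⟨i, by omega⟩ : Fin n) (⟨i + 1, hin⟩ : Fin n))) i
              < (embedPerm n (u * Equiv.swap (⟨i, by omega⟩ : Fin n) (⟨i + 1, hin⟩ : Fin n))) (i + 1)
            then SD.Dw (w0 n) (f * SDdual SD n
                (embedPerm n (u * Equiv.swap (⟨i, by omega⟩ : Fin n) (⟨i + 1, hin⟩ : Fin n))
                  * Equiv.swap i (i + 1)))
              * SD.S (embedPerm n (u * Equiv.swap (⟨i, by omega⟩ : Fin n) (⟨i + 1, hin⟩ : Fin n)))
            else 0)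
      rw [hembed]
      have hc1 : (embedPerm n u * Equiv.swap i (i + 1)) i = embedPerm n u (i + 1) := by
        rw [Perm.mul_apply, Equiv.swap_apply_left]
      have hc2 : (embedPerm n u * Equiv.swap i (i + 1)) (i + 1) = embedPerm n u i := by
        rw [Perm.mul_apply, Equiv.swap_apply_right]
      have hass : embedPerm n u * Equiv.swap i (i + 1) * Equiv.swap i (i + 1)
          = embedPerm n u := by
        rw [mul_assoc, Equiv.swap_mul_self, mul_one]
      rw [hc1, hc2, hass, mul_ite, mul_zero]
    have hDEzero : ∀ i, i + 1 < n → SD.D i E = 0 := by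
      intro i hin
      rw [hDE i hin]
      rcases Nat.eq_zero_or_pos d with hd0 | hd0
      · subst hd0
        have hDf : SD.D i f = 0 := D_of_invariant SD (rename_of_isHomogeneous_zero hf _)
        rw [hDf]
        simp only [zero_mul, Dw_zero SD (memSn_w0 n), Finset.sum_const_zero, sub_zero]
      · have hIH := IH (d - 1) (by omega) (SD.D i f) (D_isHomogeneous SD i hf)
        rw [← hIH, sub_self]
    have hEinv : ∀ i, i + 1 < n → rename (⇑(Equiv.swap i (i + 1))) E = E :=
      fun i hin => invariant_of_D_eq_zero SD (hDEzero i hin)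
    have hSd1 : SDdual SD n (embedPerm n 1)
        = ((-1 : ℤ) ^ Ndelta n) • rename (⇑(w0 n)) (staircase n) := by
      rw [embed_one, SDdual, one_mul, S_w0,
        aeval_negX_homog (staircase_isHomogeneous n), map_smul]
    have hstep3 : ∀ g : MvPolynomial ℕ ℤ,
        (∀ i, i + 1 < n → rename (⇑(Equiv.swap i (i + 1))) g = g) →
        SD.Dw (w0 n) (g * SDdual SD n (embedPerm n 1)) = g := by
      intro g hg
      rw [hSd1, mul_smul_comm, Dw_smul SD (memSn_w0 n),
        Dw_invariant_mul SD (memSn_w0 n) hg, Dw_w0_rename SD (memSn_w0 n),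
        Dw_w0_staircase SD n, ← Ndelta_eq_length SD n, mul_smul_comm, mul_one,
        smul_smul, neg_one_pow_sq, one_smul]
    have hker : ∀ u : Perm (Fin n),
        SD.Dw (w0 n) (SD.S (embedPerm n u) * SDdual SD n (embedPerm n 1))
        = if u = 1 then 1 else 0 := by
      intro u
      have hU : memSn n (embedPerm n u) := memSn_embed n u
      have hrw : SD.S (embedPerm n u) * rename (⇑(w0 n)) (staircase n)
          = rename (⇑(w0 n))
              (staircase n * rename (⇑(w0 n)) (SD.S (embedPerm n u))) := by
        rw [map_mul, rename_invol (w0_mul_w0 n), mul_comm]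
      rw [hSd1, mul_smul_comm, Dw_smul SD (memSn_w0 n), hrw,
        Dw_w0_rename SD (memSn_w0 n)]
      by_cases hu : u = 1
      · subst hu
        rw [embed_one, kernel_one SD n, if_pos rfl, smul_smul, ← Ndelta_eq_length SD n,
          neg_one_pow_sq, one_smul]
      · rw [kernel_ne SD hU (fun hh => hu (embed_eq_one hh)), if_neg hu, smul_zero,
          smul_zero]
    have hzero : SD.Dw (w0 n) (E * SDdual SD n (embedPerm n 1)) = 0 := by
      rw [hE, sub_mul, Dw_sub SD (memSn_w0 n), Finset.sum_mul, Dw_sum SD (memSn_w0 n)]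
      have hterm : ∀ u : Perm (Fin n),
          SD.Dw (w0 n) (SD.Dw (w0 n) (f * SDdual SD n (embedPerm n u))
              * SD.S (embedPerm n u) * SDdual SD n (embedPerm n 1))
          = if u = 1 then SD.Dw (w0 n) (f * SDdual SD n (embedPerm n u)) else 0 := by
        intro u
        rw [mul_assoc,
          Dw_invariant_mul SD (memSn_w0 n) (fun i hin => Dw_w0_invariant SD hin _),
          hker u, mul_ite, mul_one, mul_zero]
      rw [Finset.sum_congr rfl (fun u _ => hterm u),
        Finset.sum_ite_eq' Finset.univ (1 : Perm (Fin n))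
          (fun u => SD.Dw (w0 n) (f * SDdual SD n (embedPerm n u))),
        if_pos (Finset.mem_univ _)]
      exact sub_self _
    have hfinal := hstep3 E hEinv
    rw [hzero] at hfinal
    exact hfinal.symm

end SchubertAux



open SchubertAux Equiv in
/-- every homogeneous `h ∈ I_n = ⟨e_1, …, e_n⟩` decomposes as
`h = ∑_{w ∈ S_n} ⟨h, 𝔖^w⟩ 𝔖_w`, where `⟨f, g⟩ = ∂_{w₀}(fg)`, the dual Schubert polynomial
is `𝔖^w(X) = w₀ 𝔖_{w w₀}(-X)`, and each coefficient `⟨h, 𝔖^w⟩` is a symmetric polynomial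
lying in `Λ_n ∩ I_n`. -/
theorem homogeneous_In_schubert_decomposition (SD : SchubertData) (n d : ℕ)
    (h : MvPolynomial ℕ ℤ) (hhom : h.IsHomogeneous d) (hmem : h ∈ In n) :
    let Sdual : Equiv.Perm (Fin n) → MvPolynomial ℕ ℤ := fun u =>
      rename (⇑(w0 n)) ((aeval fun i : ℕ => -(X i : MvPolynomial ℕ ℤ))
        (SD.S (embedPerm n u * w0 n)))
    let pairing : Equiv.Perm (Fin n) → MvPolynomial ℕ ℤ := fun u =>
      SD.Dw (w0 n) (h * Sdual u)
    (h = ∑ u : Equiv.Perm (Fin n), pairing u * SD.S (embedPerm n u)) ∧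
    ∀ u : Equiv.Perm (Fin n),
      (∀ σ : Equiv.Perm ℕ, memSn n σ → rename (⇑σ) (pairing u) = pairing u) ∧
      pairing u ∈ In n := by
  intro Sdual pairing
  constructor
  · exact decomposition SD n d h hhom
  · intro u
    constructor
    · intro σ hσ
      exact Dw_w0_rename_invariant SD hσ _
    · exact Dw_mem_In SD (memSn_w0 n) (Ideal.mul_mem_right _ _ hmem)
end
end

section
/- Monk's formula: for the simple transposition $s_k \in S_n$ and any $w \in S_\infty$, $\mathfrak{S}_{s_k}\cdot \mathfrak{S}_w = \sum_t \mathfrak{S}_{wt}$ in $\mathbb{Z}[X_1,X_2,\ldots]$, summed over all transpositions $t = (i,j)$ with $i \le k < j$ and $l(wt) = l(w)+1$. Here $\mathfrak{S}_{s_k} = X_1 + \cdots + X_k$. -/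
open MvPolynomial Finset

noncomputable section

namespace Monk
open Equiv

/-- adjacent swap -/
abbrev sw (i : ℕ) : Equiv.Perm ℕ := Equiv.swap i (i+1)

lemma swap_app (i j a : ℕ) : Equiv.swap i j a = if a = i then j else if a = j then i else a :=
  Equiv.swap_apply_def i j a

lemma memSn_mono {n n' : ℕ} (h : n ≤ n') {w : Equiv.Perm ℕ} (hw : memSn n w) : memSn n' w :=
  fun i hi => hw i (h.trans hi)

lemma memSn_one (n : ℕ) : memSn n 1 := fun _ _ => rfl

lemma memSn_mul {n : ℕ} {u v : Equiv.Perm ℕ} (hu : memSn n u) (hv : memSn n v) :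
    memSn n (u * v) := by
  intro i hi
  simp [Equiv.Perm.mul_apply, hv i hi, hu i hi]

lemma memSn_swap {n i j : ℕ} (hi : i < n) (hj : j < n) : memSn n (Equiv.swap i j) := by
  intro a ha
  rw [swap_app]
  split_ifs <;> omega

lemma memSn_apply_lt {n : ℕ} {w : Equiv.Perm ℕ} (hw : memSn n w) {i : ℕ} (hi : i < n) :
    w i < n := by
  by_contra h
  push_neg at h
  have h2 : w (w i) = w i := hw _ h
  have := w.injective h2
  omega

lemma memSn_inv {n : ℕ} {w : Equiv.Perm ℕ} (hw : memSn n w) : memSn n w⁻¹ := by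
  intro i hi
  have := hw i hi
  nth_rewrite 1 [← this]
  exact w.symm_apply_apply i

lemma memSn_w0 (n : ℕ) : memSn n (w0 n) := by
  intro i hi
  show (if i < n then n - 1 - i else i) = i
  rw [if_neg (by omega)]

lemma w0_app (n i : ℕ) : w0 n i = if i < n then n - 1 - i else i := rfl

lemma w0_mul_self (n : ℕ) : w0 n * w0 n = 1 := by
  ext i
  simp only [Equiv.Perm.mul_apply, w0_app, Equiv.Perm.one_apply]
  split_ifs <;> omega

lemma w0_inv (n : ℕ) : (w0 n)⁻¹ = w0 n := by
  rw [eq_comm, eq_inv_iff_mul_eq_one, w0_mul_self]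

/-- inversion finset -/
def invF (n : ℕ) (w : Equiv.Perm ℕ) : Finset (ℕ × ℕ) :=
  (range n ×ˢ range n).filter fun p => p.1 < p.2 ∧ w p.2 < w p.1

lemma mem_invF {n : ℕ} {w : Equiv.Perm ℕ} (hw : memSn n w) (p : ℕ × ℕ) :
    p ∈ invF n w ↔ p.1 < p.2 ∧ w p.2 < w p.1 := by
  simp only [invF, mem_filter, mem_product, mem_range]
  constructor
  · tauto
  · rintro ⟨h1, h2⟩
    refine ⟨⟨?_, ?_⟩, h1, h2⟩ <;> by_contra h <;> push_neg at h
    · have := hw _ h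
      have h3 : p.2 ≥ n := by omega
      have := hw _ h3
      omega
    · have := hw _ h
      rcases lt_or_ge p.1 n with h4 | h4
      · have := memSn_apply_lt hw h4
        omega
      · have := hw _ h4
        omega

lemma permLength_eq {n : ℕ} {w : Equiv.Perm ℕ} (hw : memSn n w) :
    permLength w = (invF n w).card := by
  have hset : {p : ℕ × ℕ | p.1 < p.2 ∧ w p.2 < w p.1} = ↑(invF n w) := by
    ext p
    simp only [Set.mem_setOf_eq, Finset.coe_sort_coe, Finset.mem_coe, mem_invF hw]
  rw [permLength]
  rw [show {p : ℕ × ℕ // p.1 < p.2 ∧ w p.2 < w p.1} = ↥{p : ℕ × ℕ | p.1 < p.2 ∧ w p.2 < w p.1} from rfl]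
  rw [Nat.card_coe_set_eq, hset, Set.ncard_coe_finset]

lemma permLength_le {n : ℕ} {w : Equiv.Perm ℕ} (hw : memSn n w) : permLength w ≤ n * n := by
  rw [permLength_eq hw]
  calc (invF n w).card ≤ (range n ×ˢ range n).card := Finset.card_filter_le _ _
    _ = n * n := by simp

lemma permLength_one : permLength (1 : Equiv.Perm ℕ) = 0 := by
  rw [permLength_eq (memSn_one 0)]
  simp [invF]

end Monk

namespace Monk
open Equiv

lemma sw_lt {i a b : ℕ} (hab : a < b) (hne : ¬(a = i ∧ b = i + 1)) :
    sw i a < sw i b := by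
  simp only [sw, swap_app]
  split_ifs <;> omega

lemma invF_mul_sw {n i : ℕ} {w : Equiv.Perm ℕ} (hw : memSn n w) (hi : i + 1 < n)
    (ha : w i < w (i+1)) :
    invF n (w * sw i) =
      insert (i, i+1) ((invF n w).image (fun p => (sw i p.1, sw i p.2))) := by
  have hws : memSn n (w * sw i) := memSn_mul hw (memSn_swap (by omega) hi)
  ext p
  rw [mem_invF hws]
  simp only [Finset.mem_insert, Finset.mem_image]
  constructor
  · rintro ⟨h1, h2⟩
    by_cases hp : p = (i, i+1)
    · left; exact hp
    · right
      refine ⟨(sw i p.1, sw i p.2), ?_, ?_⟩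
      · rw [mem_invF hw]
        have hpp : ¬(p.1 = i ∧ p.2 = i + 1) := by
          intro hc; exact hp (Prod.ext hc.1 hc.2)
        refine ⟨sw_lt h1 hpp, ?_⟩
        simpa only [Equiv.Perm.mul_apply] using h2
      · simp [sw]
  · rintro (hp | ⟨q, hq, hqp⟩)
    · subst hp
      refine ⟨by omega, ?_⟩
      simp only [Equiv.Perm.mul_apply, sw, Equiv.swap_apply_left, Equiv.swap_apply_right]
      exact ha
    · rw [mem_invF hw] at hq
      subst hqp
      constructor
      · apply sw_lt hq.1
        rintro ⟨h1, h2⟩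
        rw [h1, h2] at hq
        have := hq.2
        omega
      · simp only [Equiv.Perm.mul_apply, sw, Equiv.swap_apply_self]
        exact hq.2

lemma len_ascent' {n i : ℕ} {w : Equiv.Perm ℕ} (hw : memSn n w) (hi : i + 1 < n)
    (ha : w i < w (i+1)) :
    permLength (w * sw i) = permLength w + 1 := by
  have hws : memSn n (w * sw i) := memSn_mul hw (memSn_swap (by omega) hi)
  rw [permLength_eq hws, permLength_eq hw, invF_mul_sw hw hi ha]
  rw [Finset.card_insert_of_notMem, Finset.card_image_of_injective]
  · intro p q hpq
    simp only [Prod.mk.injEq] at hpq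
    exact Prod.ext ((sw i).injective hpq.1) ((sw i).injective hpq.2)
  · simp only [Finset.mem_image]
    rintro ⟨q, hq, hqe⟩
    rw [mem_invF hw] at hq
    simp only [Prod.mk.injEq] at hqe
    have h1 : q.1 = i + 1 := by
      have := congrArg (fun x => sw i x) hqe.1
      simpa [sw, Equiv.swap_apply_self, Equiv.swap_apply_left] using this
    have h2 : q.2 = i := by
      have := congrArg (fun x => sw i x) hqe.2
      simpa [sw, Equiv.swap_apply_self, Equiv.swap_apply_right] using this
    omega

section FS
variable {w : Equiv.Perm ℕ} (hf : finSupp w)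

lemma finSupp_bound {i : ℕ} (hf : finSupp w) : ∃ n, memSn n w ∧ i + 1 < n := by
  obtain ⟨n, hn⟩ := hf
  exact ⟨max n (i+2), memSn_mono (le_max_left _ _) hn, by omega⟩

lemma len_ascent {i : ℕ} (hf : finSupp w) (ha : w i < w (i+1)) :
    permLength (w * sw i) = permLength w + 1 := by
  obtain ⟨n, hn, hi⟩ := finSupp_bound (i := i) hf
  exact len_ascent' hn hi ha

lemma len_descent {i : ℕ} (hf : finSupp w) (ha : w (i+1) < w i) :
    permLength (w * sw i) + 1 = permLength w := by
  have key : (w * sw i) i < (w * sw i) (i+1) := by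
    simp only [Equiv.Perm.mul_apply, sw, Equiv.swap_apply_left, Equiv.swap_apply_right]
    exact ha
  obtain ⟨n, hn⟩ := hf
  have hfs : finSupp (w * sw i) :=
    ⟨max n (i+2), memSn_mul (memSn_mono (le_max_left _ _) hn) (memSn_swap (by omega) (by omega))⟩
  have := len_ascent hfs key
  rw [mul_assoc, Equiv.swap_mul_self, mul_one] at this
  omega

lemma finSupp_mul {u v : Equiv.Perm ℕ} (hu : finSupp u) (hv : finSupp v) : finSupp (u * v) := by
  obtain ⟨n, hn⟩ := hu; obtain ⟨m, hm⟩ := hv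
  exact ⟨max n m, memSn_mul (memSn_mono (le_max_left _ _) hn) (memSn_mono (le_max_right _ _) hm)⟩

lemma finSupp_swap (i j : ℕ) : finSupp (Equiv.swap i j) :=
  ⟨max i j + 1, memSn_swap (by omega) (by omega)⟩

lemma finSupp_w0 (n : ℕ) : finSupp (w0 n) := ⟨n, memSn_w0 n⟩

lemma finSupp_one : finSupp (1 : Equiv.Perm ℕ) := ⟨0, memSn_one 0⟩

lemma finSupp_inv (hf : finSupp w) : finSupp w⁻¹ := by
  obtain ⟨n, hn⟩ := hf; exact ⟨n, memSn_inv hn⟩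

lemma len_pm {i : ℕ} (hf : finSupp w) :
    permLength (w * sw i) = permLength w + 1 ∨ permLength (w * sw i) + 1 = permLength w := by
  rcases lt_trichotomy (w i) (w (i+1)) with h | h | h
  · exact Or.inl (len_ascent hf h)
  · exact absurd (w.injective h) (by omega)
  · exact Or.inr (len_descent hf h)

end FS
end Monk

namespace Monk
open Equiv

/-- number of intermediate values -/
def Nmid (w : Equiv.Perm ℕ) (i j : ℕ) : ℕ :=
  ((Finset.Ioo i j).filter (fun a => w i < w a ∧ w a < w j)).card

lemma LT_aux : ∀ (d : ℕ) (w : Equiv.Perm ℕ), finSupp w → ∀ i j, j = i + d + 1 → w i < w j →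
    permLength (w * Equiv.swap i j) = permLength w + 1 + 2 * Nmid w i j := by
  intro d
  induction d with
  | zero =>
    intro w hf i j hj hv
    subst hj
    have h1 : Nmid w i (i + 0 + 1) = 0 := by
      rw [Nmid]
      convert Finset.card_empty
      rw [Finset.filter_eq_empty_iff]
      intro a ha
      simp at ha; omega
    rw [h1]
    have := len_ascent hf (i := i) (by simpa using hv)
    simpa [sw] using this
  | succ d IH =>
    intro w hf i j hj hv
    set b := i + d + 1 with hb
    have hjb : j = b + 1 := by omega
    subst hjb
    have hib : i < b := by omega
    have hconj : Equiv.swap i (b+1) = sw b * Equiv.swap i b * sw b := by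
      ext x
      simp only [sw, Equiv.Perm.mul_apply, swap_app]
      split_ifs <;> omega
    set w1 := w * sw b with hw1
    have hfw1 : finSupp w1 := finSupp_mul hf (finSupp_swap _ _)
    have hw1i : w1 i = w i := by
      simp only [hw1, Equiv.Perm.mul_apply, sw]
      rw [Equiv.swap_apply_of_ne_of_ne (by omega) (by omega)]
    have hw1b : w1 b = w (b+1) := by
      simp only [hw1, Equiv.Perm.mul_apply, sw, Equiv.swap_apply_left]
    have hw1b1 : w1 (b+1) = w b := by
      simp only [hw1, Equiv.Perm.mul_apply, sw, Equiv.swap_apply_right]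
    have hw1a : ∀ a, i < a → a < b → w1 a = w a := by
      intro a h1 h2
      simp only [hw1, Equiv.Perm.mul_apply, sw]
      rw [Equiv.swap_apply_of_ne_of_ne (by omega) (by omega)]
    -- the inner count
    have hN1 : Nmid w1 i b =
        ((Finset.Ioo i b).filter (fun a => w i < w a ∧ w a < w (b+1))).card := by
      rw [Nmid]
      congr 1
      apply Finset.filter_congr
      intro a ha
      simp only [Finset.mem_Ioo] at ha
      rw [hw1a a ha.1 ha.2, hw1i, hw1b]
    have hIoo : Finset.Ioo i (b+1) = insert b (Finset.Ioo i b) := by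
      ext a; simp only [Finset.mem_Ioo, Finset.mem_insert]; omega
    have hNsplit : Nmid w i (b+1) =
        (if w i < w b ∧ w b < w (b+1) then 1 else 0) + Nmid w1 i b := by
      rw [Nmid, hIoo, Finset.filter_insert, hN1]
      split_ifs with h
      · rw [Finset.card_insert_of_notMem (by simp)]
        omega
      · simp
    -- IH applied to w1 on (i, b)
    have hIH := IH w1 hfw1 i b (by omega) (by rw [hw1i, hw1b]; exact hv)
    -- decomposition
    have hdec : w * Equiv.swap i (b+1) = (w1 * Equiv.swap i b) * sw b := by
      rw [hconj, hw1]
      group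
    set W2 := w1 * Equiv.swap i b with hW2
    have hfW2 : finSupp W2 := finSupp_mul hfw1 (finSupp_swap _ _)
    have hW2b : W2 b = w i := by
      simp only [hW2, Equiv.Perm.mul_apply, Equiv.swap_apply_right, hw1i]
    have hW2b1 : W2 (b+1) = w b := by
      simp only [hW2, Equiv.Perm.mul_apply]
      rw [Equiv.swap_apply_of_ne_of_ne (by omega) (by omega), hw1b1]
    have hinj1 : w b ≠ w i := fun h => by have := w.injective h; omega
    have hinj2 : w b ≠ w (b+1) := fun h => by have := w.injective h; omega
    rcases lt_or_gt_of_ne hinj1 with hA | hA'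
    · -- w b < w i : w1 ascent (w b < w (b+1)), final descent
      have hl1 : permLength w1 = permLength w + 1 := len_ascent hf (by omega)
      have hfin : permLength (W2 * sw b) + 1 = permLength W2 := by
        apply len_descent hfW2
        rw [hW2b, hW2b1]; omega
      rw [hdec]
      rw [hNsplit, if_neg (by omega)]
      omega
    · rcases lt_or_gt_of_ne hinj2 with hC | hB
      · -- w i < w b < w (b+1) = w j
        have hl1 : permLength w1 = permLength w + 1 := len_ascent hf (by omega)
        have hfin : permLength (W2 * sw b) = permLength W2 + 1 := by
          apply len_ascent hfW2
          rw [hW2b, hW2b1]; omega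
        rw [hdec]
        rw [hNsplit, if_pos (by omega)]
        omega
      · -- w (b+1) < w b
        have hl1 : permLength w1 + 1 = permLength w := len_descent hf (by omega)
        have hfin : permLength (W2 * sw b) = permLength W2 + 1 := by
          apply len_ascent hfW2
          rw [hW2b, hW2b1]; omega
        rw [hdec]
        rw [hNsplit, if_neg (by omega)]
        omega

lemma LT {w : Equiv.Perm ℕ} (hf : finSupp w) {i j : ℕ} (hij : i < j) (hv : w i < w j) :
    permLength (w * Equiv.swap i j) = permLength w + 1 + 2 * Nmid w i j :=
  LT_aux (j - i - 1) w hf i j (by omega) hv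

lemma LT_desc {w : Equiv.Perm ℕ} (hf : finSupp w) {i j : ℕ} (hij : i < j) (hv : w j < w i) :
    permLength (w * Equiv.swap i j) < permLength w := by
  set w' := w * Equiv.swap i j with hw'
  have hf' : finSupp w' := finSupp_mul hf (finSupp_swap _ _)
  have h1 : w' i = w j := by simp [hw', Equiv.Perm.mul_apply, Equiv.swap_apply_left]
  have h2 : w' j = w i := by simp [hw', Equiv.Perm.mul_apply, Equiv.swap_apply_right]
  have := LT hf' hij (by rw [h1, h2]; exact hv)
  have hback : w' * Equiv.swap i j = w := by
    rw [hw', mul_assoc, Equiv.swap_mul_self, mul_one]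
  rw [hback] at this
  omega

/-- the cover characterization -/
lemma cover_iff {w : Equiv.Perm ℕ} (hf : finSupp w) {i j : ℕ} (hij : i < j) :
    permLength (w * Equiv.swap i j) = permLength w + 1 ↔
      (w i < w j ∧ ∀ a, i < a → a < j → ¬(w i < w a ∧ w a < w j)) := by
  constructor
  · intro h
    have hvij : w i < w j := by
      rcases lt_trichotomy (w i) (w j) with hc | hc | hc
      · exact hc
      · exact absurd (w.injective hc) (by omega)
      · exact absurd h (by have := LT_desc hf hij hc; omega)
    refine ⟨hvij, ?_⟩
    have hLT := LT hf hij hvij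
    have hN : Nmid w i j = 0 := by omega
    intro a ha1 ha2 hcon
    rw [Nmid, Finset.card_eq_zero, Finset.filter_eq_empty_iff] at hN
    exact hN (by simp only [Finset.mem_Ioo]; omega) hcon
  · rintro ⟨hvij, hno⟩
    have hLT := LT hf hij hvij
    have hN : Nmid w i j = 0 := by
      rw [Nmid, Finset.card_eq_zero, Finset.filter_eq_empty_iff]
      intro a ha
      simp only [Finset.mem_Ioo] at ha
      exact hno a ha.1 ha.2
    omega

/-- covers stay within the support window -/
lemma cover_le {n : ℕ} {w : Equiv.Perm ℕ} (hw : memSn n w) {i j : ℕ} (hij : i < j)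
    (hi : i < n) (hcov : permLength (w * Equiv.swap i j) = permLength w + 1) : j ≤ n := by
  by_contra h
  push_neg at h
  rw [cover_iff ⟨n, hw⟩ hij] at hcov
  refine hcov.2 n (by omega) (by omega) ?_
  rw [hw n (le_refl n), hw j (by omega)]
  exact ⟨memSn_apply_lt hw hi, by omega⟩

end Monk

namespace Monk
open Equiv

lemma len_inv {n : ℕ} {w : Equiv.Perm ℕ} (hw : memSn n w) :
    permLength w⁻¹ = permLength w := by
  rw [permLength_eq (memSn_inv hw), permLength_eq hw]
  apply Finset.card_bij' (fun p _ => ((w⁻¹ p.2 : ℕ), (w⁻¹ p.1 : ℕ)))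
    (fun p _ => ((w p.2 : ℕ), (w p.1 : ℕ)))
  · intro p hp
    rw [mem_invF (memSn_inv hw)] at hp
    rw [mem_invF hw]
    refine ⟨hp.2, ?_⟩
    simp only [Equiv.Perm.coe_inv, Equiv.apply_symm_apply]
    exact hp.1
  · intro p hp
    rw [mem_invF hw] at hp
    rw [mem_invF (memSn_inv hw)]
    refine ⟨hp.2, ?_⟩
    simp only [Equiv.Perm.coe_inv, Equiv.symm_apply_apply]
    exact hp.1
  · intro p hp
    simp
  · intro p hp
    simp

lemma len_inv' {w : Equiv.Perm ℕ} (hf : finSupp w) : permLength w⁻¹ = permLength w := by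
  obtain ⟨n, hn⟩ := hf; exact len_inv hn

/-- left multiplication ascent: `l(s_r v) = l v + 1 ↔ v⁻¹ r < v⁻¹ (r+1)` -/
lemma len_left_ascent {v : Equiv.Perm ℕ} (hf : finSupp v) {r : ℕ}
    (h : (v⁻¹ r : ℕ) < v⁻¹ (r+1)) : permLength (sw r * v) = permLength v + 1 := by
  have h1 : (sw r * v)⁻¹ = v⁻¹ * sw r := by
    rw [mul_inv_rev, Equiv.swap_inv]
  have h2 : permLength (v⁻¹ * sw r) = permLength v⁻¹ + 1 := len_ascent (finSupp_inv hf) h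
  have h3 : finSupp (sw r * v) := finSupp_mul (finSupp_swap _ _) hf
  rw [← len_inv' h3, h1, h2, len_inv' hf]

lemma len_left_descent {v : Equiv.Perm ℕ} (hf : finSupp v) {r : ℕ}
    (h : (v⁻¹ (r+1) : ℕ) < v⁻¹ r) : permLength (sw r * v) + 1 = permLength v := by
  have h1 : (sw r * v)⁻¹ = v⁻¹ * sw r := by
    rw [mul_inv_rev, Equiv.swap_inv]
  have h2 : permLength (v⁻¹ * sw r) + 1 = permLength v⁻¹ := len_descent (finSupp_inv hf) h
  have h3 : finSupp (sw r * v) := finSupp_mul (finSupp_swap _ _) hf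
  rw [← len_inv' h3, h1, h2, len_inv' hf]

/-- a strictly increasing permutation of ℕ is the identity -/
lemma eq_one_of_ascending {v : Equiv.Perm ℕ} (h : ∀ i, v i < v (i+1)) : v = 1 := by
  have hsm : StrictMono v := strictMono_nat_of_lt_succ h
  have key : ∀ i, v i = i := by
    intro i
    induction i using Nat.strong_induction_on with
    | _ i IH =>
      have hj : v (v⁻¹ i) = i := Equiv.apply_symm_apply v i
      rcases lt_trichotomy (v⁻¹ i : ℕ) i with hc | hc | hc
      · rw [IH _ hc] at hj; omega
      · rw [hc] at hj; exact hj
      · have h2 : (v⁻¹ i : ℕ) ≤ v (v⁻¹ i) := hsm.le_apply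
        omega
  ext i
  simp [key i]

lemma exists_descent {v : Equiv.Perm ℕ} (hv : v ≠ 1) : ∃ i, v (i+1) < v i := by
  by_contra h
  push_neg at h
  apply hv
  apply eq_one_of_ascending
  intro i
  rcases lt_or_eq_of_le (h i) with h1 | h1
  · exact h1
  · exact absurd (v.injective h1) (by omega)

/-- if `w ∈ S_n` has no ascent below `n-1` it is `w0 n` -/
lemma eq_w0_of_no_ascent {n : ℕ} {w : Equiv.Perm ℕ} (hw : memSn n w)
    (h : ∀ r, r + 1 < n → w (r+1) < w r) : w = w0 n := by
  have hge : ∀ d i, i + d = n - 1 → d ≤ w i := by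
    intro d
    induction d with
    | zero => omega
    | succ d IH =>
      intro i hi
      have h1 := IH (i+1) (by omega)
      have h2 := h i (by omega)
      omega
  have key : ∀ i, i < n → w i = n - 1 - i := by
    intro i
    induction i with
    | zero =>
      intro h0
      have h1 := hge (n-1) 0 (by omega)
      have h2 := memSn_apply_lt hw h0
      omega
    | succ i IH =>
      intro hi
      have h1 := IH (by omega)
      have h2 := h i (by omega)
      have h3 := hge (n - 1 - (i+1)) (i+1) (by omega)
      omega
  ext i
  rw [w0_app]
  rcases lt_or_ge i n with h1 | h1
  · rw [if_pos h1]; exact key i h1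
  · rw [if_neg (by omega)]; exact hw i h1

lemma exists_ascent_of_ne_w0 {n : ℕ} {w : Equiv.Perm ℕ} (hw : memSn n w) (hne : w ≠ w0 n) :
    ∃ r, r + 1 < n ∧ w r < w (r+1) := by
  by_contra h
  push_neg at h
  apply hne
  apply eq_w0_of_no_ascent hw
  intro r hr
  rcases lt_trichotomy (w (r+1)) (w r) with h1 | h1 | h1
  · exact h1
  · exact absurd (w.injective h1.symm) (by omega)
  · exact absurd h1 (by have := h r hr; omega)

end Monk

namespace Monk
open Equiv MvPolynomial

variable (SD : SchubertData)

lemma Xsub_ne (i : ℕ) : (X i - X (i+1) : MvPolynomial ℕ ℤ) ≠ 0 :=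
  sub_ne_zero.mpr (fun h => by have := MvPolynomial.X_injective h; omega)

lemma Dcancel {i : ℕ} {a b : MvPolynomial ℕ ℤ}
    (h : (X i - X (i+1)) * a = (X i - X (i+1)) * b) : a = b :=
  mul_left_cancel₀ (Xsub_ne i) h

lemma rename_sw_sw (i : ℕ) (f : MvPolynomial ℕ ℤ) :
    rename (⇑(sw i)) (rename (⇑(sw i)) f) = f := by
  rw [rename_rename]
  have : (⇑(sw i)) ∘ (⇑(sw i)) = id := by
    funext x; simp [sw, Equiv.swap_apply_self]
  rw [this, rename_id_apply]

lemma rename_sw_X (i m : ℕ) : rename (⇑(sw i)) (X m : MvPolynomial ℕ ℤ) = X (sw i m) := by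
  rw [rename_X]

lemma D_zero (i : ℕ) : SD.D i 0 = 0 := by
  apply Dcancel (i := i)
  rw [SD.hD]
  simp

lemma D_add (i : ℕ) (f g : MvPolynomial ℕ ℤ) : SD.D i (f + g) = SD.D i f + SD.D i g := by
  apply Dcancel (i := i)
  rw [SD.hD, mul_add, SD.hD, SD.hD, map_add]
  ring

lemma D_sub (i : ℕ) (f g : MvPolynomial ℕ ℤ) : SD.D i (f - g) = SD.D i f - SD.D i g := by
  apply Dcancel (i := i)
  rw [SD.hD, mul_sub, SD.hD, SD.hD, map_sub]
  ring

lemma D_sum {α : Type*} (i : ℕ) (s : Finset α) (f : α → MvPolynomial ℕ ℤ) :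
    SD.D i (∑ a ∈ s, f a) = ∑ a ∈ s, SD.D i (f a) := by
  induction s using Finset.cons_induction with
  | empty => simp [D_zero]
  | cons a s ha IH =>
    rw [Finset.sum_cons, Finset.sum_cons, D_add, IH]

lemma D_leibniz (i : ℕ) (f g : MvPolynomial ℕ ℤ) :
    SD.D i (f * g) = SD.D i f * g + rename (⇑(sw i)) f * SD.D i g := by
  apply Dcancel (i := i)
  rw [SD.hD, mul_add, ← mul_assoc, ← mul_assoc, SD.hD]
  rw [mul_comm (X i - X (i+1)) (rename (⇑(sw i)) f), mul_assoc, SD.hD, map_mul]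
  ring

lemma D_of_invariant {i : ℕ} {f : MvPolynomial ℕ ℤ} (h : rename (⇑(sw i)) f = f) :
    SD.D i f = 0 := by
  apply Dcancel (i := i)
  rw [SD.hD, h]
  ring

lemma rename_sw_D (i : ℕ) (f : MvPolynomial ℕ ℤ) :
    rename (⇑(sw i)) (SD.D i f) = SD.D i f := by
  have key := congrArg (rename (⇑(sw i))) (SD.hD i f)
  rw [map_mul, map_sub, map_sub, rename_sw_X, rename_sw_X, rename_sw_sw] at key
  have hsw1 : sw i i = i + 1 := Equiv.swap_apply_left _ _
  have hsw2 : sw i (i+1) = i := Equiv.swap_apply_right _ _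
  rw [hsw1, hsw2] at key
  -- key : (X (i+1) - X i) * rename (sw i) (D i f) = rename (sw i) f - f
  have key2 : (X i - X (i+1) : MvPolynomial ℕ ℤ) * rename (⇑(sw i)) (SD.D i f)
      = f - rename (⇑(sw i)) f := by
    have : (X i - X (i+1) : MvPolynomial ℕ ℤ) = -(X (i+1) - X i) := by ring
    rw [this, neg_mul, key]
    ring
  apply Dcancel (i := i)
  rw [key2, SD.hD]

lemma DD (i : ℕ) (f : MvPolynomial ℕ ℤ) : SD.D i (SD.D i f) = 0 :=
  D_of_invariant SD (rename_sw_D SD i f)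

lemma D_X_of_ne {i m : ℕ} (h1 : m ≠ i) (h2 : m ≠ i + 1) : SD.D i (X m) = 0 := by
  apply D_of_invariant
  rw [rename_sw_X]
  congr 1
  exact Equiv.swap_apply_of_ne_of_ne h1 h2

lemma D_X_self (i : ℕ) : SD.D i (X i) = 1 := by
  apply Dcancel (i := i)
  rw [SD.hD, rename_sw_X]
  have : sw i i = i + 1 := Equiv.swap_apply_left _ _
  rw [this, mul_one]

lemma D_X_succ (i : ℕ) : SD.D i (X (i+1)) = -1 := by
  apply Dcancel (i := i)
  rw [SD.hD, rename_sw_X]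
  have : sw i (i+1) = i := Equiv.swap_apply_right _ _
  rw [this]
  ring

end Monk

namespace Monk
open Equiv MvPolynomial

variable (SD : SchubertData)

lemma len_left_pm {x : Equiv.Perm ℕ} (hf : finSupp x) (r : ℕ) :
    permLength (sw r * x) = permLength x + 1 ∨ permLength (sw r * x) + 1 = permLength x := by
  have h1 : (sw r * x)⁻¹ = x⁻¹ * sw r := by rw [mul_inv_rev, Equiv.swap_inv]
  have h3 : finSupp (sw r * x) := finSupp_mul (finSupp_swap _ _) hf
  have := len_pm (finSupp_inv hf) (i := r)
  rw [← h1, len_inv' h3, len_inv' hf] at this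
  exact this

lemma Dw_cons_aux : ∀ (L : ℕ) (v : Equiv.Perm ℕ), finSupp v → permLength v ≤ L →
    ∀ r, permLength (sw r * v) = permLength v + 1 →
      SD.Dw (sw r * v) = SD.D r ∘ SD.Dw v := by
  intro L
  induction L with
  | zero =>
    intro v hf hL r hr
    by_cases hv1 : v = 1
    · subst hv1
      rw [mul_one]
      have hstep := SD.Dw_step 1 r (by rw [one_mul, permLength_one]; rw [mul_one, permLength_one] at hr; exact hr)
      rw [one_mul, SD.Dw_one] at hstep
      rw [hstep, SD.Dw_one]
      rfl
    · obtain ⟨i, hdesc⟩ := exists_descent hv1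
      have := len_descent hf hdesc
      omega
  | succ L IH =>
    intro v hf hL r hr
    by_cases hv1 : v = 1
    · subst hv1
      rw [mul_one]
      have hstep := SD.Dw_step 1 r (by rw [one_mul, permLength_one]; rw [mul_one, permLength_one] at hr; exact hr)
      rw [one_mul, SD.Dw_one] at hstep
      rw [hstep, SD.Dw_one]
      rfl
    · obtain ⟨i, hdesc⟩ := exists_descent hv1
      set v' := v * sw i with hv'
      have hlv' : permLength v' + 1 = permLength v := len_descent hf hdesc
      have hfv' : finSupp v' := finSupp_mul hf (finSupp_swap _ _)
      have hv'si : v' * sw i = v := by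
        rw [hv', mul_assoc, Equiv.swap_mul_self, mul_one]
      have hstep1 : SD.Dw v = SD.Dw v' ∘ SD.D i := by
        have h := SD.Dw_step v' i (by rw [hv'si]; omega)
        rw [hv'si] at h
        exact h
      have heq : (sw r * v') * sw i = sw r * v := by rw [mul_assoc, hv'si]
      have hsrv' : permLength (sw r * v') = permLength v' + 1 := by
        have hpm1 := len_pm (w := sw r * v') (finSupp_mul (finSupp_swap _ _) hfv') (i := i)
        rw [heq] at hpm1
        have hpm2 := len_left_pm hfv' r
        omega
      have IH' := IH v' hfv' (by omega) r hsrv'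
      have hfin : permLength ((sw r * v') * sw i) = permLength (sw r * v') + 1 := by
        rw [heq]; omega
      calc SD.Dw (sw r * v) = SD.Dw ((sw r * v') * sw i) := by rw [heq]
        _ = SD.Dw (sw r * v') ∘ SD.D i := SD.Dw_step _ i hfin
        _ = (SD.D r ∘ SD.Dw v') ∘ SD.D i := by rw [IH']
        _ = SD.D r ∘ (SD.Dw v' ∘ SD.D i) := rfl
        _ = SD.D r ∘ SD.Dw v := by rw [← hstep1]

lemma Dw_cons {v : Equiv.Perm ℕ} (hf : finSupp v) {r : ℕ}
    (h : permLength (sw r * v) = permLength v + 1) :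
    SD.Dw (sw r * v) = SD.D r ∘ SD.Dw v :=
  Dw_cons_aux SD (permLength v) v hf le_rfl r h

lemma w0_zero : w0 0 = 1 := by
  ext i
  rw [w0_app, if_neg (by omega)]
  rfl

lemma S_one : SD.S 1 = 1 := by
  have h := SD.hS 0 1 (memSn_one 0)
  rw [w0_zero] at h
  simp only [inv_one, one_mul] at h
  rw [h, SD.Dw_one]
  simp [staircase]

lemma S_w0 (n : ℕ) : SD.S (w0 n) = staircase n := by
  have h := SD.hS n (w0 n) (memSn_w0 n)
  rw [inv_mul_cancel, SD.Dw_one] at h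
  exact h

section Srec
variable {u : Equiv.Perm ℕ} {r : ℕ}

lemma D_S_descent (hu : finSupp u) (hdesc : u (r+1) < u r) :
    SD.D r (SD.S u) = SD.S (u * sw r) := by
  obtain ⟨n0, hn0⟩ := hu
  set n := max n0 (r+2) with hn
  have hun : memSn n u := memSn_mono (le_max_left _ _) hn0
  have hrn : r + 1 < n := by omega
  set v := u⁻¹ * w0 n with hv
  have hfv : finSupp v := finSupp_mul (finSupp_inv ⟨n, hun⟩) (finSupp_w0 n)
  have hvinv : v⁻¹ = w0 n * u := by rw [hv, mul_inv_rev, inv_inv, w0_inv]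
  have hur : u r < n := memSn_apply_lt hun (by omega)
  have hur1 : u (r+1) < n := memSn_apply_lt hun (by omega)
  have hw1 : (v⁻¹ : Equiv.Perm ℕ) r = n - 1 - u r := by
    rw [hvinv]
    simp only [Equiv.Perm.mul_apply]
    rw [w0_app, if_pos hur]
  have hw2 : (v⁻¹ : Equiv.Perm ℕ) (r+1) = n - 1 - u (r+1) := by
    rw [hvinv]
    simp only [Equiv.Perm.mul_apply]
    rw [w0_app, if_pos hur1]
  have hasc : (v⁻¹ : Equiv.Perm ℕ) r < v⁻¹ (r+1) := by rw [hw1, hw2]; omega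
  have hlen : permLength (sw r * v) = permLength v + 1 := len_left_ascent hfv hasc
  have hcons := Dw_cons SD hfv hlen
  have hSu : SD.S u = SD.Dw v (staircase n) := SD.hS n u hun
  have husr : memSn n (u * sw r) := memSn_mul hun (memSn_swap (by omega) hrn)
  have hSusr : SD.S (u * sw r) = SD.Dw ((u * sw r)⁻¹ * w0 n) (staircase n) := SD.hS n _ husr
  have hid : (u * sw r)⁻¹ * w0 n = sw r * v := by
    rw [mul_inv_rev, Equiv.swap_inv, hv, mul_assoc]
  rw [hid, hcons] at hSusr
  rw [hSusr, hSu]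
  rfl

lemma D_S_ascent (hu : finSupp u) (hasc : u r < u (r+1)) :
    SD.D r (SD.S u) = 0 := by
  obtain ⟨n0, hn0⟩ := hu
  set n := max n0 (r+2) with hn
  have hun : memSn n u := memSn_mono (le_max_left _ _) hn0
  have hrn : r + 1 < n := by omega
  set v := u⁻¹ * w0 n with hv
  have hfv : finSupp v := finSupp_mul (finSupp_inv ⟨n, hun⟩) (finSupp_w0 n)
  have hvinv : v⁻¹ = w0 n * u := by rw [hv, mul_inv_rev, inv_inv, w0_inv]
  have hur : u r < n := memSn_apply_lt hun (by omega)
  have hur1 : u (r+1) < n := memSn_apply_lt hun (by omega)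
  have hw1 : (v⁻¹ : Equiv.Perm ℕ) r = n - 1 - u r := by
    rw [hvinv]
    simp only [Equiv.Perm.mul_apply]
    rw [w0_app, if_pos hur]
  have hw2 : (v⁻¹ : Equiv.Perm ℕ) (r+1) = n - 1 - u (r+1) := by
    rw [hvinv]
    simp only [Equiv.Perm.mul_apply]
    rw [w0_app, if_pos hur1]
  have hdesc : (v⁻¹ : Equiv.Perm ℕ) (r+1) < v⁻¹ r := by rw [hw1, hw2]; omega
  have hlen : permLength (sw r * v) + 1 = permLength v := len_left_descent hfv hdesc
  set v2 := sw r * v with hv2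
  have hvv2 : sw r * v2 = v := by
    rw [hv2, ← mul_assoc, Equiv.swap_mul_self, one_mul]
  have hfv2 : finSupp v2 := finSupp_mul (finSupp_swap _ _) hfv
  have hlen2 : permLength (sw r * v2) = permLength v2 + 1 := by rw [hvv2]; omega
  have hcons := Dw_cons SD hfv2 hlen2
  rw [hvv2] at hcons
  have hSu : SD.S u = SD.Dw v (staircase n) := SD.hS n u hun
  rw [hSu, hcons]
  exact DD SD r _

end Srec
end Monk

namespace Monk
open Equiv MvPolynomial

variable (SD : SchubertData)

def mono (f : ℕ → ℕ) (n : ℕ) : MvPolynomial ℕ ℤ := ∏ p ∈ Finset.range n, X p ^ f p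

lemma mono_congr {f g : ℕ → ℕ} {n : ℕ} (h : ∀ p, p < n → f p = g p) :
    mono f n = mono g n := by
  apply Finset.prod_congr rfl
  intro p hp
  rw [h p (Finset.mem_range.mp hp)]

lemma staircase_eq (n : ℕ) : staircase n = mono (fun p => n - 1 - p) n := rfl

lemma rename_sw_mono {i n : ℕ} (hi : i + 1 < n) (f : ℕ → ℕ) :
    rename (⇑(sw i)) (mono f n) = mono (fun p => f (sw i p)) n := by
  rw [mono, map_prod]
  simp only [map_pow, rename_X]
  apply Finset.prod_bij' (fun p _ => sw i p) (fun p _ => sw i p)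
  · intro p hp
    simp only [Finset.mem_range] at hp ⊢
    simp only [sw, swap_app]
    split_ifs <;> omega
  · intro p hp
    simp only [Finset.mem_range] at hp ⊢
    simp only [sw, swap_app]
    split_ifs <;> omega
  · intro p _
    simp [sw, Equiv.swap_apply_self]
  · intro p _
    simp [sw, Equiv.swap_apply_self]
  · intro p _
    simp [sw, Equiv.swap_apply_self]

lemma mono_extract {n : ℕ} (g : ℕ → ℕ) {i : ℕ} (hi : i + 1 < n) :
    mono g n = X i ^ g i * (X (i+1) ^ g (i+1) *
      ∏ p ∈ ((Finset.range n).erase i).erase (i+1), X p ^ g p) := by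
  rw [mono]
  rw [← Finset.mul_prod_erase (Finset.range n) (fun p => X p ^ g p)
    (Finset.mem_range.mpr (by omega : i < n))]
  congr 1
  rw [← Finset.mul_prod_erase ((Finset.range n).erase i) (fun p => X p ^ g p)
    (by rw [Finset.mem_erase]; exact ⟨by omega, Finset.mem_range.mpr hi⟩)]

lemma D_mono {i n : ℕ} {f : ℕ → ℕ} (hi : i + 1 < n) (hstep : f i = f (i+1) + 1) :
    SD.D i (mono f n) = mono (Function.update f i (f (i+1))) n := by
  apply Dcancel (i := i)
  rw [SD.hD, rename_sw_mono hi]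
  set R : MvPolynomial ℕ ℤ := ∏ p ∈ ((Finset.range n).erase i).erase (i+1), X p ^ f p with hR
  have h1 : mono f n = X i ^ (f (i+1) + 1) * (X (i+1) ^ f (i+1) * R) := by
    rw [mono_extract f hi, hstep]
  have h2 : mono (fun p => f (sw i p)) n = X i ^ f (i+1) * (X (i+1) ^ (f (i+1) + 1) * R) := by
    rw [mono_extract (fun p => f (sw i p)) hi]
    have e1 : sw i i = i + 1 := Equiv.swap_apply_left _ _
    have e2 : sw i (i+1) = i := Equiv.swap_apply_right _ _
    rw [e1, e2, hstep]
    congr 2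
    apply Finset.prod_congr rfl
    intro p hp
    simp only [Finset.mem_erase] at hp
    rw [Equiv.swap_apply_of_ne_of_ne hp.2.1 hp.1]
  have h3 : mono (Function.update f i (f (i+1))) n = X i ^ f (i+1) * (X (i+1) ^ f (i+1) * R) := by
    rw [mono_extract (Function.update f i (f (i+1))) hi]
    rw [Function.update_self, Function.update_of_ne (by omega) _ _]
    congr 2
    apply Finset.prod_congr rfl
    intro p hp
    simp only [Finset.mem_erase] at hp
    rw [Function.update_of_ne hp.2.1]
  rw [h1, h2, h3]
  ring

end Monk

namespace Monk
open Equiv MvPolynomial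

variable (SD : SchubertData)

lemma block1 {n m : ℕ} (hm : m < n) :
    ∀ t, t ≤ m → ∃ z : Equiv.Perm ℕ,
      (∀ x, z x = if x < t then n-1-x else if x = t then n else if x ≤ n then n-x else x) ∧
      memSn (n+1) z ∧
      SD.S z = mono (fun p => if p < t then n-1-p else n-p) (n+1) := by
  intro t
  induction t with
  | zero =>
    intro _
    refine ⟨w0 (n+1), ?_, memSn_w0 _, ?_⟩
    · intro x
      rw [w0_app]
      split_ifs <;> omega
    · rw [S_w0, staircase_eq]
      apply mono_congr
      intro p hp
      split_ifs <;> omega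
  | succ t IH =>
    intro ht
    obtain ⟨z, hz, hzmem, hzS⟩ := IH (by omega)
    have hdesc : z (t+1) < z t := by
      rw [hz (t+1), hz t]
      split_ifs <;> omega
    refine ⟨z * sw t, ?_, memSn_mul hzmem (memSn_swap (by omega) (by omega)), ?_⟩
    · intro x
      have hx : (z * sw t) x = z (sw t x) := rfl
      rw [hx]
      rcases eq_or_ne x t with h1 | h1
      · subst h1
        rw [show sw x x = x + 1 from Equiv.swap_apply_left _ _, hz]
        split_ifs <;> omega
      rcases eq_or_ne x (t+1) with h2 | h2
      · subst h2
        rw [show sw t (t+1) = t from Equiv.swap_apply_right _ _, hz]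
        split_ifs <;> omega
      · rw [show sw t x = x from Equiv.swap_apply_of_ne_of_ne h1 h2, hz]
        split_ifs <;> omega
    · have hSz' : SD.S (z * sw t) = SD.D t (SD.S z) :=
        (D_S_descent SD ⟨n+1, hzmem⟩ hdesc).symm
      rw [hSz', hzS, D_mono SD (by omega : t + 1 < n + 1)
        (by split_ifs <;> omega)]
      apply mono_congr
      intro p hp
      rcases eq_or_ne p t with h1 | h1
      · subst h1
        rw [Function.update_self]
        split_ifs <;> omega
      · rw [Function.update_of_ne h1]
        split_ifs <;> omega

set_option maxHeartbeats 2000000 in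
lemma block2 {n m : ℕ} (hm : m < n) :
    ∀ d, d ≤ n - 1 - m → ∃ z : Equiv.Perm ℕ,
      (∀ x, z x = if x < m then n-1-x else if x = m then n
        else if x ≤ m + d then n-1-x else if x = m+d+1 then n-m-1
        else if x ≤ n then n-x else x) ∧
      memSn (n+1) z ∧
      SD.S z = mono (fun p => if p < m ∨ (m < p ∧ p ≤ m + d) then n-1-p else n-p) (n+1) := by
  intro d
  induction d with
  | zero =>
    intro _
    obtain ⟨z, hz, hzmem, hzS⟩ := block1 SD hm m le_rfl
    refine ⟨z, ?_, hzmem, ?_⟩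
    · intro x
      rw [hz x]
      split_ifs <;> omega
    · rw [hzS]
      apply mono_congr
      intro p hp
      split_ifs <;> omega
  | succ d IH =>
    intro hd
    obtain ⟨z, hz, hzmem, hzS⟩ := IH (by omega)
    have hdesc : z (m+d+1+1) < z (m+d+1) := by
      rw [hz (m+d+1+1), hz (m+d+1)]
      split_ifs <;> omega
    refine ⟨z * sw (m+d+1), ?_,
      memSn_mul hzmem (memSn_swap (by omega) (by omega)), ?_⟩
    · intro x
      have hx : (z * sw (m+d+1)) x = z (sw (m+d+1) x) := rfl
      rw [hx]
      rcases eq_or_ne x (m+d+1) with h1 | h1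
      · rw [h1, show sw (m+d+1) (m+d+1) = m+d+1+1 from Equiv.swap_apply_left _ _, hz]
        split_ifs <;> omega
      rcases eq_or_ne x (m+d+1+1) with h2 | h2
      · rw [h2, show sw (m+d+1) (m+d+1+1) = m+d+1 from Equiv.swap_apply_right _ _, hz]
        split_ifs <;> omega
      · rw [show sw (m+d+1) x = x from Equiv.swap_apply_of_ne_of_ne h1 h2, hz]
        split_ifs <;> omega
    · have hSz' : SD.S (z * sw (m+d+1)) = SD.D (m+d+1) (SD.S z) :=
        (D_S_descent SD ⟨n+1, hzmem⟩ hdesc).symm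
      rw [hSz', hzS, D_mono SD (by omega : (m+d+1) + 1 < n + 1)
        (by split_ifs <;> omega)]
      apply mono_congr
      intro p hp
      rcases eq_or_ne p (m+d+1) with h1 | h1
      · subst h1
        rw [Function.update_self]
        split_ifs <;> omega
      · rw [Function.update_of_ne h1]
        split_ifs <;> omega

lemma S_w0_swap {n m : ℕ} (hm : m < n) :
    SD.S (w0 n * Equiv.swap m n) = X m * staircase n := by
  obtain ⟨z, hz, hzmem, hzS⟩ := block2 SD hm (n-1-m) le_rfl
  have hzeq : z = w0 n * Equiv.swap m n := by
    apply Equiv.ext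
    intro x
    rw [hz x]
    have h1 : (w0 n * Equiv.swap m n) x = w0 n (Equiv.swap m n x) := rfl
    rw [h1, swap_app, w0_app]
    split_ifs <;> omega
  rw [← hzeq, hzS]
  rw [mono, Finset.prod_range_succ]
  have hEn : (if n < m ∨ (m < n ∧ n ≤ m + (n-1-m)) then n-1-n else n-n) = 0 := by
    split_ifs <;> omega
  rw [hEn, pow_zero, mul_one, staircase]
  rw [← Finset.mul_prod_erase (Finset.range n)
    (fun p => X p ^ (if p < m ∨ (m < p ∧ p ≤ m + (n-1-m)) then n-1-p else n-p))
    (Finset.mem_range.mpr hm)]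
  rw [← Finset.mul_prod_erase (Finset.range n)
    (fun p => (X p : MvPolynomial ℕ ℤ) ^ (n-1-p))
    (Finset.mem_range.mpr hm)]
  have hprod : ∏ p ∈ (Finset.range n).erase m,
      (X p : MvPolynomial ℕ ℤ) ^ (if p < m ∨ (m < p ∧ p ≤ m + (n-1-m)) then n-1-p else n-p)
      = ∏ p ∈ (Finset.range n).erase m, (X p : MvPolynomial ℕ ℤ) ^ (n-1-p) := by
    apply Finset.prod_congr rfl
    intro p hp
    simp only [Finset.mem_erase, Finset.mem_range] at hp
    congr 1
    split_ifs <;> omega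
  rw [hprod]
  have hEm : (if m < m ∨ (m < m ∧ m ≤ m + (n-1-m)) then n-1-m else n-m) = n - m := by
    split_ifs <;> omega
  rw [hEm]
  have hXm : (X m : MvPolynomial ℕ ℤ) ^ (n-m) = X m * X m ^ (n-1-m) := by
    rw [show n - m = (n-1-m) + 1 from by omega, pow_succ]
    ring
  rw [hXm]
  ring

end Monk

namespace Monk
open Equiv MvPolynomial

variable (SD : SchubertData)

/-- the "transition" statement `Q(w, m)` -/
def Qstmt (w : Equiv.Perm ℕ) (m : ℕ) : Prop :=
  ∀ A B : Finset ℕ,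
    (∀ j, j ∈ A ↔ (m < j ∧ permLength (w * Equiv.swap m j) = permLength w + 1)) →
    (∀ i, i ∈ B ↔ (i < m ∧ permLength (w * Equiv.swap i m) = permLength w + 1)) →
    X m * SD.S w =
      (∑ j ∈ A, SD.S (w * Equiv.swap m j)) - ∑ i ∈ B, SD.S (w * Equiv.swap i m)

lemma mul_sw_left (W : Equiv.Perm ℕ) (r : ℕ) : (W * sw r) r = W (r+1) := by
  simp [Equiv.Perm.mul_apply, sw, Equiv.swap_apply_left]

lemma mul_sw_right (W : Equiv.Perm ℕ) (r : ℕ) : (W * sw r) (r+1) = W r := by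
  simp [Equiv.Perm.mul_apply, sw, Equiv.swap_apply_right]

lemma mul_sw_other (W : Equiv.Perm ℕ) {r x : ℕ} (h1 : x ≠ r) (h2 : x ≠ r + 1) :
    (W * sw r) x = W x := by
  simp only [Equiv.Perm.mul_apply, sw]
  rw [Equiv.swap_apply_of_ne_of_ne h1 h2]

lemma mul_swap_sw (w : Equiv.Perm ℕ) (r a b : ℕ) :
    (w * sw r) * Equiv.swap a b * sw r = w * Equiv.swap (sw r a) (sw r b) := by
  have h := Equiv.swap_apply_apply (sw r) a b
  rw [h, Equiv.swap_inv]
  group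

lemma mul_sw_sw (x : Equiv.Perm ℕ) (r : ℕ) : x * sw r * sw r = x := by
  rw [mul_assoc, Equiv.swap_mul_self, mul_one]

lemma sum_D_S {n r : ℕ} (F : Finset ℕ) (V : ℕ → Equiv.Perm ℕ)
    (hmem : ∀ j ∈ F, memSn n (V j)) :
    ∑ j ∈ F, SD.D r (SD.S (V j)) =
      ∑ j ∈ F.filter (fun j => (V j) (r+1) < (V j) r), SD.S (V j * sw r) := by
  rw [Finset.sum_filter]
  apply Finset.sum_congr rfl
  intro j hj
  split_ifs with h
  · exact D_S_descent SD ⟨n, hmem j hj⟩ h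
  · apply D_S_ascent SD ⟨n, hmem j hj⟩
    have hne : (V j) r ≠ (V j) (r+1) := fun e => by have := (V j).injective e; omega
    omega

end Monk

namespace Monk
open Equiv MvPolynomial

variable (SD : SchubertData)

lemma case1 {n r m : ℕ} {w : Equiv.Perm ℕ} (hw : memSn n w)
    (hr : r + 1 < n) (hasc : w r < w (r+1)) (hm : m < n) (h1 : r ≠ m) (h2 : m ≠ r + 1)
    (hQ : Qstmt SD (w * sw r) m) : Qstmt SD w m := by
  intro A B hA hB
  set u := w * sw r with hu
  have hun : memSn n u := memSn_mul hw (memSn_swap (by omega) hr)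
  have hfw : finSupp w := ⟨n, hw⟩
  have hfu : finSupp u := ⟨n, hun⟩
  have hlu : permLength u = permLength w + 1 := len_ascent hfw hasc
  have huw : u * sw r = w := by rw [hu, mul_assoc, Equiv.swap_mul_self, mul_one]
  have hDSu : SD.D r (SD.S u) = SD.S w := by
    have hdesc : u (r+1) < u r := by
      rw [hu, mul_sw_left, mul_sw_right]; exact hasc
    rw [D_S_descent SD hfu hdesc, huw]
  classical
  set Au := (Finset.range (n+1)).filter
    (fun j => m < j ∧ permLength (u * Equiv.swap m j) = permLength u + 1) with hAudef
  set Bu := (Finset.range m).filter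
    (fun i => permLength (u * Equiv.swap i m) = permLength u + 1) with hBudef
  have hAuc : ∀ j, j ∈ Au ↔
      (m < j ∧ permLength (u * Equiv.swap m j) = permLength u + 1) := by
    intro j
    rw [hAudef, Finset.mem_filter, Finset.mem_range]
    constructor
    · tauto
    · intro h
      exact ⟨by have := cover_le hun h.1 hm h.2; omega, h⟩
  have hBuc : ∀ i, i ∈ Bu ↔
      (i < m ∧ permLength (u * Equiv.swap i m) = permLength u + 1) := by
    intro i
    rw [hBudef, Finset.mem_filter, Finset.mem_range]
    try tauto
  have hQu := hQ Au Bu hAuc hBuc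
  have hDQ := congrArg (SD.D r) hQu
  rw [D_leibniz] at hDQ
  have hswm : sw r m = m := Equiv.swap_apply_of_ne_of_ne (Ne.symm h1) h2
  have hDXm : SD.D r (X m) = 0 := D_X_of_ne SD (Ne.symm h1) h2
  have hrenXm : rename (⇑(sw r)) (X m : MvPolynomial ℕ ℤ) = X m := by
    rw [rename_sw_X, hswm]
  rw [hDXm, zero_mul, hrenXm, hDSu, zero_add, D_sub, D_sum, D_sum] at hDQ
  -- the perm identity
  have hperm : ∀ j', u * Equiv.swap m j' * sw r = w * Equiv.swap m (sw r j') := by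
    intro j'
    rw [hu, mul_swap_sw, hswm]
  have hpermB : ∀ i', u * Equiv.swap i' m * sw r = w * Equiv.swap (sw r i') m := by
    intro i'
    rw [hu, mul_swap_sw, hswm]
  -- A-side
  have hmemA : ∀ j ∈ Au, memSn (n+1) (u * Equiv.swap m j) := by
    intro j hj
    rw [hAudef, Finset.mem_filter, Finset.mem_range] at hj
    exact memSn_mul (memSn_mono (by omega) hun) (memSn_swap (by omega) (by omega))
  have hsumA := sum_D_S SD (r := r) Au (fun j => u * Equiv.swap m j) hmemA
  have hmemB : ∀ i ∈ Bu, memSn (n+1) (u * Equiv.swap i m) := by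
    intro i hi
    rw [hBudef, Finset.mem_filter, Finset.mem_range] at hi
    exact memSn_mul (memSn_mono (by omega) hun) (memSn_swap (by omega) (by omega))
  have hsumB := sum_D_S SD (r := r) Bu (fun i => u * Equiv.swap i m) hmemB
  rw [hsumA, hsumB] at hDQ
  -- A reindex
  have hreA : ∑ j ∈ Au.filter
      (fun j => (u * Equiv.swap m j) (r+1) < (u * Equiv.swap m j) r),
      SD.S (u * Equiv.swap m j * sw r) = ∑ j ∈ A, SD.S (w * Equiv.swap m j) := by
    apply Finset.sum_nbij' (fun j => sw r j) (fun j => sw r j)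
    · -- maps into A
      intro j' hj'
      rw [Finset.mem_filter] at hj'
      obtain ⟨hmj', hlen'⟩ := (hAuc j').mp hj'.1
      have hP := hj'.2
      rw [hA]
      constructor
      · show m < sw r j'
        rw [sw, swap_app]
        split_ifs <;> omega
      · have hld := len_descent ⟨n+1, hmemA j' hj'.1⟩ hP
        rw [hperm j'] at hld
        omega
    · -- maps from A
      intro j hj
      rw [hA j] at hj
      obtain ⟨hmj, hcov⟩ := hj
      obtain ⟨hvmj, hnomid⟩ := (cover_iff hfw hmj).mp hcov
      -- ascent of W := w * swap m j at r
      have hascW : (w * Equiv.swap m j) r < (w * Equiv.swap m j) (r+1) := by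
        have er : (w * Equiv.swap m j) r = w (Equiv.swap m j r) := rfl
        have er1 : (w * Equiv.swap m j) (r+1) = w (Equiv.swap m j (r+1)) := rfl
        by_cases hjr : j = r
        · have e1 : Equiv.swap m j r = m := by rw [swap_app]; split_ifs <;> omega
          have e2 : Equiv.swap m j (r+1) = r+1 := by rw [swap_app]; split_ifs <;> omega
          rw [er, er1, e1, e2]
          subst hjr
          omega
        by_cases hjr1 : j = r+1
        · have e1 : Equiv.swap m j r = r := by rw [swap_app]; split_ifs <;> omega
          have e2 : Equiv.swap m j (r+1) = m := by rw [swap_app]; split_ifs <;> omega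
          rw [er, er1, e1, e2]
          have hmr : m < r := by omega
          have hno := hnomid r hmr (by omega)
          have hrj : w r < w j := by subst hjr1; exact hasc
          have hne : w m ≠ w r := fun e => by have := w.injective e; omega
          omega
        · have e1 : Equiv.swap m j r = r := by rw [swap_app]; split_ifs <;> omega
          have e2 : Equiv.swap m j (r+1) = r+1 := by rw [swap_app]; split_ifs <;> omega
          rw [er, er1, e1, e2]
          exact hasc
      have hWn : memSn (n+1) (w * Equiv.swap m j) := by
        have hjn : j ≤ n := cover_le hw hmj hm hcov
        exact memSn_mul (memSn_mono (by omega) hw) (memSn_swap (by omega) (by omega))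
      have hlW : permLength ((w * Equiv.swap m j) * sw r) = permLength w + 2 := by
        rw [len_ascent ⟨n+1, hWn⟩ hascW, hcov]
      have hWeq : u * Equiv.swap m (sw r j) = (w * Equiv.swap m j) * sw r := by
        have h0 := hperm (sw r j)
        rw [show sw r (sw r j) = j from Equiv.swap_apply_self _ _ _] at h0
        rw [← h0, mul_sw_sw]
      rw [Finset.mem_filter]
      constructor
      · rw [hAuc]
        constructor
        · show m < sw r j
          rw [sw, swap_app]
          split_ifs <;> omega
        · rw [hWeq, hlW]
          omega
      · show (u * Equiv.swap m (sw r j)) (r+1) < (u * Equiv.swap m (sw r j)) r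
        rw [hWeq, mul_sw_left, mul_sw_right]
        exact hascW
    · intro j' _
      exact Equiv.swap_apply_self _ _ _
    · intro j _
      exact Equiv.swap_apply_self _ _ _
    · intro j' hj'
      rw [hperm j']
  -- B reindex
  have hreB : ∑ i ∈ Bu.filter
      (fun i => (u * Equiv.swap i m) (r+1) < (u * Equiv.swap i m) r),
      SD.S (u * Equiv.swap i m * sw r) = ∑ i ∈ B, SD.S (w * Equiv.swap i m) := by
    apply Finset.sum_nbij' (fun i => sw r i) (fun i => sw r i)
    · intro i' hi'
      rw [Finset.mem_filter] at hi'
      obtain ⟨him', hlen'⟩ := (hBuc i').mp hi'.1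
      have hP := hi'.2
      rw [hB]
      constructor
      · show sw r i' < m
        rw [sw, swap_app]
        split_ifs <;> omega
      · have hld := len_descent ⟨n+1, hmemB i' hi'.1⟩ hP
        rw [hpermB i'] at hld
        omega
    · intro i hi
      rw [hB i] at hi
      obtain ⟨him, hcov⟩ := hi
      obtain ⟨hvim, hnomid⟩ := (cover_iff hfw him).mp hcov
      have hascW : (w * Equiv.swap i m) r < (w * Equiv.swap i m) (r+1) := by
        have er : (w * Equiv.swap i m) r = w (Equiv.swap i m r) := rfl
        have er1 : (w * Equiv.swap i m) (r+1) = w (Equiv.swap i m (r+1)) := rfl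
        by_cases hir : i = r
        · have e1 : Equiv.swap i m r = m := by rw [swap_app]; split_ifs <;> omega
          have e2 : Equiv.swap i m (r+1) = r+1 := by rw [swap_app]; split_ifs <;> omega
          rw [er, er1, e1, e2]
          have hno := hnomid (r+1) (by omega) (by omega)
          have hir' : w i < w (r+1) := by subst hir; exact hasc
          have hne : w (r+1) ≠ w m := fun e => by have := w.injective e; omega
          omega
        by_cases hir1 : i = r+1
        · have e1 : Equiv.swap i m r = r := by rw [swap_app]; split_ifs <;> omega
          have e2 : Equiv.swap i m (r+1) = m := by rw [swap_app]; split_ifs <;> omega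
          rw [er, er1, e1, e2]
          have : w r < w i := by subst hir1; exact hasc
          omega
        · have e1 : Equiv.swap i m r = r := by rw [swap_app]; split_ifs <;> omega
          have e2 : Equiv.swap i m (r+1) = r+1 := by rw [swap_app]; split_ifs <;> omega
          rw [er, er1, e1, e2]
          exact hasc
      have hWn : memSn (n+1) (w * Equiv.swap i m) := by
        exact memSn_mul (memSn_mono (by omega) hw) (memSn_swap (by omega) (by omega))
      have hlW : permLength ((w * Equiv.swap i m) * sw r) = permLength w + 2 := by
        rw [len_ascent ⟨n+1, hWn⟩ hascW, hcov]
      have hWeq : u * Equiv.swap (sw r i) m = (w * Equiv.swap i m) * sw r := by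
        have h0 := hpermB (sw r i)
        rw [show sw r (sw r i) = i from Equiv.swap_apply_self _ _ _] at h0
        rw [← h0, mul_sw_sw]
      rw [Finset.mem_filter]
      constructor
      · rw [hBuc]
        constructor
        · show sw r i < m
          rw [sw, swap_app]
          split_ifs <;> omega
        · rw [hWeq, hlW]
          omega
      · show (u * Equiv.swap (sw r i) m) (r+1) < (u * Equiv.swap (sw r i) m) r
        rw [hWeq, mul_sw_left, mul_sw_right]
        exact hascW
    · intro i' _
      exact Equiv.swap_apply_self _ _ _
    · intro i _
      exact Equiv.swap_apply_self _ _ _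
    · intro i' hi'
      rw [hpermB i']
  rw [hreA, hreB] at hDQ
  exact hDQ

end Monk

namespace Monk
open Equiv MvPolynomial

variable (SD : SchubertData)

lemma case2 {n m : ℕ} {w : Equiv.Perm ℕ} (hw : memSn n w)
    (hr : m + 1 < n) (hasc : w m < w (m+1))
    (hQ : Qstmt SD (w * sw m) (m+1)) : Qstmt SD w m := by
  intro A B hA hB
  set u := w * sw m with hu
  have hun : memSn n u := memSn_mul hw (memSn_swap (by omega) hr)
  have hfw : finSupp w := ⟨n, hw⟩
  have hfu : finSupp u := ⟨n, hun⟩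
  have hfVu : ∀ a b, finSupp (u * Equiv.swap a b) := fun a b => finSupp_mul hfu (finSupp_swap _ _)
  have hfVw : ∀ a b, finSupp (w * Equiv.swap a b) := fun a b => finSupp_mul hfw (finSupp_swap _ _)
  have hlu : permLength u = permLength w + 1 := len_ascent hfw hasc
  have huw : u * sw m = w := by rw [hu, mul_sw_sw]
  have hDSu : SD.D m (SD.S u) = SD.S w := by
    have hdesc : u (m+1) < u m := by
      rw [hu, mul_sw_left, mul_sw_right]; exact hasc
    rw [D_S_descent SD hfu hdesc, huw]
  classical
  set Au := (Finset.range (n+1)).filter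
    (fun j => m+1 < j ∧ permLength (u * Equiv.swap (m+1) j) = permLength u + 1) with hAudef
  set Bu := (Finset.range (m+1)).filter
    (fun i => permLength (u * Equiv.swap i (m+1)) = permLength u + 1) with hBudef
  have hAuc : ∀ j, j ∈ Au ↔
      (m+1 < j ∧ permLength (u * Equiv.swap (m+1) j) = permLength u + 1) := by
    intro j
    rw [hAudef, Finset.mem_filter, Finset.mem_range]
    constructor
    · tauto
    · intro h
      exact ⟨by have := cover_le hun h.1 (by omega) h.2; omega, h⟩
  have hBuc : ∀ i, i ∈ Bu ↔
      (i < m+1 ∧ permLength (u * Equiv.swap i (m+1)) = permLength u + 1) := by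
    intro i
    rw [hBudef, Finset.mem_filter, Finset.mem_range]
    try tauto
  have hQu := hQ Au Bu hAuc hBuc
  have hDQ := congrArg (SD.D m) hQu
  rw [D_leibniz] at hDQ
  have hswm1 : sw m (m+1) = m := Equiv.swap_apply_right _ _
  have hrenX : rename (⇑(sw m)) (X (m+1) : MvPolynomial ℕ ℤ) = X m := by
    rw [rename_sw_X, hswm1]
  rw [D_X_succ, hrenX, hDSu, D_sub, D_sum, D_sum] at hDQ
  have hpermA : ∀ j, m + 1 < j → u * Equiv.swap (m+1) j * sw m = w * Equiv.swap m j := by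
    intro j hj
    rw [hu, mul_swap_sw, hswm1,
      show sw m j = j from Equiv.swap_apply_of_ne_of_ne (by omega) (by omega)]
  have hpermB : ∀ i, i < m → u * Equiv.swap i (m+1) * sw m = w * Equiv.swap i m := by
    intro i hi
    rw [hu, mul_swap_sw, hswm1,
      show sw m i = i from Equiv.swap_apply_of_ne_of_ne (by omega) (by omega)]
  have hmemA : ∀ j ∈ Au, memSn (n+1) (u * Equiv.swap (m+1) j) := by
    intro j hj
    rw [hAudef, Finset.mem_filter, Finset.mem_range] at hj
    exact memSn_mul (memSn_mono (by omega) hun) (memSn_swap (by omega) (by omega))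
  have hmemB : ∀ i ∈ Bu, memSn (n+1) (u * Equiv.swap i (m+1)) := by
    intro i hi
    rw [hBudef, Finset.mem_filter, Finset.mem_range] at hi
    exact memSn_mul (memSn_mono (by omega) hun) (memSn_swap (by omega) (by omega))
  have hsumA := sum_D_S SD (r := m) Au (fun j => u * Equiv.swap (m+1) j) hmemA
  have hsumB := sum_D_S SD (r := m) Bu (fun i => u * Equiv.swap i (m+1)) hmemB
  rw [hsumA, hsumB] at hDQ
  set AuP := Au.filter
    (fun j => (u * Equiv.swap (m+1) j) (m+1) < (u * Equiv.swap (m+1) j) m) with hAuPdef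
  set BuP := Bu.filter
    (fun i => (u * Equiv.swap i (m+1)) (m+1) < (u * Equiv.swap i (m+1)) m) with hBuPdef
  have hAuPc : ∀ j, j ∈ AuP ↔
      (m < j ∧ j ≠ m + 1 ∧ permLength (w * Equiv.swap m j) = permLength w + 1) := by
    intro j
    rw [hAuPdef, Finset.mem_filter, hAuc]
    constructor
    · rintro ⟨⟨hj1, hj2⟩, hP⟩
      refine ⟨by omega, by omega, ?_⟩
      have hVW := hpermA j hj1
      have hld := len_descent (hfVu (m+1) j) hP
      rw [hVW] at hld
      omega
    · rintro ⟨hj1, hj2, hcov⟩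
      have hj3 : m + 1 < j := by omega
      obtain ⟨hv, hnomid⟩ := (cover_iff hfw hj1).mp hcov
      have hjm1 : w j < w (m+1) := by
        have hno := hnomid (m+1) (by omega) (by omega)
        have hne : w (m+1) ≠ w j := fun e => by have := w.injective e; omega
        omega
      have e1 : Equiv.swap m j m = j := Equiv.swap_apply_left _ _
      have e2 : Equiv.swap m j (m+1) = m+1 :=
        Equiv.swap_apply_of_ne_of_ne (by omega) (by omega)
      have hascW : (w * Equiv.swap m j) m < (w * Equiv.swap m j) (m+1) := by
        show w (Equiv.swap m j m) < w (Equiv.swap m j (m+1))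
        rw [e1, e2]; exact hjm1
      have hlV : permLength ((w * Equiv.swap m j) * sw m) = permLength w + 2 := by
        rw [len_ascent (hfVw m j) hascW, hcov]
      have hVW2 : u * Equiv.swap (m+1) j = (w * Equiv.swap m j) * sw m := by
        have h0 := hpermA j hj3
        rw [← h0, mul_sw_sw]
      refine ⟨⟨hj3, by rw [hVW2, hlV]; omega⟩, ?_⟩
      show (u * Equiv.swap (m+1) j) (m+1) < (u * Equiv.swap (m+1) j) m
      rw [hVW2, mul_sw_left, mul_sw_right]
      exact hascW
  have hBuPc : ∀ i, i ∈ BuP ↔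
      (i < m ∧ permLength (w * Equiv.swap i m) = permLength w + 1) := by
    intro i
    rw [hBuPdef, Finset.mem_filter, hBuc]
    constructor
    · rintro ⟨⟨hi1, hi2⟩, hP⟩
      have him : i ≠ m := by
        intro he
        subst he
        have hUW : u * Equiv.swap i (i+1) = w := huw
        rw [hUW] at hP
        omega
      have hVW := hpermB i (by omega)
      have hld := len_descent (hfVu i (m+1)) hP
      rw [hVW] at hld
      exact ⟨by omega, by omega⟩
    · rintro ⟨hi1, hcov⟩
      obtain ⟨hv, hnomid⟩ := (cover_iff hfw hi1).mp hcov
      have e1 : Equiv.swap i m m = i := Equiv.swap_apply_right _ _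
      have e2 : Equiv.swap i m (m+1) = m+1 :=
        Equiv.swap_apply_of_ne_of_ne (by omega) (by omega)
      have hascW : (w * Equiv.swap i m) m < (w * Equiv.swap i m) (m+1) := by
        show w (Equiv.swap i m m) < w (Equiv.swap i m (m+1))
        rw [e1, e2]; omega
      have hlV : permLength ((w * Equiv.swap i m) * sw m) = permLength w + 2 := by
        rw [len_ascent (hfVw i m) hascW, hcov]
      have hVW2 : u * Equiv.swap i (m+1) = (w * Equiv.swap i m) * sw m := by
        have h0 := hpermB i hi1
        rw [← h0, mul_sw_sw]
      refine ⟨⟨by omega, by rw [hVW2, hlV]; omega⟩, ?_⟩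
      show (u * Equiv.swap i (m+1)) (m+1) < (u * Equiv.swap i (m+1)) m
      rw [hVW2, mul_sw_left, mul_sw_right]
      exact hascW
  have hAeq : A = insert (m+1) AuP := by
    ext j
    rw [hA j, Finset.mem_insert, hAuPc j]
    constructor
    · rintro ⟨hj1, hcov⟩
      by_cases hj : j = m+1
      · left; exact hj
      · right; exact ⟨hj1, hj, hcov⟩
    · rintro (hj | ⟨hj1, hj2, hcov⟩)
      · subst hj
        exact ⟨by omega, hlu⟩
      · exact ⟨hj1, hcov⟩
  have hBeq : B = BuP := by
    ext i
    rw [hB i, hBuPc i]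
  have hnotmem : (m+1) ∉ AuP := by
    intro hc
    rw [hAuPc] at hc
    exact hc.2.1 rfl
  have hsumA2 : ∑ j ∈ AuP, SD.S (u * Equiv.swap (m+1) j * sw m)
      = ∑ j ∈ AuP, SD.S (w * Equiv.swap m j) := by
    apply Finset.sum_congr rfl
    intro j hj
    rw [hpermA j (by rw [hAuPc] at hj; omega)]
  have hsumB2 : ∑ i ∈ BuP, SD.S (u * Equiv.swap i (m+1) * sw m)
      = ∑ i ∈ BuP, SD.S (w * Equiv.swap i m) := by
    apply Finset.sum_congr rfl
    intro i hi
    rw [hpermB i (by rw [hBuPc] at hi; omega)]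
  rw [hsumA2, hsumB2] at hDQ
  rw [hAeq, Finset.sum_insert hnotmem, hBeq]
  have hSswm : SD.S (w * Equiv.swap m (m+1)) = SD.S u := by rw [← hu]
  rw [hSswm]
  linear_combination hDQ

end Monk

namespace Monk
open Equiv MvPolynomial

variable (SD : SchubertData)

lemma case3 {n r : ℕ} {w : Equiv.Perm ℕ} (hw : memSn n w)
    (hr : r + 1 < n) (hasc : w r < w (r+1))
    (hQ : Qstmt SD (w * sw r) r) : Qstmt SD w (r+1) := by
  intro A B hA hB
  set u := w * sw r with hu
  have hun : memSn n u := memSn_mul hw (memSn_swap (by omega) hr)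
  have hfw : finSupp w := ⟨n, hw⟩
  have hfu : finSupp u := ⟨n, hun⟩
  have hfVu : ∀ a b, finSupp (u * Equiv.swap a b) := fun a b => finSupp_mul hfu (finSupp_swap _ _)
  have hfVw : ∀ a b, finSupp (w * Equiv.swap a b) := fun a b => finSupp_mul hfw (finSupp_swap _ _)
  have hlu : permLength u = permLength w + 1 := len_ascent hfw hasc
  have huw : u * sw r = w := by rw [hu, mul_sw_sw]
  have hDSu : SD.D r (SD.S u) = SD.S w := by
    have hdesc : u (r+1) < u r := by
      rw [hu, mul_sw_left, mul_sw_right]; exact hasc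
    rw [D_S_descent SD hfu hdesc, huw]
  classical
  set Au := (Finset.range (n+1)).filter
    (fun j => r < j ∧ permLength (u * Equiv.swap r j) = permLength u + 1) with hAudef
  set Bu := (Finset.range r).filter
    (fun i => permLength (u * Equiv.swap i r) = permLength u + 1) with hBudef
  have hAuc : ∀ j, j ∈ Au ↔
      (r < j ∧ permLength (u * Equiv.swap r j) = permLength u + 1) := by
    intro j
    rw [hAudef, Finset.mem_filter, Finset.mem_range]
    constructor
    · tauto
    · intro h
      exact ⟨by have := cover_le hun h.1 (by omega) h.2; omega, h⟩
  have hBuc : ∀ i, i ∈ Bu ↔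
      (i < r ∧ permLength (u * Equiv.swap i r) = permLength u + 1) := by
    intro i
    rw [hBudef, Finset.mem_filter, Finset.mem_range]
    try tauto
  have hQu := hQ Au Bu hAuc hBuc
  have hDQ := congrArg (SD.D r) hQu
  rw [D_leibniz] at hDQ
  have hswr : sw r r = r + 1 := Equiv.swap_apply_left _ _
  have hrenX : rename (⇑(sw r)) (X r : MvPolynomial ℕ ℤ) = X (r+1) := by
    rw [rename_sw_X, hswr]
  rw [D_X_self, one_mul, hrenX, hDSu, D_sub, D_sum, D_sum] at hDQ
  have hpermA : ∀ j, r + 1 < j → u * Equiv.swap r j * sw r = w * Equiv.swap (r+1) j := by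
    intro j hj
    rw [hu, mul_swap_sw, hswr,
      show sw r j = j from Equiv.swap_apply_of_ne_of_ne (by omega) (by omega)]
  have hpermB : ∀ i, i < r → u * Equiv.swap i r * sw r = w * Equiv.swap i (r+1) := by
    intro i hi
    rw [hu, mul_swap_sw, hswr,
      show sw r i = i from Equiv.swap_apply_of_ne_of_ne (by omega) (by omega)]
  have hmemA : ∀ j ∈ Au, memSn (n+1) (u * Equiv.swap r j) := by
    intro j hj
    rw [hAudef, Finset.mem_filter, Finset.mem_range] at hj
    exact memSn_mul (memSn_mono (by omega) hun) (memSn_swap (by omega) (by omega))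
  have hmemB : ∀ i ∈ Bu, memSn (n+1) (u * Equiv.swap i r) := by
    intro i hi
    rw [hBudef, Finset.mem_filter, Finset.mem_range] at hi
    exact memSn_mul (memSn_mono (by omega) hun) (memSn_swap (by omega) (by omega))
  have hsumA := sum_D_S SD (r := r) Au (fun j => u * Equiv.swap r j) hmemA
  have hsumB := sum_D_S SD (r := r) Bu (fun i => u * Equiv.swap i r) hmemB
  rw [hsumA, hsumB] at hDQ
  set AuP := Au.filter
    (fun j => (u * Equiv.swap r j) (r+1) < (u * Equiv.swap r j) r) with hAuPdef
  set BuP := Bu.filter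
    (fun i => (u * Equiv.swap i r) (r+1) < (u * Equiv.swap i r) r) with hBuPdef
  have hAuPc : ∀ j, j ∈ AuP ↔
      (r + 1 < j ∧ permLength (w * Equiv.swap (r+1) j) = permLength w + 1) := by
    intro j
    rw [hAuPdef, Finset.mem_filter, hAuc]
    constructor
    · rintro ⟨⟨hj1, hj2⟩, hP⟩
      have hjr1 : j ≠ r + 1 := by
        intro he
        subst he
        have hUW : u * Equiv.swap r (r+1) = w := huw
        rw [hUW] at hP
        omega
      have hVW := hpermA j (by omega)
      have hld := len_descent (hfVu r j) hP
      rw [hVW] at hld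
      exact ⟨by omega, by omega⟩
    · rintro ⟨hj1, hcov⟩
      obtain ⟨hv, hnomid⟩ := (cover_iff hfw (by omega : r + 1 < j)).mp hcov
      have e1 : Equiv.swap (r+1) j r = r :=
        Equiv.swap_apply_of_ne_of_ne (by omega) (by omega)
      have e2 : Equiv.swap (r+1) j (r+1) = j := Equiv.swap_apply_left _ _
      have hascW : (w * Equiv.swap (r+1) j) r < (w * Equiv.swap (r+1) j) (r+1) := by
        show w (Equiv.swap (r+1) j r) < w (Equiv.swap (r+1) j (r+1))
        rw [e1, e2]; omega
      have hlV : permLength ((w * Equiv.swap (r+1) j) * sw r) = permLength w + 2 := by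
        rw [len_ascent (hfVw (r+1) j) hascW, hcov]
      have hVW2 : u * Equiv.swap r j = (w * Equiv.swap (r+1) j) * sw r := by
        have h0 := hpermA j hj1
        rw [← h0, mul_sw_sw]
      refine ⟨⟨by omega, by rw [hVW2, hlV]; omega⟩, ?_⟩
      show (u * Equiv.swap r j) (r+1) < (u * Equiv.swap r j) r
      rw [hVW2, mul_sw_left, mul_sw_right]
      exact hascW
  have hBuPc : ∀ i, i ∈ BuP ↔
      (i < r + 1 ∧ i ≠ r ∧ permLength (w * Equiv.swap i (r+1)) = permLength w + 1) := by
    intro i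
    rw [hBuPdef, Finset.mem_filter, hBuc]
    constructor
    · rintro ⟨⟨hi1, hi2⟩, hP⟩
      have hVW := hpermB i hi1
      have hld := len_descent (hfVu i r) hP
      rw [hVW] at hld
      exact ⟨by omega, by omega, by omega⟩
    · rintro ⟨hi1, hi2, hcov⟩
      have hir : i < r := by omega
      obtain ⟨hv, hnomid⟩ := (cover_iff hfw (by omega : i < r + 1)).mp hcov
      have hri : w r < w i := by
        have hno := hnomid r (by omega) (by omega)
        have hne : w i ≠ w r := fun e => by have := w.injective e; omega
        omega
      have e1 : Equiv.swap i (r+1) r = r :=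
        Equiv.swap_apply_of_ne_of_ne (by omega) (by omega)
      have e2 : Equiv.swap i (r+1) (r+1) = i := Equiv.swap_apply_right _ _
      have hascW : (w * Equiv.swap i (r+1)) r < (w * Equiv.swap i (r+1)) (r+1) := by
        show w (Equiv.swap i (r+1) r) < w (Equiv.swap i (r+1) (r+1))
        rw [e1, e2]; exact hri
      have hlV : permLength ((w * Equiv.swap i (r+1)) * sw r) = permLength w + 2 := by
        rw [len_ascent (hfVw i (r+1)) hascW, hcov]
      have hVW2 : u * Equiv.swap i r = (w * Equiv.swap i (r+1)) * sw r := by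
        have h0 := hpermB i hir
        rw [← h0, mul_sw_sw]
      refine ⟨⟨hir, by rw [hVW2, hlV]; omega⟩, ?_⟩
      show (u * Equiv.swap i r) (r+1) < (u * Equiv.swap i r) r
      rw [hVW2, mul_sw_left, mul_sw_right]
      exact hascW
  have hAeq : A = AuP := by
    ext j
    rw [hA j, hAuPc j]
  have hBeq : B = insert r BuP := by
    ext i
    rw [hB i, Finset.mem_insert, hBuPc i]
    constructor
    · rintro ⟨hi1, hcov⟩
      by_cases hir : i = r
      · left; exact hir
      · right; exact ⟨hi1, hir, hcov⟩
    · rintro (hir | ⟨hi1, hi2, hcov⟩)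
      · subst hir
        exact ⟨by omega, hlu⟩
      · exact ⟨hi1, hcov⟩
  have hnotmem : r ∉ BuP := by
    intro hc
    rw [hBuPc] at hc
    exact hc.2.1 rfl
  have hsumA2 : ∑ j ∈ AuP, SD.S (u * Equiv.swap r j * sw r)
      = ∑ j ∈ AuP, SD.S (w * Equiv.swap (r+1) j) := by
    apply Finset.sum_congr rfl
    intro j hj
    rw [hpermA j (by rw [hAuPc] at hj; omega)]
  have hsumB2 : ∑ i ∈ BuP, SD.S (u * Equiv.swap i r * sw r)
      = ∑ i ∈ BuP, SD.S (w * Equiv.swap i (r+1)) := by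
    apply Finset.sum_congr rfl
    intro i hi
    rw [hpermB i (by rw [hBuPc] at hi; omega)]
  rw [hsumA2, hsumB2] at hDQ
  rw [hAeq, hBeq, Finset.sum_insert hnotmem]
  have hSswr : SD.S (w * Equiv.swap r (r+1)) = SD.S u := by rw [← hu]
  rw [hSswr]
  linear_combination hDQ

end Monk

namespace Monk
open Equiv MvPolynomial

variable (SD : SchubertData)

lemma Qbase {n m : ℕ} (hm : m < n) : Qstmt SD (w0 n) m := by
  intro A B hA hB
  have hfw0 : finSupp (w0 n) := finSupp_w0 n
  have e1 : w0 n m = n-1-m := by rw [w0_app, if_pos hm]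
  have e2 : w0 n n = n := by rw [w0_app, if_neg (by omega)]
  have hcovn : permLength (w0 n * Equiv.swap m n) = permLength (w0 n) + 1 := by
    apply (cover_iff hfw0 hm).mpr
    constructor
    · rw [e1, e2]; omega
    · intro a ha1 ha2 hcon
      have e3 : w0 n a = n-1-a := by rw [w0_app, if_pos (by omega)]
      rw [e1, e2, e3] at hcon
      omega
  have hA1 : A = {n} := by
    ext j
    rw [hA j, Finset.mem_singleton]
    constructor
    · rintro ⟨hmj, hcov⟩
      by_contra hne
      have hjn : j ≤ n := cover_le (memSn_w0 n) hmj hm hcov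
      obtain ⟨hv, _⟩ := (cover_iff hfw0 hmj).mp hcov
      have e3 : w0 n j = n-1-j := by rw [w0_app, if_pos (by omega)]
      rw [e1, e3] at hv
      omega
    · intro h
      subst h
      exact ⟨hm, hcovn⟩
  have hB1 : B = ∅ := by
    ext i
    rw [hB i]
    simp only [Finset.notMem_empty, iff_false, not_and]
    intro him hcov
    obtain ⟨hv, _⟩ := (cover_iff hfw0 him).mp hcov
    have e3 : w0 n i = n-1-i := by rw [w0_app, if_pos (by omega)]
    rw [e1, e3] at hv
    omega
  rw [hA1, hB1, Finset.sum_singleton, Finset.sum_empty, sub_zero]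
  rw [S_w0_swap SD hm, S_w0]

lemma Qmain : ∀ (cl n : ℕ) (w : Equiv.Perm ℕ), memSn n w → n*n + 1 ≤ cl + permLength w →
    ∀ m, m < n → Qstmt SD w m := by
  intro cl
  induction cl with
  | zero =>
    intro n w hw hcl m hm
    have := permLength_le hw
    omega
  | succ cl IH =>
    intro n w hw hcl m hm
    by_cases hww0 : w = w0 n
    · subst hww0
      exact Qbase SD hm
    · obtain ⟨r, hr, hasc⟩ := exists_ascent_of_ne_w0 hw hww0
      have hun : memSn n (w * sw r) := memSn_mul hw (memSn_swap (by omega) hr)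
      have hlu : permLength (w * sw r) = permLength w + 1 := len_ascent ⟨n, hw⟩ hasc
      have hbound := permLength_le hun
      have hmeas : n*n + 1 ≤ cl + permLength (w * sw r) := by omega
      by_cases hrm : r = m
      · subst hrm
        exact case2 SD hw hr hasc (IH n _ hun hmeas (r+1) (by omega))
      · by_cases hmr : m = r + 1
        · subst hmr
          exact case3 SD hw hr hasc (IH n _ hun hmeas r (by omega))
        · exact case1 SD hw hr hasc hm hrm hmr (IH n _ hun hmeas m hm)

lemma Qfull {w : Equiv.Perm ℕ} (hf : finSupp w) (m : ℕ) : Qstmt SD w m := by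
  obtain ⟨n0, hn0⟩ := hf
  set n := max n0 (m+1) with hn
  have hw : memSn n w := memSn_mono (le_max_left _ _) hn0
  exact Qmain SD (n*n+1) n w hw (by omega) m (by omega)

end Monk

namespace Monk
open Equiv MvPolynomial

variable (SD : SchubertData)

lemma len_one_swap {a b : ℕ} (hab : a < b) :
    permLength ((1 : Equiv.Perm ℕ) * Equiv.swap a b) = 2*(b-a) - 1 := by
  have hv : (1 : Equiv.Perm ℕ) a < (1 : Equiv.Perm ℕ) b := hab
  have hLT := LT finSupp_one hab hv
  rw [permLength_one] at hLT
  have hN : Nmid 1 a b = b - a - 1 := by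
    rw [Nmid]
    have hfil : (Finset.Ioo a b).filter
        (fun x => (1 : Equiv.Perm ℕ) a < (1 : Equiv.Perm ℕ) x ∧
          (1 : Equiv.Perm ℕ) x < (1 : Equiv.Perm ℕ) b) = Finset.Ioo a b := by
      apply Finset.filter_true_of_mem
      intro x hx
      simp only [Finset.mem_Ioo] at hx
      exact ⟨hx.1, hx.2⟩
    rw [hfil, Nat.card_Ioo]
  rw [hN] at hLT
  omega

lemma S_sw (k : ℕ) : SD.S (sw k) = ∑ i ∈ Finset.range (k+1), X i := by
  induction k with
  | zero =>
    have hA : ∀ j, j ∈ ({1} : Finset ℕ) ↔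
        (0 < j ∧ permLength ((1:Equiv.Perm ℕ) * Equiv.swap 0 j) = permLength (1:Equiv.Perm ℕ) + 1) := by
      intro j
      rw [Finset.mem_singleton, permLength_one]
      constructor
      · intro h
        subst h
        refine ⟨by omega, ?_⟩
        rw [len_one_swap (by omega)]
      · rintro ⟨h1, h2⟩
        rw [len_one_swap h1] at h2
        omega
    have hB : ∀ i, i ∈ (∅ : Finset ℕ) ↔
        (i < 0 ∧ permLength ((1:Equiv.Perm ℕ) * Equiv.swap i 0) = permLength (1:Equiv.Perm ℕ) + 1) := by
      intro i
      simp only [Finset.notMem_empty, false_iff, not_and]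
      intro h
      omega
    have hQ := Qfull SD finSupp_one 0 {1} ∅ hA hB
    rw [S_one, mul_one, Finset.sum_singleton, Finset.sum_empty, sub_zero, one_mul] at hQ
    rw [Finset.sum_range_one]
    exact hQ.symm
  | succ k IH =>
    have hA : ∀ j, j ∈ ({k+1+1} : Finset ℕ) ↔
        (k+1 < j ∧ permLength ((1:Equiv.Perm ℕ) * Equiv.swap (k+1) j) = permLength (1:Equiv.Perm ℕ) + 1) := by
      intro j
      rw [Finset.mem_singleton, permLength_one]
      constructor
      · intro h
        subst h
        refine ⟨by omega, ?_⟩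
        rw [len_one_swap (by omega)]
        omega
      · rintro ⟨h1, h2⟩
        rw [len_one_swap h1] at h2
        omega
    have hB : ∀ i, i ∈ ({k} : Finset ℕ) ↔
        (i < k+1 ∧ permLength ((1:Equiv.Perm ℕ) * Equiv.swap i (k+1)) = permLength (1:Equiv.Perm ℕ) + 1) := by
      intro i
      rw [Finset.mem_singleton, permLength_one]
      constructor
      · intro h
        subst h
        refine ⟨by omega, ?_⟩
        rw [len_one_swap (by omega)]
        omega
      · rintro ⟨h1, h2⟩
        rw [len_one_swap h1] at h2
        omega
    have hQ := Qfull SD finSupp_one (k+1) {k+1+1} {k} hA hB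
    rw [S_one, mul_one, Finset.sum_singleton, Finset.sum_singleton, one_mul, one_mul] at hQ
    rw [Finset.sum_range_succ, ← IH]
    linear_combination -hQ

end Monk

namespace Monk
open Equiv MvPolynomial

lemma monk_main (SD : SchubertData) (k : ℕ) (w : Equiv.Perm ℕ) (hfin : finSupp w)
    (T : Finset (ℕ × ℕ))
    (hT : ∀ p : ℕ × ℕ, p ∈ T ↔ p.1 ≤ k ∧ k < p.2 ∧
      permLength (w * Equiv.swap p.1 p.2) = permLength w + 1) :
    SD.S (Equiv.swap k (k + 1)) * SD.S w = ∑ p ∈ T, SD.S (w * Equiv.swap p.1 p.2) := by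
  classical
  obtain ⟨n0, hn0⟩ := hfin
  set n := max n0 (k+1) with hndef
  have hw : memSn n w := memSn_mono (le_max_left _ _) hn0
  have hkn : k + 1 ≤ n := le_max_right _ _
  set A : ℕ → Finset ℕ := fun m => (Finset.range (n+1)).filter
    (fun j => m < j ∧ permLength (w * Equiv.swap m j) = permLength w + 1) with hAdef
  set B : ℕ → Finset ℕ := fun m => (Finset.range (k+1)).filter
    (fun i => i < m ∧ permLength (w * Equiv.swap i m) = permLength w + 1) with hBdef
  have hAc : ∀ m, m ≤ k → ∀ j, j ∈ A m ↔
      (m < j ∧ permLength (w * Equiv.swap m j) = permLength w + 1) := by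
    intro m hm j
    rw [hAdef]
    simp only [Finset.mem_filter, Finset.mem_range]
    constructor
    · tauto
    · intro h
      exact ⟨by have := cover_le hw h.1 (by omega) h.2; omega, h⟩
  have hBc : ∀ m, m ≤ k → ∀ i, i ∈ B m ↔
      (i < m ∧ permLength (w * Equiv.swap i m) = permLength w + 1) := by
    intro m hm i
    rw [hBdef]
    simp only [Finset.mem_filter, Finset.mem_range]
    constructor
    · tauto
    · intro h
      exact ⟨by omega, h⟩
  have hQm : ∀ m ∈ Finset.range (k+1), X m * SD.S w =
      (∑ j ∈ A m, SD.S (w * Equiv.swap m j)) - ∑ i ∈ B m, SD.S (w * Equiv.swap i m) := by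
    intro m hm
    rw [Finset.mem_range] at hm
    exact Qfull SD ⟨n0, hn0⟩ m (A m) (B m) (hAc m (by omega)) (hBc m (by omega))
  set P1 : Finset (ℕ × ℕ) := (Finset.range (k+1) ×ˢ Finset.range (n+1)).filter
    (fun p => p.1 < p.2 ∧ permLength (w * Equiv.swap p.1 p.2) = permLength w + 1) with hP1def
  set P2 : Finset (ℕ × ℕ) := P1.filter (fun p => p.2 ≤ k) with hP2def
  have ha : ∑ p ∈ P1, SD.S (w * Equiv.swap p.1 p.2)
      = ∑ m ∈ Finset.range (k+1), ∑ j ∈ A m, SD.S (w * Equiv.swap m j) := by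
    rw [hP1def, Finset.sum_filter, Finset.sum_product]
    apply Finset.sum_congr rfl
    intro m hm
    rw [hAdef, Finset.sum_filter]
  have hb : ∑ p ∈ P2, SD.S (w * Equiv.swap p.1 p.2)
      = ∑ m ∈ Finset.range (k+1), ∑ i ∈ B m, SD.S (w * Equiv.swap i m) := by
    have hb1 : ∑ p ∈ P2, SD.S (w * Equiv.swap p.1 p.2)
        = ∑ q ∈ (Finset.range (k+1) ×ˢ Finset.range (k+1)).filter
            (fun q => q.2 < q.1 ∧ permLength (w * Equiv.swap q.2 q.1) = permLength w + 1),
          SD.S (w * Equiv.swap q.2 q.1) := by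
      apply Finset.sum_nbij' (fun p => (p.2, p.1)) (fun q => (q.2, q.1))
      · intro p hp
        rw [hP2def, Finset.mem_filter, hP1def, Finset.mem_filter, Finset.mem_product,
          Finset.mem_range, Finset.mem_range] at hp
        rw [Finset.mem_filter, Finset.mem_product, Finset.mem_range, Finset.mem_range]
        obtain ⟨⟨⟨h1, h2⟩, h3, h4⟩, h5⟩ := hp
        exact ⟨⟨by omega, by omega⟩, h3, h4⟩
      · intro q hq
        rw [Finset.mem_filter, Finset.mem_product, Finset.mem_range, Finset.mem_range] at hq
        rw [hP2def, Finset.mem_filter, hP1def, Finset.mem_filter, Finset.mem_product,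
          Finset.mem_range, Finset.mem_range]
        obtain ⟨⟨h1, h2⟩, h3, h4⟩ := hq
        exact ⟨⟨⟨by omega, by omega⟩, h3, h4⟩, by omega⟩
      · intro p _
        rfl
      · intro q _
        rfl
      · intro p _
        rfl
    rw [hb1, Finset.sum_filter, Finset.sum_product]
    apply Finset.sum_congr rfl
    intro m hm
    rw [hBdef, Finset.sum_filter]
  have hsub : P2 ⊆ P1 := by
    rw [hP2def]
    exact Finset.filter_subset _ _
  have hmemP1 : ∀ p : ℕ × ℕ, p ∈ P1 ↔
      (p.1 ≤ k ∧ p.2 ≤ n ∧ p.1 < p.2 ∧ permLength (w * Equiv.swap p.1 p.2) = permLength w + 1) := by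
    intro p
    rw [hP1def, Finset.mem_filter, Finset.mem_product, Finset.mem_range, Finset.mem_range]
    constructor
    · rintro ⟨⟨h1, h2⟩, h3, h4⟩
      exact ⟨by omega, by omega, h3, h4⟩
    · rintro ⟨h1, h2, h3, h4⟩
      exact ⟨⟨by omega, by omega⟩, h3, h4⟩
  have hmemP2 : ∀ p : ℕ × ℕ, p ∈ P2 ↔ (p ∈ P1 ∧ p.2 ≤ k) := by
    intro p
    rw [hP2def, Finset.mem_filter]
  have hc : T = P1 \ P2 := by
    ext p
    rw [hT p, Finset.mem_sdiff, hmemP2, hmemP1]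
    constructor
    · rintro ⟨h1, h2, h3⟩
      have hp2 : p.2 ≤ n := cover_le hw (by omega) (by omega) h3
      constructor
      · exact ⟨h1, hp2, by omega, h3⟩
      · rintro ⟨hp1', hle⟩
        omega
    · rintro ⟨⟨h1, h2, h3, h4⟩, h5⟩
      refine ⟨h1, ?_, h4⟩
      by_contra hcon
      push_neg at hcon
      exact h5 ⟨⟨h1, h2, h3, h4⟩, by omega⟩
  calc SD.S (Equiv.swap k (k+1)) * SD.S w
      = ∑ m ∈ Finset.range (k+1), X m * SD.S w := by
        rw [S_sw SD k, Finset.sum_mul]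
    _ = ∑ m ∈ Finset.range (k+1),
        ((∑ j ∈ A m, SD.S (w * Equiv.swap m j)) - ∑ i ∈ B m, SD.S (w * Equiv.swap i m)) :=
        Finset.sum_congr rfl hQm
    _ = (∑ m ∈ Finset.range (k+1), ∑ j ∈ A m, SD.S (w * Equiv.swap m j))
        - ∑ m ∈ Finset.range (k+1), ∑ i ∈ B m, SD.S (w * Equiv.swap i m) :=
        Finset.sum_sub_distrib _ _
    _ = (∑ p ∈ P1, SD.S (w * Equiv.swap p.1 p.2)) - ∑ p ∈ P2, SD.S (w * Equiv.swap p.1 p.2) := by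
        rw [ha, hb]
    _ = ∑ p ∈ P1 \ P2, SD.S (w * Equiv.swap p.1 p.2) := (Finset.sum_sdiff_eq_sub hsub).symm
    _ = ∑ p ∈ T, SD.S (w * Equiv.swap p.1 p.2) := by rw [hc]

end Monk


/-- Monk's formula. For the simple transposition `s_k` (written 0-indexed as
`swap k (k+1)`) and any `w ∈ S_∞`, one has `𝔖_{s_k} = X_1 + ⋯ + X_k` (0-indexed:
`X 0 + ⋯ + X k`) and `𝔖_{s_k} ⋅ 𝔖_w = ∑_t 𝔖_{wt}`, the sum over all transpositions
`t = (i, j)` with `i ≤ k < j` and `l(wt) = l(w) + 1`. -/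
theorem monk_formula (SD : SchubertData) (k : ℕ) (w : Equiv.Perm ℕ) (hfin : finSupp w)
    (T : Finset (ℕ × ℕ))
    (hT : ∀ p : ℕ × ℕ, p ∈ T ↔ p.1 ≤ k ∧ k < p.2 ∧
      permLength (w * Equiv.swap p.1 p.2) = permLength w + 1) :
    SD.S (Equiv.swap k (k + 1)) = ∑ i ∈ Finset.range (k + 1), X i ∧
    SD.S (Equiv.swap k (k + 1)) * SD.S w = ∑ p ∈ T, SD.S (w * Equiv.swap p.1 p.2) := by
  exact ⟨Monk.S_sw SD k, Monk.monk_main SD k w hfin T hT⟩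
end
end
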